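/- arXiv:2108.08370 — 10 statements merged into one kernel-verified Lean document; each statement's English description precedes it below -/
import Mathlib

section
/- Fix n and a,b ∈ [n], and let r satisfy 0 ≤ r < min(a,b) and a+b−r ≤ n. Define π ∈ S_n as the block permutation matrix diag-arranged with blocks (1_r, 0, 0, 0; 0, 0, 1_{a−r}, 0; 0, 1_{b−r}, 0, 0; 0, 0, 0, 1_{n−a−b+r}). Then the essential set of π is {(a,b)} and rk_π(a,b) = r. -/
/-- The rank function of a permutation: `rk u a b = #{i ≤ a : u i ≤ b}` (0-indexed). -/
def rkIic {n : ℕ} (u : Equiv.Perm (Fin n)) (a b : Fin n) : ℕ :=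
  (Finset.univ.filter (fun i : Fin n => i ≤ a ∧ u i ≤ b)).card

/-- The Rothe diagram `D(w) = {(i,j) : w(i) > j and w⁻¹(j) > i}` (0-indexed). -/
def Dset {n : ℕ} (w : Equiv.Perm (Fin n)) : Set (Fin n × Fin n) :=
  {p | p.2 < w p.1 ∧ p.1 < w⁻¹ p.2}

/-- The essential set: cells `(i,j) ∈ D(w)` with `(i+1,j) ∉ D(w)` and `(i,j+1) ∉ D(w)`. -/
def EssSet {n : ℕ} (w : Equiv.Perm (Fin n)) : Set (Fin n × Fin n) :=
  {p | p ∈ Dset w ∧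
    (∀ q ∈ Dset w, ¬((q.1 : ℕ) = (p.1 : ℕ) + 1 ∧ q.2 = p.2)) ∧
    (∀ q ∈ Dset w, ¬(q.1 = p.1 ∧ (q.2 : ℕ) = (p.2 : ℕ) + 1))}

/-- The block bigrassmannian permutation determined by `a`, `b`, `r` has essential set
`{(a,b)}` (here written 0-indexed as `(a-1,b-1)`) and rank `r` there. -/
theorem stmt_2 (n a b r : ℕ) (hra : r < a) (hrb : r < b) (hn : a + b - r ≤ n)
    (π : Equiv.Perm (Fin n))
    (hπ : ∀ i : Fin n, (π i : ℕ) =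
      if (i : ℕ) < r then (i : ℕ)
      else if (i : ℕ) < a then (i : ℕ) + (b - r)
      else if (i : ℕ) < a + b - r then (i : ℕ) - (a - r)
      else (i : ℕ)) :
    EssSet π = {(⟨a - 1, by omega⟩, ⟨b - 1, by omega⟩)} ∧
      rkIic π ⟨a - 1, by omega⟩ ⟨b - 1, by omega⟩ = r := by
  have ha_n : a ≤ n := by omega
  have hb_n : b ≤ n := by omega
  -- the inverse permutation formula
  have hπinv : ∀ j : Fin n, (π⁻¹ j : ℕ) =
      if (j : ℕ) < r then (j : ℕ)
      else if (j : ℕ) < b then (j : ℕ) + (a - r)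
      else if (j : ℕ) < a + b - r then (j : ℕ) - (b - r)
      else (j : ℕ) := by
    intro j
    have hj := j.isLt
    set t : ℕ := if (j : ℕ) < r then (j : ℕ) else if (j : ℕ) < b then (j : ℕ) + (a - r)
      else if (j : ℕ) < a + b - r then (j : ℕ) - (b - r) else (j : ℕ) with ht
    have htn : t < n := by rw [ht]; split_ifs <;> omega
    have key : π ⟨t, htn⟩ = j := by
      apply Fin.ext
      rw [hπ]
      simp only [Fin.val_mk]
      rw [ht]
      split_ifs <;> omega
    have h2 : π⁻¹ j = ⟨t, htn⟩ := by rw [← key, Equiv.Perm.inv_eq_iff_eq]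
    rw [h2]
  -- characterization of the Rothe diagram
  have hD : ∀ p : Fin n × Fin n, p ∈ Dset π ↔
      (r ≤ (p.1 : ℕ) ∧ (p.1 : ℕ) < a ∧ r ≤ (p.2 : ℕ) ∧ (p.2 : ℕ) < b) := by
    rintro ⟨i, j⟩
    simp only [Dset, Set.mem_setOf_eq, Fin.lt_iff_val_lt_val]
    have hi := i.isLt; have hj := j.isLt
    rw [hπ i, hπinv j]
    constructor
    · rintro ⟨h1, h2⟩; split_ifs at h1 h2 <;> omega
    · rintro ⟨h1, h2, h3, h4⟩
      constructor <;> [skip; skip] <;> split_ifs <;> omega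
  constructor
  · ext p
    simp only [Set.mem_singleton_iff]
    constructor
    · rintro ⟨hp, h1, h2⟩
      have hmem := (hD p).1 hp
      have hp1 : (p.1 : ℕ) = a - 1 := by
        by_contra hne
        have hlt : (p.1 : ℕ) + 1 < n := by omega
        exact h1 (⟨(p.1 : ℕ) + 1, hlt⟩, p.2)
          ((hD _).2 (by simp only [Fin.val_mk]; omega)) ⟨by simp, rfl⟩
      have hp2 : (p.2 : ℕ) = b - 1 := by
        by_contra hne
        have hlt : (p.2 : ℕ) + 1 < n := by omega
        exact h2 (p.1, ⟨(p.2 : ℕ) + 1, hlt⟩)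
          ((hD _).2 (by simp only [Fin.val_mk]; omega)) ⟨rfl, by simp⟩
      have : p = (p.1, p.2) := rfl
      rw [this]
      exact Prod.ext (Fin.ext hp1) (Fin.ext hp2)
    · rintro rfl
      refine ⟨(hD _).2 (by simp only [Fin.val_mk]; omega), ?_, ?_⟩
      · rintro q hq ⟨e1, e2⟩
        have := (hD q).1 hq
        simp only [Fin.val_mk] at e1
        omega
      · rintro q hq ⟨e1, e2⟩
        have := (hD q).1 hq
        simp only [Fin.val_mk] at e2
        omega
  · unfold rkIic
    have hfe : Finset.univ.filter
        (fun i : Fin n => i ≤ (⟨a - 1, by omega⟩ : Fin n) ∧ π i ≤ ⟨b - 1, by omega⟩)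
        = Finset.univ.filter (fun i : Fin n => (i : ℕ) < r) := by
      ext i
      simp only [Finset.mem_filter, Finset.mem_univ, true_and, Fin.le_iff_val_le_val,
        Fin.val_mk]
      have hv := hπ i
      have hi := i.isLt
      constructor
      · rintro ⟨h1, h2⟩; split_ifs at hv <;> omega
      · intro h; split_ifs at hv ; omega
    rw [hfe]
    have : Finset.univ.filter (fun i : Fin n => (i : ℕ) < r) =
        (Finset.range r).attachFin (fun m hm => by
          have := Finset.mem_range.mp hm; omega) := by
      ext i
      simp only [Finset.mem_filter, Finset.mem_univ, true_and, Finset.mem_attachFin, Finset.mem_range]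
    rw [this, Finset.card_attachFin, Finset.card_range]
end

section
/- Let π ∈ S_n be a bigrassmannian permutation with Ess(π) = {(a,b)}. For any n×n alternating sign matrix A, rk_A(a,b) ≤ rk_π(a,b) if and only if rk_π(i,j) ≥ rk_A(i,j) for all i,j ∈ [n] (i.e., π ≤ A in the ASM lattice order). -/
open Finset

/-- The nonzero entries of `f` alternate in sign: any two consecutive nonzero
entries are negatives of each other. -/
def AltSeq {n : ℕ} (f : Fin n → ℤ) : Prop :=
  ∀ j j' : Fin n, j < j' → f j ≠ 0 → f j' ≠ 0 →
    (∀ k, j < k → k < j' → f k = 0) → f j' = -f j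

/-- Alternating sign matrix: entries in `{-1,0,1}`, each row and column sums to `1`,
and the nonzero entries in each row and column alternate in sign. -/
def IsASM {n : ℕ} (A : Matrix (Fin n) (Fin n) ℤ) : Prop :=
  (∀ i j, A i j = -1 ∨ A i j = 0 ∨ A i j = 1) ∧
  (∀ i, ∑ j, A i j = 1) ∧ (∀ j, ∑ i, A i j = 1) ∧
  (∀ i, AltSeq (fun j => A i j)) ∧ (∀ j, AltSeq (fun i => A i j))

/-- Corner sum function `rk_A(a,b) = Σ_{i ≤ a} Σ_{j ≤ b} A i j`. -/
def cornerSum {n : ℕ} (A : Matrix (Fin n) (Fin n) ℤ) (a b : Fin n) : ℤ :=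
  ∑ i ∈ Finset.Iic a, ∑ j ∈ Finset.Iic b, A i j

/-- The permutation matrix of `w`. -/
def permMatrix {n : ℕ} (w : Equiv.Perm (Fin n)) : Matrix (Fin n) (Fin n) ℤ :=
  fun i j => if w i = j then 1 else 0

namespace BG

def pad {n : ℕ} (f : Fin n → ℤ) (k : ℕ) : ℤ := if h : k < n then f ⟨k, h⟩ else 0
lemma pad_lt {n : ℕ} (f : Fin n → ℤ) {k : ℕ} (h : k < n) : pad f k = f ⟨k, h⟩ := dif_pos h

lemma pad_mem {n : ℕ} {f : Fin n → ℤ} (h1 : ∀ k, f k = -1 ∨ f k = 0 ∨ f k = 1) (k : ℕ) :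
    pad f k = -1 ∨ pad f k = 0 ∨ pad f k = 1 := by
  unfold pad; split
  · exact h1 _
  · right; left; rfl

/-- partial sums of an alternating ±1/0 sequence with total sum 1 lie in {0,1} -/
lemma alt_partial01 {n : ℕ} (f : Fin n → ℤ)
    (h1 : ∀ k, f k = -1 ∨ f k = 0 ∨ f k = 1) (h2 : ∑ k, f k = 1) (h3 : AltSeq f) :
    ∀ m : ℕ, (∑ k ∈ range m, pad f k) = 0 ∨ (∑ k ∈ range m, pad f k) = 1 := by
  -- invariant
  have inv : ∀ m : ℕ, (∀ k < m, pad f k = 0) ∨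
      ∃ p q : ℕ, p ≤ q ∧ q < m ∧ pad f p ≠ 0 ∧ pad f q ≠ 0 ∧
        (∀ k < p, pad f k = 0) ∧ (∀ k, q < k → k < m → pad f k = 0) ∧
        2 * (∑ k ∈ range m, pad f k) = pad f p + pad f q := by
    intro m
    induction m with
    | zero => left; intro k hk; omega
    | succ m ih =>
      by_cases hm : pad f m = 0
      · rcases ih with h | ⟨p, q, hpq, hqm, hp, hq, hfirst, hlast, hsum⟩
        · left; intro k hk
          rcases Nat.lt_succ_iff_lt_or_eq.mp hk with h' | rfl
          · exact h k h'
          · exact hm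
        · right; exact ⟨p, q, hpq, Nat.lt_succ_of_lt hqm, hp, hq, hfirst,
            fun k hk1 hk2 => by
              rcases Nat.lt_succ_iff_lt_or_eq.mp hk2 with h' | rfl
              · exact hlast k hk1 h'
              · exact hm,
            by rw [Finset.sum_range_succ, hm, add_zero]; exact hsum⟩
      · have hmn : m < n := by
          by_contra h; exact hm (dif_neg h)
        rcases ih with h | ⟨p, q, hpq, hqm, hp, hq, hfirst, hlast, hsum⟩
        · right; refine ⟨m, m, le_refl _, Nat.lt_succ_self _, hm, hm, h, fun k hk1 hk2 => by omega, ?_⟩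
          have : (∑ k ∈ range m, pad f k) = 0 := Finset.sum_eq_zero (fun k hk => h k (Finset.mem_range.mp hk))
          rw [Finset.sum_range_succ, this, zero_add]; ring
        · right
          have hqn : q < n := by by_contra h; exact hq (dif_neg h)
          -- alternation: pad f m = - pad f q
          have halt : pad f m = - pad f q := by
            have := h3 ⟨q, hqn⟩ ⟨m, hmn⟩ (by simpa using Nat.lt_of_lt_of_le hqm (le_refl m) |>.trans_le (le_refl m) ) ?_ ?_ ?_
            · rw [pad_lt f hmn, pad_lt f hqn]; exact this
            · rw [← pad_lt f hqn]; exact hq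
            · rw [← pad_lt f hmn]; exact hm
            · intro k hk1 hk2
              rw [← pad_lt f k.isLt]
              exact hlast k.1 hk1 hk2
          refine ⟨p, m, hpq.trans (Nat.le_of_lt hqm), Nat.lt_succ_self _, hp, hm, hfirst,
            fun k hk1 hk2 => by omega, ?_⟩
          rw [Finset.sum_range_succ, mul_add, hsum, halt]; ring
  -- total sum
  have htot : (∑ k ∈ range n, pad f k) = 1 := by
    rw [← h2, ← Fin.sum_univ_eq_sum_range (pad f) n]
    exact Finset.sum_congr rfl (fun k _ => pad_lt f k.isLt)
  -- first nonzero is 1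
  have hfirst1 : ∀ p : ℕ, pad f p ≠ 0 → (∀ k < p, pad f k = 0) → pad f p = 1 := by
    intro p hp hfk
    rcases inv n with h | ⟨p', q', hpq, hqn, hp', hq', hfirst', hlast', hsum⟩
    · exfalso
      have : p < n := by by_contra h'; exact hp (dif_neg h')
      exact hp (h p this)
    · -- p = p'
      have hpp : p = p' := by
        rcases lt_trichotomy p p' with h | h | h
        · exact absurd (hfirst' p h) hp
        · exact h
        · exact absurd (hfk p' h) hp'
      rw [htot] at hsum
      rcases pad_mem h1 p' with h | h | h <;> rcases pad_mem h1 q' with h' | h' | h' <;>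
        rw [hpp] <;> omega
  intro m
  rcases inv m with h | ⟨p, q, hpq, hqm, hp, hq, hfirst, hlast, hsum⟩
  · left; exact Finset.sum_eq_zero (fun k hk => h k (Finset.mem_range.mp hk))
  · have := hfirst1 p hp hfirst
    rcases pad_mem h1 q with h | h | h <;> omega


variable {n : ℕ}

/-- padded matrix entry -/
def ent (M : Matrix (Fin n) (Fin n) ℤ) (k l : ℕ) : ℤ := pad (fun i : Fin n => pad (M i) l) k

lemma ent_eq (M : Matrix (Fin n) (Fin n) ℤ) {k l : ℕ} (hk : k < n) (hl : l < n) :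
    ent M k l = M ⟨k, hk⟩ ⟨l, hl⟩ := by
  unfold ent; rw [pad_lt _ hk, pad_lt _ hl]

lemma ent_zero_left (M : Matrix (Fin n) (Fin n) ℤ) {k : ℕ} (hk : ¬ k < n) (l : ℕ) :
    ent M k l = 0 := dif_neg hk

lemma ent_zero_right (M : Matrix (Fin n) (Fin n) ℤ) (k : ℕ) {l : ℕ} (hl : ¬ l < n) :
    ent M k l = 0 := by
  unfold ent pad; split <;> simp [hl]

def rowp (M : Matrix (Fin n) (Fin n) ℤ) (i j : ℕ) : ℤ := ∑ l ∈ range j, ent M i l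
def colp (M : Matrix (Fin n) (Fin n) ℤ) (j i : ℕ) : ℤ := ∑ k ∈ range i, ent M k j
def F (M : Matrix (Fin n) (Fin n) ℤ) (i j : ℕ) : ℤ := ∑ k ∈ range i, rowp M k j

lemma F_succ_left (M : Matrix (Fin n) (Fin n) ℤ) (i j : ℕ) :
    F M (i + 1) j = F M i j + rowp M i j := Finset.sum_range_succ _ _

lemma F_succ_right (M : Matrix (Fin n) (Fin n) ℤ) (i j : ℕ) :
    F M i (j + 1) = F M i j + colp M j i := by
  unfold F rowp colp
  rw [← Finset.sum_add_distrib]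
  exact Finset.sum_congr rfl (fun k _ => Finset.sum_range_succ _ _)

lemma F_comm (M : Matrix (Fin n) (Fin n) ℤ) (i j : ℕ) :
    F M i j = ∑ l ∈ range j, colp M l i := Finset.sum_comm

lemma F_zero_left (M : Matrix (Fin n) (Fin n) ℤ) (j : ℕ) : F M 0 j = 0 := rfl
lemma F_zero_right (M : Matrix (Fin n) (Fin n) ℤ) (i : ℕ) : F M i 0 = 0 := by
  unfold F rowp; simp

/-- sums over Iic as padded range sums -/
lemma sum_Iic (g : Fin n → ℤ) (a : Fin n) :
    ∑ i ∈ Finset.Iic a, g i = ∑ k ∈ range (a.1 + 1), pad g k := by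
  refine Finset.sum_bij' (fun i _ => i.1)
    (fun k hk => (⟨k, by have h := Finset.mem_range.mp hk; have := a.isLt; omega⟩ : Fin n))
    ?_ ?_ ?_ ?_ ?_
  · intro i hi
    simp only [Finset.mem_range]
    have : i ≤ a := Finset.mem_Iic.mp hi
    exact Nat.lt_succ_of_le this
  · intro k hk
    simp only [Finset.mem_Iic]
    exact Fin.mk_le_of_le_val (Nat.lt_succ_iff.mp (Finset.mem_range.mp hk))
  · intro i hi; rfl
  · intro k hk; rfl
  · intro i hi
    rw [pad_lt g i.isLt]

/-- bridge to cornerSum -/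
lemma cornerSum_eq (M : Matrix (Fin n) (Fin n) ℤ) (a b : Fin n) :
    cornerSum M a b = F M (a.1 + 1) (b.1 + 1) := by
  unfold cornerSum
  rw [sum_Iic]
  unfold F rowp
  refine Finset.sum_congr rfl (fun k hk => ?_)
  have hkn : k < n := by
    have := Finset.mem_range.mp hk; have := a.isLt; omega
  rw [pad_lt _ hkn, sum_Iic]
  refine Finset.sum_congr rfl (fun l hl => ?_)
  unfold ent
  rw [pad_lt _ hkn]

-- (appended to s2 content when testing)
section ASM
variable {n : ℕ} {A : Matrix (Fin n) (Fin n) ℤ} (hA : IsASM A)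

-- needs alt_partial01 from s1
include hA

lemma rowp01 (i j : ℕ) : rowp A i j = 0 ∨ rowp A i j = 1 := by
  by_cases hi : i < n
  · have := alt_partial01 (fun l => A ⟨i, hi⟩ l) (fun k => hA.1 _ k) (hA.2.1 _) (hA.2.2.2.1 _) j
    unfold rowp
    have he : ∀ l ∈ range j, ent A i l = pad (fun l => A ⟨i, hi⟩ l) l := by
      intro l _
      unfold ent
      rw [pad_lt _ hi]
    rw [Finset.sum_congr rfl he]
    exact this
  · left
    exact Finset.sum_eq_zero (fun l _ => ent_zero_left A hi l)

lemma colp01 (j i : ℕ) : colp A j i = 0 ∨ colp A j i = 1 := by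
  by_cases hj : j < n
  · have := alt_partial01 (fun k => A k ⟨j, hj⟩) (fun k => hA.1 k _) (hA.2.2.1 _) (hA.2.2.2.2 _) i
    unfold colp
    have he : ∀ k ∈ range i, ent A k j = pad (fun k => A k ⟨j, hj⟩) k := by
      intro k _
      unfold ent pad
      by_cases hk : k < n
      · simp [hk, hj]
      · simp [hk]
    rw [Finset.sum_congr rfl he]
    exact this
  · left
    exact Finset.sum_eq_zero (fun k _ => ent_zero_right A k hj)

lemma FA_le_i (i j : ℕ) : F A i j ≤ i := by
  unfold F
  calc ∑ k ∈ range i, rowp A k j ≤ ∑ _k ∈ range i, (1:ℤ) :=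
        Finset.sum_le_sum (fun k _ => by rcases rowp01 hA k j with h | h <;> omega)
    _ = i := by simp

lemma FA_le_j (i j : ℕ) : F A i j ≤ j := by
  rw [F_comm]
  calc ∑ l ∈ range j, colp A l i ≤ ∑ _l ∈ range j, (1:ℤ) :=
        Finset.sum_le_sum (fun l _ => by rcases colp01 hA l i with h | h <;> omega)
    _ = j := by simp

lemma FA_mono_left {i i' : ℕ} (h : i ≤ i') (j : ℕ) :
    F A i j ≤ F A i' j ∧ F A i' j ≤ F A i j + (i' - i : ℕ) := by
  induction i' with
  | zero => have : i = 0 := by omega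
            subst this; simp
  | succ i' ih =>
    rcases Nat.le_succ_iff.mp h with h' | h'
    · have := ih h'
      rw [F_succ_left]
      rcases rowp01 hA i' j with h0 | h0 <;>
      · constructor <;> omega
    · subst h'; simp
lemma FA_mono_right {j j' : ℕ} (h : j ≤ j') (i : ℕ) :
    F A i j ≤ F A i j' ∧ F A i j' ≤ F A i j + (j' - j : ℕ) := by
  induction j' with
  | zero => have : j = 0 := by omega
            subst this; simp
  | succ j' ih =>
    rcases Nat.le_succ_iff.mp h with h' | h'
    · have := ih h'
      rw [F_succ_right]
      rcases colp01 hA j' i with h0 | h0 <;>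
      · constructor <;> omega
    · subst h'; simp

lemma FA_lip (α β i j : ℕ) :
    F A i j ≤ F A α β + ((i - α : ℕ) : ℤ) + ((j - β : ℕ) : ℤ) := by
  have h1 : F A i j ≤ F A (max i α) (max j β) := by
    have a1 := (FA_mono_left hA (le_max_left i α) j).1
    have a2 := (FA_mono_right hA (le_max_left j β) (max i α)).1
    omega
  have h2 := (FA_mono_left hA (le_max_right i α) (max j β)).2
  have h3 := (FA_mono_right hA (le_max_right j β) α).2
  have e1 : (max i α - α : ℕ) = (i - α : ℕ) := by omega
  have e2 : (max j β - β : ℕ) = (j - β : ℕ) := by omega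
  rw [e1] at h2; rw [e2] at h3
  omega

end ASM

section Perm
variable {n : ℕ} (π : Equiv.Perm (Fin n))

lemma perm_rowp {c : ℕ} (hc : c < n) (j : ℕ) :
    rowp (permMatrix π) c j = if (π ⟨c, hc⟩).1 < j then 1 else 0 := by
  unfold rowp
  have he : ∀ l ∈ range j, ent (permMatrix π) c l = if l = (π ⟨c, hc⟩).1 then 1 else 0 := by
    intro l _
    by_cases hl : l < n
    · rw [ent_eq _ hc hl]
      unfold permMatrix
      congr 1
      simp only [eq_iff_iff]
      constructor
      · intro h; exact (congrArg Fin.val h).symm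
      · intro h; exact Fin.ext h.symm
    · rw [ent_zero_right _ _ hl, if_neg]
      intro h
      exact hl (h ▸ (π ⟨c, hc⟩).isLt)
  rw [Finset.sum_congr rfl he, Finset.sum_ite_eq' (range j) ((π ⟨c,hc⟩).1) (fun _ => (1:ℤ))]
  simp [Finset.mem_range]

lemma perm_colp {d : ℕ} (hd : d < n) (i : ℕ) :
    colp (permMatrix π) d i = if (π⁻¹ ⟨d, hd⟩).1 < i then 1 else 0 := by
  unfold colp
  have he : ∀ k ∈ range i, ent (permMatrix π) k d = if k = (π⁻¹ ⟨d, hd⟩).1 then 1 else 0 := by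
    intro k _
    by_cases hk : k < n
    · rw [ent_eq _ hk hd]
      unfold permMatrix
      congr 1
      simp only [eq_iff_iff]
      constructor
      · intro h
        have h2 : (⟨k, hk⟩ : Fin n) = π⁻¹ ⟨d, hd⟩ := by
          rw [← h]; simp
        exact congrArg Fin.val h2
      · intro h
        have : (⟨k, hk⟩ : Fin n) = π⁻¹ ⟨d, hd⟩ := Fin.ext h
        rw [this]; simp
    · rw [ent_zero_left _ hk, if_neg]
      intro h
      exact hk (h ▸ (π⁻¹ ⟨d, hd⟩).isLt)
  rw [Finset.sum_congr rfl he, Finset.sum_ite_eq' (range i) ((π⁻¹ ⟨d,hd⟩).1) (fun _ => (1:ℤ))]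
  simp [Finset.mem_range]

end Perm

section Core
variable {n : ℕ} (π : Equiv.Perm (Fin n)) (a b : Fin n)

lemma P_step_down {c : ℕ} (hc : c < n) (j : ℕ) :
    F (permMatrix π) (c + 1) j
      = F (permMatrix π) c j + if (π ⟨c, hc⟩).1 < j then 1 else 0 := by
  rw [F_succ_left, perm_rowp π hc]

lemma P_step_right {d : ℕ} (hd : d < n) (i : ℕ) :
    F (permMatrix π) i (d + 1)
      = F (permMatrix π) i d + if (π⁻¹ ⟨d, hd⟩).1 < i then 1 else 0 := by
  rw [F_succ_right, perm_colp π hd]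

lemma diag_chain (hbg : EssSet π = {(a, b)}) :
    ∀ m : ℕ, ∀ p : Fin n × Fin n, p ∈ Dset π → 2 * n - (p.1.1 + p.2.1) ≤ m →
      p.1 ≤ a ∧ p.2 ≤ b ∧
        F (permMatrix π) (p.1.1 + 1) (p.2.1 + 1) = F (permMatrix π) (a.1 + 1) (b.1 + 1) := by
  intro m
  induction m with
  | zero =>
    intro p hp hm
    exfalso
    have h1 := p.1.isLt
    have h2 := p.2.isLt
    omega
  | succ m ih =>
    intro p hp hm
    by_cases hE : p ∈ EssSet π
    · rw [hbg] at hE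
      have hpe : p = (a, b) := hE
      rw [hpe]
      exact ⟨le_refl _, le_refl _, rfl⟩
    · have hne : ¬((∀ q ∈ Dset π, ¬((q.1 : ℕ) = (p.1 : ℕ) + 1 ∧ q.2 = p.2)) ∧
          (∀ q ∈ Dset π, ¬(q.1 = p.1 ∧ (q.2 : ℕ) = (p.2 : ℕ) + 1))) :=
        fun hc => hE ⟨hp, hc.1, hc.2⟩
      rcases not_and_or.mp hne with h | h <;> push_neg at h <;>
        obtain ⟨q, hq, hq1, hq2⟩ := h
      · -- q is directly below p
        have hih := ih q hq (by omega)
        have hq1' : q.1.1 = p.1.1 + 1 := hq1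
        have hfix : (⟨p.1.1 + 1, hq1' ▸ q.1.isLt⟩ : Fin n) = q.1 := Fin.ext hq1'.symm
        refine ⟨?_, ?_, ?_⟩
        · have ha : q.1.1 ≤ a.1 := hih.1
          exact Fin.le_def.mpr (by omega)
        · exact hq2 ▸ hih.2.1
        · have hstep := P_step_down π (c := p.1.1 + 1) (hq1' ▸ q.1.isLt) (p.2.1 + 1)
          rw [hfix] at hstep
          have hDq : q.2 < π q.1 := hq.1
          have hind : ¬ ((π q.1).1 < p.2.1 + 1) := by
            have : q.2.1 < (π q.1).1 := hDq
            have : q.2.1 = p.2.1 := congrArg Fin.val hq2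
            omega
          rw [if_neg hind, add_zero] at hstep
          rw [← hstep]
          have := hih.2.2
          rw [hq1', congrArg Fin.val hq2] at this
          exact this
      · -- q is directly right of p
        have hih := ih q hq (by omega)
        have hq2' : q.2.1 = p.2.1 + 1 := hq2
        have hfix : (⟨p.2.1 + 1, hq2' ▸ q.2.isLt⟩ : Fin n) = q.2 := Fin.ext hq2'.symm
        refine ⟨?_, ?_, ?_⟩
        · exact hq1 ▸ hih.1
        · have hb : q.2.1 ≤ b.1 := hih.2.1
          exact Fin.le_def.mpr (by omega)
        · have hstep := P_step_right π (d := p.2.1 + 1) (hq2' ▸ q.2.isLt) (p.1.1 + 1)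
          rw [hfix] at hstep
          have hDq : q.1 < π⁻¹ q.2 := hq.2
          have hind : ¬ ((π⁻¹ q.2).1 < p.1.1 + 1) := by
            have : q.1.1 < (π⁻¹ q.2).1 := hDq
            have : q.1.1 = p.1.1 := congrArg Fin.val hq1
            omega
          rw [if_neg hind, add_zero] at hstep
          rw [← hstep]
          have := hih.2.2
          rw [hq2', congrArg Fin.val hq1] at this
          exact this

lemma deficient_bound (hbg : EssSet π = {(a, b)}) :
    ∀ s i j : ℕ, i + j ≤ s → i ≤ n → j ≤ n →
      F (permMatrix π) i j < i → F (permMatrix π) i j < j →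
      F (permMatrix π) (a.1 + 1) (b.1 + 1)
          + ((i - (a.1 + 1) : ℕ) : ℤ) + ((j - (b.1 + 1) : ℕ) : ℤ)
        ≤ F (permMatrix π) i j := by
  intro s
  induction s with
  | zero =>
    intro i j hs hi hj h1 h2
    have : i = 0 := by omega
    subst this
    rw [F_zero_left] at h1
    omega
  | succ s ih =>
    intro i j hs hi hj h1 h2
    match i, j with
    | 0, j => rw [F_zero_left] at h1; omega
    | i+1, 0 => rw [F_zero_right] at h2; omega
    | c+1, d+1 =>
      have hc : c < n := by omega
      have hd : d < n := by omega
      by_cases hD : ((⟨c, hc⟩ : Fin n), (⟨d, hd⟩ : Fin n)) ∈ Dset π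
      · obtain ⟨ha, hb, heq⟩ := diag_chain π a b hbg (2 * n) _ hD (Nat.sub_le _ _)
        have ha' : c ≤ a.1 := ha
        have hb' : d ≤ b.1 := hb
        simp only at heq
        omega
      · have hD' : ¬((⟨d, hd⟩ : Fin n) < π ⟨c, hc⟩ ∧ (⟨c, hc⟩ : Fin n) < π⁻¹ ⟨d, hd⟩) := hD
        rcases not_and_or.mp hD' with h | h
        · -- π(c) ≤ d : step left in rows
          have hpc : (π ⟨c, hc⟩).1 ≤ d := by
            have := Fin.not_lt.mp h
            exact this
          have hstep := P_step_down π hc (d + 1)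
          rw [if_pos (by omega)] at hstep
          have hih := ih c (d + 1) (by omega) (by omega) (by omega)
            (by omega) (by omega)
          omega
        · have hpd : (π⁻¹ ⟨d, hd⟩).1 ≤ c := by
            have := Fin.not_lt.mp h
            exact this
          have hstep := P_step_right π hd (c + 1)
          rw [if_pos (by omega)] at hstep
          have hih := ih (c + 1) d (by omega) (by omega) (by omega)
            (by omega) (by omega)
          omega

end Core



lemma perm_lower {n : ℕ} (π : Equiv.Perm (Fin n)) (a b : Fin n)
    (hbg : EssSet π = {(a, b)}) (i j : ℕ) (hi : i ≤ n) (hj : j ≤ n) :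
    (i : ℤ) ≤ F (permMatrix π) i j ∨ (j : ℤ) ≤ F (permMatrix π) i j ∨
      F (permMatrix π) (a.1 + 1) (b.1 + 1)
          + ((i - (a.1 + 1) : ℕ) : ℤ) + ((j - (b.1 + 1) : ℕ) : ℤ)
        ≤ F (permMatrix π) i j := by
  by_cases h1 : F (permMatrix π) i j < i
  · by_cases h2 : F (permMatrix π) i j < j
    · exact Or.inr (Or.inr (deficient_bound π a b hbg (i + j) i j (le_refl _) hi hj h1 h2))
    · exact Or.inr (Or.inl (by omega))
  · exact Or.inl (by omega)

end BG


/-- For a bigrassmannian `π` with `Ess(π) = {(a,b)}` and an ASM `A`: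
`rk_A(a,b) ≤ rk_π(a,b)` iff `rk_π ≥ rk_A` entrywise (i.e. `π ≤ A`). -/
theorem stmt_3 (n : ℕ) (π : Equiv.Perm (Fin n)) (a b : Fin n)
    (hbg : EssSet π = {(a, b)})
    (A : Matrix (Fin n) (Fin n) ℤ) (hA : IsASM A) :
    cornerSum A a b ≤ cornerSum (permMatrix π) a b ↔
      ∀ i j : Fin n, cornerSum A i j ≤ cornerSum (permMatrix π) i j := by
  rw [BG.cornerSum_eq, BG.cornerSum_eq]
  simp only [BG.cornerSum_eq]
  constructor
  · intro h i j
    have hd := BG.perm_lower π a b hbg (i.1 + 1) (j.1 + 1) i.isLt j.isLt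
    have e1 := BG.FA_le_i hA (i.1 + 1) (j.1 + 1)
    have e2 := BG.FA_le_j hA (i.1 + 1) (j.1 + 1)
    have e3 := BG.FA_lip hA (a.1 + 1) (b.1 + 1) (i.1 + 1) (j.1 + 1)
    rcases hd with h' | h' | h' <;> omega
  · intro h
    exact h a b
end

section
/- For n×n alternating sign matrices A and B, the entrywise minimum of the corner sum matrices rk_A and rk_B is the corner sum matrix of an alternating sign matrix (namely the join A ∨ B), and similarly the entrywise maximum is the corner sum matrix of an ASM (the meet A ∧ B). -/
open Finset

/-! ### Auxiliary machinery -/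

/-- Prefix sum over the first `m` coordinates. -/
def Pre {n : ℕ} (f : Fin n → ℤ) (m : ℕ) : ℤ :=
  ∑ j ∈ Finset.univ.filter (fun j : Fin n => (j : ℕ) < m), f j

lemma Pre_zero {n : ℕ} (f : Fin n → ℤ) : Pre f 0 = 0 := by
  simp [Pre]

lemma Pre_succ {n : ℕ} (f : Fin n → ℤ) {m : ℕ} (h : m < n) :
    Pre f (m + 1) = Pre f m + f ⟨m, h⟩ := by
  have hset : Finset.univ.filter (fun j : Fin n => (j : ℕ) < m + 1)
      = insert ⟨m, h⟩ (Finset.univ.filter (fun j : Fin n => (j : ℕ) < m)) := by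
    ext k
    simp only [Finset.mem_filter, Finset.mem_univ, true_and, Finset.mem_insert,
      Fin.ext_iff]
    omega
  rw [Pre, hset, Finset.sum_insert (by simp)]
  rw [Pre]; ring

lemma Pre_top {n : ℕ} (f : Fin n → ℤ) : Pre f n = ∑ j, f j := by
  rw [Pre]
  congr 1
  ext k
  simp [k.isLt]

lemma Pre_telescope {n : ℕ} (g : ℕ → ℤ) (f : Fin n → ℤ)
    (hf : ∀ j : Fin n, f j = g ((j : ℕ) + 1) - g j) :
    ∀ m, m ≤ n → Pre f m = g m - g 0 := by
  intro m
  induction m with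
  | zero => intro _; simp [Pre_zero]
  | succ m ih =>
    intro hm
    have hmn : m < n := hm
    rw [Pre_succ f hmn, ih (le_of_lt hmn), hf ⟨m, hmn⟩]
    ring

lemma Pre_one {n : ℕ} : ∀ m, m ≤ n → Pre (fun _ : Fin n => (1 : ℤ)) m = m := by
  have := Pre_telescope (n := n) (fun m => (m : ℤ)) (fun _ => 1) (by intro j; push_cast; ring)
  intro m hm
  simpa using this m hm

/-- Prefix sums of an alternating row summing to 1 lie in `{0,1}`. -/
lemma prefix_mem {n : ℕ} (f : Fin n → ℤ)
    (hv : ∀ j, f j = -1 ∨ f j = 0 ∨ f j = 1)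
    (hs : ∑ j, f j = 1) (ha : AltSeq f) :
    ∀ m, m ≤ n → Pre f m = 0 ∨ Pre f m = 1 := by
  -- invariant
  have inv : ∀ m, m ≤ n →
      ((Pre f m = 0 ∧ ∀ k : Fin n, (k : ℕ) < m → f k = 0) ∨
       (∃ j0 j : Fin n, (j0 : ℕ) < m ∧ (j : ℕ) < m ∧ f j0 ≠ 0 ∧ f j ≠ 0 ∧
          (∀ k : Fin n, k < j0 → f k = 0) ∧
          (∀ k : Fin n, j < k → (k : ℕ) < m → f k = 0) ∧
          2 * Pre f m = f j0 + f j)) := by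
    intro m
    induction m with
    | zero => intro _; left; refine ⟨Pre_zero f, ?_⟩; intro k hk; omega
    | succ m ih =>
      intro hm
      have hmn : m < n := hm
      rcases ih (le_of_lt hmn) with ⟨h0, hz⟩ | ⟨j0, j, hj0, hj, hfj0, hfj, hfirst, hlast, hsum⟩
      · by_cases hc : f ⟨m, hmn⟩ = 0
        · left
          constructor
          · rw [Pre_succ f hmn, h0, hc]; ring
          · intro k hk
            rcases Nat.lt_succ_iff_lt_or_eq.mp hk with h | h
            · exact hz k h
            · have : k = ⟨m, hmn⟩ := Fin.ext h
              rw [this]; exact hc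
        · right
          refine ⟨⟨m, hmn⟩, ⟨m, hmn⟩, Nat.lt_succ_self m, Nat.lt_succ_self m, hc, hc,
            ?_, ?_, ?_⟩
          · intro k hk; exact hz k hk
          · intro k hk hk'
            exfalso
            have h1 : m < (k : ℕ) := by simpa [Fin.lt_def] using hk
            omega
          · rw [Pre_succ f hmn, h0]; ring
      · by_cases hc : f ⟨m, hmn⟩ = 0
        · right
          refine ⟨j0, j, Nat.lt_succ_of_lt hj0, Nat.lt_succ_of_lt hj, hfj0, hfj, hfirst,
            ?_, ?_⟩
          · intro k hk hk'
            rcases Nat.lt_succ_iff_lt_or_eq.mp hk' with h | h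
            · exact hlast k hk h
            · have : k = ⟨m, hmn⟩ := Fin.ext h
              rw [this]; exact hc
          · rw [Pre_succ f hmn, hc]; linarith
        · -- new nonzero entry at m; alternation
          have hjm : j < (⟨m, hmn⟩ : Fin n) := Fin.lt_def.mpr hj
          have halt : f ⟨m, hmn⟩ = - f j := by
            apply ha j ⟨m, hmn⟩ hjm hfj hc
            intro k hk hk'
            exact hlast k hk (Fin.lt_def.mp hk')
          right
          refine ⟨j0, ⟨m, hmn⟩, Nat.lt_succ_of_lt hj0, Nat.lt_succ_self m, hfj0, hc,
            hfirst, ?_, ?_⟩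
          · intro k hk hk'
            exfalso
            have h1 : m < (k : ℕ) := by simpa [Fin.lt_def] using hk
            omega
          · rw [Pre_succ f hmn, halt]; linarith
  -- at the top, the first nonzero entry is +1
  have htop := inv n le_rfl
  have hPn : Pre f n = 1 := by rw [Pre_top]; exact hs
  rcases htop with ⟨h0, _⟩ | ⟨j0, j, _, _, hfj0, hfj, hfirst, _, hsum⟩
  · rw [hPn] at h0; exact absurd h0 one_ne_zero
  · have hv0 := hv j0
    have hvj := hv j
    have hj0one : f j0 = 1 := by rw [hPn] at hsum; omega
    intro m hm
    rcases inv m hm with ⟨h0, _⟩ | ⟨j0', j', _, _, hfj0', hfj', hfirst', _, hsum'⟩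
    · left; exact h0
    · -- first nonzero is unique : j0' = j0
      have : j0' = j0 := by
        rcases lt_trichotomy j0' j0 with h | h | h
        · exact absurd (hfirst j0' h) hfj0'
        · exact h
        · exact absurd (hfirst' j0 h) hfj0
      rw [this, hj0one] at hsum'
      have := hv j'
      omega

/-- From 0/1-valued partial sums, deduce the alternating-sign property. -/
lemma altSeq_of_steps {n : ℕ} (f : Fin n → ℤ) (s : ℕ → ℤ)
    (hstep : ∀ j : Fin n, f j = s ((j : ℕ) + 1) - s j)
    (hs : ∀ m, m ≤ n → s m = 0 ∨ s m = 1) : AltSeq f := by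
  intro j j' hlt hj hj' hz
  have hjj' : (j : ℕ) < (j' : ℕ) := Fin.lt_def.mp hlt
  have hkey : ∀ m, m ≤ (j' : ℕ) → (j : ℕ) < m → s m = s ((j : ℕ) + 1) := by
    intro m
    induction m with
    | zero => omega
    | succ m ih =>
      intro hm hjm
      rcases Nat.lt_or_ge (j : ℕ) m with h | h
      · -- s (m+1) = s m + f ⟨m⟩, and f ⟨m⟩ = 0
        have hmn : m < n := lt_trans (lt_of_lt_of_le (Nat.lt_of_succ_le hm) le_rfl) j'.isLt
        have hz' : f ⟨m, hmn⟩ = 0 := by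
          apply hz ⟨m, hmn⟩ (Fin.lt_def.mpr h) (Fin.lt_def.mpr (Nat.lt_of_succ_le hm))
        have := hstep ⟨m, hmn⟩
        have hih := ih (le_of_lt (Nat.lt_of_succ_le hm)) h
        simp only [] at this
        omega
      · have : (j : ℕ) = m := by omega
        rw [this]
  have hc : s (j' : ℕ) = s ((j : ℕ) + 1) := hkey _ le_rfl hjj'
  have h1 := hs (j : ℕ) (le_of_lt j.isLt)
  have h2 := hs ((j : ℕ) + 1) (Nat.succ_le_of_lt j.isLt)
  have h3 := hs (j' : ℕ) (le_of_lt j'.isLt)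
  have h4 := hs ((j' : ℕ) + 1) (Nat.succ_le_of_lt j'.isLt)
  have e1 := hstep j
  have e2 := hstep j'
  rw [e2] at hj'
  rw [e1, e2]
  omega

/-- Extended corner sums with ℕ indices: sum over `i' < i`, `j' < j`. -/
def Rfun {n : ℕ} (A : Matrix (Fin n) (Fin n) ℤ) (i j : ℕ) : ℤ :=
  Pre (fun i' : Fin n => Pre (fun j' : Fin n => A i' j') j) i

/-- The staircase conditions characterizing corner-sum functions of ASMs. -/
def IsStep (n : ℕ) (r : ℕ → ℕ → ℤ) : Prop :=
  (∀ j, j ≤ n → r 0 j = 0) ∧ (∀ i, i ≤ n → r i 0 = 0) ∧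
  (∀ j, j ≤ n → r n j = j) ∧ (∀ i, i ≤ n → r i n = i) ∧
  (∀ i j, i < n → j ≤ n → r (i+1) j - r i j = 0 ∨ r (i+1) j - r i j = 1) ∧
  (∀ i j, i ≤ n → j < n → r i (j+1) - r i j = 0 ∨ r i (j+1) - r i j = 1)

lemma cornerSum_eq_Rfun {n : ℕ} (A : Matrix (Fin n) (Fin n) ℤ) (a b : Fin n) :
    cornerSum A a b = Rfun A ((a : ℕ) + 1) ((b : ℕ) + 1) := by
  rw [cornerSum, Rfun, Pre]
  have hout : Finset.Iic a = Finset.univ.filter (fun i : Fin n => (i : ℕ) < (a : ℕ) + 1) := by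
    ext k
    simp only [Finset.mem_Iic, Finset.mem_filter, Finset.mem_univ, true_and, Fin.le_def]
    omega
  have hin : Finset.Iic b = Finset.univ.filter (fun j : Fin n => (j : ℕ) < (b : ℕ) + 1) := by
    ext k
    simp only [Finset.mem_Iic, Finset.mem_filter, Finset.mem_univ, true_and, Fin.le_def]
    omega
  rw [hout]
  refine Finset.sum_congr rfl fun i _ => ?_
  rw [hin, Pre]

lemma isStep_Rfun {n : ℕ} {A : Matrix (Fin n) (Fin n) ℤ} (hA : IsASM A) :
    IsStep n (Rfun A) := by
  obtain ⟨hv, hrow, hcol, haltr, haltc⟩ := hA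
  refine ⟨?_, ?_, ?_, ?_, ?_, ?_⟩
  · intro j hj; rw [Rfun, Pre_zero]
  · intro i hi
    rw [Rfun]
    have : (fun i' : Fin n => Pre (fun j' : Fin n => A i' j') 0) = fun _ => (0 : ℤ) := by
      funext i'; exact Pre_zero _
    rw [this, Pre]; simp
  · intro j hj
    rw [Rfun, Pre_top]
    have : ∀ i' : Fin n, Pre (fun j' : Fin n => A i' j') j
        = ∑ j' ∈ Finset.univ.filter (fun j' : Fin n => (j' : ℕ) < j), A i' j' := fun _ => rfl
    calc ∑ i', Pre (fun j' : Fin n => A i' j') j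
        = ∑ i', ∑ j' ∈ Finset.univ.filter (fun j' : Fin n => (j' : ℕ) < j), A i' j' := rfl
      _ = ∑ j' ∈ Finset.univ.filter (fun j' : Fin n => (j' : ℕ) < j), ∑ i', A i' j' :=
          Finset.sum_comm
      _ = ∑ j' ∈ Finset.univ.filter (fun j' : Fin n => (j' : ℕ) < j), (1 : ℤ) :=
          Finset.sum_congr rfl fun j' _ => hcol j'
      _ = Pre (fun _ : Fin n => (1 : ℤ)) j := rfl
      _ = j := Pre_one j hj
  · intro i hi
    rw [Rfun]
    have : ∀ i' : Fin n, Pre (fun j' : Fin n => A i' j') n = 1 := by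
      intro i'; rw [Pre_top]; exact hrow i'
    calc Pre (fun i' : Fin n => Pre (fun j' : Fin n => A i' j') n) i
        = Pre (fun _ : Fin n => (1 : ℤ)) i := by
          unfold Pre; exact Finset.sum_congr rfl fun i' _ => this i'
      _ = i := Pre_one i hi
  · intro i j hi hj
    rw [Rfun, Rfun, Pre_succ _ hi]
    have := prefix_mem (fun j' => A ⟨i, hi⟩ j') (hv _) (hrow _) (haltr _) j hj
    rcases this with h | h
    · left; rw [h]; ring
    · right; rw [h]; ring
  · intro i j hi hj
    rw [Rfun, Rfun]
    have hpt : (fun i' : Fin n => Pre (fun j' : Fin n => A i' j') (j+1))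
        = fun i' : Fin n => Pre (fun j' : Fin n => A i' j') j + A i' ⟨j, hj⟩ :=
      funext fun i' => Pre_succ _ hj
    have hadd : Pre (fun i' : Fin n => Pre (fun j' : Fin n => A i' j') j + A i' ⟨j, hj⟩) i
        = Pre (fun i' : Fin n => Pre (fun j' : Fin n => A i' j') j) i
          + Pre (fun i' : Fin n => A i' ⟨j, hj⟩) i := by
      unfold Pre; rw [Finset.sum_add_distrib]
    rw [hpt, hadd]
    have hsplit : Pre (fun i' : Fin n => Pre (fun j' : Fin n => A i' j') j) i
          + Pre (fun i' : Fin n => A i' ⟨j, hj⟩) i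
          - Pre (fun i' : Fin n => Pre (fun j' : Fin n => A i' j') j) i
        = Pre (fun i' : Fin n => A i' ⟨j, hj⟩) i := by ring
    rw [hsplit]
    exact prefix_mem (fun i' => A i' ⟨j, hj⟩) (fun i' => hv i' _) (hcol _)
      (haltc _) i hi

lemma isStep_min {n : ℕ} {r s : ℕ → ℕ → ℤ} (hr : IsStep n r) (hs : IsStep n s) :
    IsStep n (fun i j => min (r i j) (s i j)) := by
  obtain ⟨r1, r2, r3, r4, r5, r6⟩ := hr
  obtain ⟨s1, s2, s3, s4, s5, s6⟩ := hs
  refine ⟨?_, ?_, ?_, ?_, ?_, ?_⟩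
  · intro j hj; dsimp only; rw [r1 j hj, s1 j hj]; simp
  · intro i hi; dsimp only; rw [r2 i hi, s2 i hi]; simp
  · intro j hj; dsimp only; rw [r3 j hj, s3 j hj]; simp
  · intro i hi; dsimp only; rw [r4 i hi, s4 i hi]; simp
  · intro i j hi hj
    have h1 := r5 i j hi hj; have h2 := s5 i j hi hj
    dsimp only
    simp only [min_def]
    split <;> split <;> omega
  · intro i j hi hj
    have h1 := r6 i j hi hj; have h2 := s6 i j hi hj
    dsimp only
    simp only [min_def]
    split <;> split <;> omega

lemma isStep_max {n : ℕ} {r s : ℕ → ℕ → ℤ} (hr : IsStep n r) (hs : IsStep n s) :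
    IsStep n (fun i j => max (r i j) (s i j)) := by
  obtain ⟨r1, r2, r3, r4, r5, r6⟩ := hr
  obtain ⟨s1, s2, s3, s4, s5, s6⟩ := hs
  refine ⟨?_, ?_, ?_, ?_, ?_, ?_⟩
  · intro j hj; dsimp only; rw [r1 j hj, s1 j hj]; simp
  · intro i hi; dsimp only; rw [r2 i hi, s2 i hi]; simp
  · intro j hj; dsimp only; rw [r3 j hj, s3 j hj]; simp
  · intro i hi; dsimp only; rw [r4 i hi, s4 i hi]; simp
  · intro i j hi hj
    have h1 := r5 i j hi hj; have h2 := s5 i j hi hj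
    dsimp only
    simp only [max_def]
    split <;> split <;> omega
  · intro i j hi hj
    have h1 := r6 i j hi hj; have h2 := s6 i j hi hj
    dsimp only
    simp only [max_def]
    split <;> split <;> omega

/-- Any staircase function is the corner-sum function of an ASM. -/
lemma exists_ASM_of_isStep {n : ℕ} (r : ℕ → ℕ → ℤ) (hr : IsStep n r) :
    ∃ C : Matrix (Fin n) (Fin n) ℤ, IsASM C ∧
      ∀ a b : Fin n, cornerSum C a b = r ((a : ℕ) + 1) ((b : ℕ) + 1) := by
  obtain ⟨h1, h2, h3, h4, h5, h6⟩ := hr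
  set C : Matrix (Fin n) (Fin n) ℤ := fun i j =>
    r ((i : ℕ) + 1) ((j : ℕ) + 1) - r (i : ℕ) ((j : ℕ) + 1)
      - r ((i : ℕ) + 1) (j : ℕ) + r (i : ℕ) (j : ℕ) with hC
  -- row prefix sums
  have hrowpre : ∀ (i : Fin n) (m : ℕ), m ≤ n →
      Pre (fun j => C i j) m = (r ((i : ℕ) + 1) m - r (i : ℕ) m)
        - (r ((i : ℕ) + 1) 0 - r (i : ℕ) 0) := by
    intro i m hm
    exact Pre_telescope (fun m => r ((i : ℕ) + 1) m - r (i : ℕ) m)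
      (fun j => C i j) (fun j => by rw [hC]; ring) m hm
  have hrowpre' : ∀ (i : Fin n) (m : ℕ), m ≤ n →
      Pre (fun j => C i j) m = r ((i : ℕ) + 1) m - r (i : ℕ) m := by
    intro i m hm
    rw [hrowpre i m hm, h2 _ (Nat.succ_le_of_lt i.isLt), h2 _ (le_of_lt i.isLt)]
    ring
  -- column prefix sums
  have hcolpre' : ∀ (j : Fin n) (m : ℕ), m ≤ n →
      Pre (fun i => C i j) m = r m ((j : ℕ) + 1) - r m (j : ℕ) := by
    intro j m hm
    have := Pre_telescope (fun m => r m ((j : ℕ) + 1) - r m (j : ℕ))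
      (fun i => C i j) (fun i => by rw [hC]; ring) m hm
    rw [this]
    rw [h1 _ (Nat.succ_le_of_lt j.isLt), h1 _ (le_of_lt j.isLt)]
    ring
  refine ⟨C, ⟨?_, ?_, ?_, ?_, ?_⟩, ?_⟩
  · -- entries in {-1,0,1}
    intro i j
    have d1 := h5 (i : ℕ) ((j : ℕ) + 1) i.isLt (Nat.succ_le_of_lt j.isLt)
    have d2 := h5 (i : ℕ) (j : ℕ) i.isLt (le_of_lt j.isLt)
    rw [hC]
    dsimp only
    omega
  · -- row sums
    intro i
    have := hrowpre' i n le_rfl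
    rw [Pre_top] at this
    rw [this, h4 _ (Nat.succ_le_of_lt i.isLt), h4 _ (le_of_lt i.isLt)]
    push_cast; ring
  · -- column sums
    intro j
    have := hcolpre' j n le_rfl
    rw [Pre_top] at this
    rw [this, h3 _ (Nat.succ_le_of_lt j.isLt), h3 _ (le_of_lt j.isLt)]
    push_cast; ring
  · -- rows alternate
    intro i
    apply altSeq_of_steps (fun j => C i j) (fun m => r ((i : ℕ) + 1) m - r (i : ℕ) m)
    · intro j; rw [hC]; ring
    · intro m hm; exact h5 (i : ℕ) m i.isLt hm
  · -- columns alternate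
    intro j
    apply altSeq_of_steps (fun i => C i j) (fun m => r m ((j : ℕ) + 1) - r m (j : ℕ))
    · intro i; rw [hC]; ring
    · intro m hm; exact h6 m (j : ℕ) hm j.isLt
  · -- corner sums
    intro a b
    rw [cornerSum_eq_Rfun, Rfun]
    have hin : (fun i' : Fin n => Pre (fun j' => C i' j') ((b : ℕ) + 1))
        = fun i' : Fin n => r ((i' : ℕ) + 1) ((b : ℕ) + 1) - r (i' : ℕ) ((b : ℕ) + 1) :=
      funext fun i' => hrowpre' i' _ (Nat.succ_le_of_lt b.isLt)
    rw [hin]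
    rw [Pre_telescope (fun m => r m ((b : ℕ) + 1)) _ (fun i' => rfl) _
      (Nat.succ_le_of_lt a.isLt)]
    rw [h1 _ (Nat.succ_le_of_lt b.isLt)]
    ring

/-- The entrywise min (resp. max) of the corner sum matrices of two ASMs is the corner
sum matrix of an ASM, namely the join (resp. meet) in the ASM lattice. -/
theorem stmt_4 (n : ℕ) (A B : Matrix (Fin n) (Fin n) ℤ)
    (hA : IsASM A) (hB : IsASM B) :
    (∃ C : Matrix (Fin n) (Fin n) ℤ, IsASM C ∧
      ∀ i j : Fin n, cornerSum C i j = min (cornerSum A i j) (cornerSum B i j)) ∧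
    (∃ C : Matrix (Fin n) (Fin n) ℤ, IsASM C ∧
      ∀ i j : Fin n, cornerSum C i j = max (cornerSum A i j) (cornerSum B i j)) := by
  have hRA := isStep_Rfun hA
  have hRB := isStep_Rfun hB
  constructor
  · obtain ⟨C, hC, hcs⟩ := exists_ASM_of_isStep
      (fun i j => min (Rfun A i j) (Rfun B i j)) (isStep_min hRA hRB)
    refine ⟨C, hC, fun i j => ?_⟩
    rw [hcs i j, cornerSum_eq_Rfun A, cornerSum_eq_Rfun B]
  · obtain ⟨C, hC, hcs⟩ := exists_ASM_of_isStep
      (fun i j => max (Rfun A i j) (Rfun B i j)) (isStep_max hRA hRB)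
    refine ⟨C, hC, fun i j => ?_⟩
    rw [hcs i j, cornerSum_eq_Rfun A, cornerSum_eq_Rfun B]
end

section
/- Let w ∈ S_n and let (a,b) be a lower outside corner of the Rothe diagram D(w), i.e., a maximally southeast element of D(w). Set v = w·t_{a,w⁻¹(b)}. Then D(w) = D(v) ∪ {(a,b)} (disjoint union) and ℓ(w) = ℓ(v) + 1. -/
/-- Coxeter length: number of inversions. -/
def len {n : ℕ} (u : Equiv.Perm (Fin n)) : ℕ :=
  (Finset.univ.filter (fun p : Fin n × Fin n => p.1 < p.2 ∧ u p.2 < u p.1)).card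

/-- `(a,b)` is a lower outside corner (maximally southeast element) of `D(w)`:
no other cell of `D(w)` lies weakly southeast of it. -/
def IsLOC {n : ℕ} (w : Equiv.Perm (Fin n)) (p : Fin n × Fin n) : Prop :=
  p ∈ Dset w ∧ ∀ q ∈ Dset w, p.1 ≤ q.1 → p.2 ≤ q.2 → q = p

lemma len_eq_card {n : ℕ} (u : Equiv.Perm (Fin n)) :
    len u =
      (Finset.univ.filter (fun p : Fin n × Fin n => p.2 < u p.1 ∧ p.1 < u⁻¹ p.2)).card := by
  unfold len
  refine Finset.card_bij' (fun p _ => (p.1, u p.2)) (fun p _ => (p.1, u⁻¹ p.2)) ?_ ?_ ?_ ?_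
  · intro p hp
    simp only [Finset.mem_filter, Finset.mem_univ, true_and] at hp ⊢
    exact ⟨hp.2, by simpa using hp.1⟩
  · intro p hp
    simp only [Finset.mem_filter, Finset.mem_univ, true_and] at hp ⊢
    exact ⟨hp.2, by simpa using hp.1⟩
  · intro p hp; simp
  · intro p hp; simp

/-- If `(a,b)` is a lower outside corner of `D(w)` and `v = w·t_{a,w⁻¹(b)}`, then
`D(w) = D(v) ⊔ {(a,b)}` and `ℓ(w) = ℓ(v) + 1`. -/
theorem stmt_5 (n : ℕ) (w : Equiv.Perm (Fin n)) (a b : Fin n)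
    (h : IsLOC w (a, b)) :
    Dset w = insert (a, b) (Dset (w * Equiv.swap a (w⁻¹ b))) ∧
    (a, b) ∉ Dset (w * Equiv.swap a (w⁻¹ b)) ∧
    len w = len (w * Equiv.swap a (w⁻¹ b)) + 1 := by
  obtain ⟨⟨hb, hac⟩, hloc⟩ := h
  simp only at hb hac
  set c := w⁻¹ b with hcdef
  have hwc : w c = b := w.apply_symm_apply b
  have hane : a ≠ c := ne_of_lt hac
  have hwa : b < w a := hb
  set v := w * Equiv.swap a c with hv
  have hvapp : ∀ i, v i = w (Equiv.swap a c i) := fun i => rfl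
  have hvinv : ∀ j, v⁻¹ j = Equiv.swap a c (w⁻¹ j) := by
    intro j
    rw [hv, mul_inv_rev, Equiv.Perm.mul_apply, Equiv.swap_inv]
  have key : ∀ i j : Fin n, a ≤ i → b ≤ j → j < w i → i < w⁻¹ j → i = a ∧ j = b := by
    intro i j hai hbj h1 h2
    have := hloc (i, j) ⟨h1, h2⟩ hai hbj
    exact ⟨congrArg Prod.fst this, congrArg Prod.snd this⟩
  -- (a,b) ∉ Dset v
  have hnot : (a, b) ∉ Dset v := by
    intro hmem
    have h2 := hmem.2
    simp only [hvinv] at h2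
    rw [← hcdef, Equiv.swap_apply_right] at h2
    exact lt_irrefl a h2
  have hset : Dset w = insert (a, b) (Dset v) := by
    ext ⟨i, j⟩
    simp only [Dset, Set.mem_setOf_eq, Set.mem_insert_iff, Prod.mk.injEq, hvapp, hvinv]
    constructor
    · rintro ⟨h1, h2⟩
      by_cases hai : a ≤ i
      · by_cases hbj : b ≤ j
        · exact Or.inl (key i j hai hbj h1 h2)
        · -- j < b, a ≤ i
          push_neg at hbj
          right
          have hjb : j ≠ b := ne_of_lt hbj
          constructor
          · -- j < w (swap a c i)
            by_cases hia : i = a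
            · rw [hia, Equiv.swap_apply_left, hwc]; exact hbj
            · by_cases hic : i = c
              · rw [hic, Equiv.swap_apply_right]; exact lt_trans hbj hwa
              · rw [Equiv.swap_apply_of_ne_of_ne hia hic]; exact h1
          · -- i < swap a c (w⁻¹ j)
            have hja : w⁻¹ j ≠ a := by
              intro hh
              rw [← hh, Equiv.Perm.coe_inv, Equiv.apply_symm_apply] at hwa
              exact absurd (lt_trans hwa hbj) (lt_irrefl b)
            have hjc : w⁻¹ j ≠ c := by
              intro hh
              apply hjb
              have := congrArg w hh
              rwa [Equiv.Perm.coe_inv, Equiv.apply_symm_apply, hwc] at this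
            rw [Equiv.swap_apply_of_ne_of_ne hja hjc]; exact h2
      · -- i < a
        push_neg at hai
        right
        have hia : i ≠ a := ne_of_lt hai
        have hic : i ≠ c := ne_of_lt (lt_trans hai hac)
        constructor
        · rw [Equiv.swap_apply_of_ne_of_ne hia hic]; exact h1
        · by_cases hja : w⁻¹ j = a
          · rw [hja, Equiv.swap_apply_left]; exact lt_trans hai hac
          · by_cases hjc : w⁻¹ j = c
            · rw [hjc, Equiv.swap_apply_right]; exact hai
            · rw [Equiv.swap_apply_of_ne_of_ne hja hjc]; exact h2
    · rintro (⟨hi, hj⟩ | ⟨h1, h2⟩)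
      · subst hi; subst hj; exact ⟨hwa, hac⟩
      · by_cases hia : i = a
        · rw [hia] at h1 h2 ⊢
          rw [Equiv.swap_apply_left, hwc] at h1
          -- h1 : j < b
          have hjb : j ≠ b := ne_of_lt h1
          have hja : w⁻¹ j ≠ a := by
            intro hh
            rw [← hh, Equiv.Perm.coe_inv, Equiv.apply_symm_apply] at hwa
            exact absurd (lt_trans hwa h1) (lt_irrefl b)
          have hjc : w⁻¹ j ≠ c := by
            intro hh
            apply hjb
            have := congrArg w hh
            rwa [Equiv.Perm.coe_inv, Equiv.apply_symm_apply, hwc] at this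
          rw [Equiv.swap_apply_of_ne_of_ne hja hjc] at h2
          exact ⟨lt_trans h1 hwa, h2⟩
        · by_cases hic : i = c
          · rw [hic] at h1 h2 ⊢
            rw [Equiv.swap_apply_right] at h1
            -- h1 : j < w a
            by_cases hja : w⁻¹ j = a
            · rw [hja, Equiv.swap_apply_left] at h2
              exact absurd h2 (lt_irrefl c)
            · by_cases hjc : w⁻¹ j = c
              · rw [hjc, Equiv.swap_apply_right] at h2
                exact absurd (lt_trans hac h2) (lt_irrefl a)
              · rw [Equiv.swap_apply_of_ne_of_ne hja hjc] at h2
                have hjb : j ≠ b := by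
                  intro hh; apply hjc; rw [hh]
                have hjltb : j < b := by
                  by_contra hge
                  push_neg at hge
                  have := (key a j (le_refl a) hge h1 (lt_trans hac h2)).2
                  exact hjb this
                exact ⟨hwc ▸ hjltb, h2⟩
          · rw [Equiv.swap_apply_of_ne_of_ne hia hic] at h1
            refine ⟨h1, ?_⟩
            by_cases hja : w⁻¹ j = a
            · -- j = w a
              rw [hja, Equiv.swap_apply_left] at h2
              -- h2 : i < c; need i < a
              rw [hja]
              by_contra hge
              push_neg at hge
              have hwaj : j = w a := by
                have := congrArg w hja
                rwa [Equiv.Perm.coe_inv, Equiv.apply_symm_apply] at this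
              have hbwi : b < w i := lt_trans hwa (hwaj ▸ h1)
              have := (key i b hge (le_refl b) hbwi (hcdef ▸ h2)).1
              exact hia this
            · by_cases hjc : w⁻¹ j = c
              · rw [hjc, Equiv.swap_apply_right] at h2
                rw [hjc]
                exact lt_trans h2 hac
              · rwa [Equiv.swap_apply_of_ne_of_ne hja hjc] at h2
  refine ⟨hset, hnot, ?_⟩
  have hfin : (Finset.univ.filter
      (fun p : Fin n × Fin n => p.2 < w p.1 ∧ p.1 < w⁻¹ p.2)) =
      insert (a, b) (Finset.univ.filter
        (fun p : Fin n × Fin n => p.2 < v p.1 ∧ p.1 < v⁻¹ p.2)) := by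
    ext p
    have := Set.ext_iff.mp hset p
    simp only [Dset, Set.mem_setOf_eq, Set.mem_insert_iff] at this
    simp only [Finset.mem_filter, Finset.mem_univ, true_and, Finset.mem_insert]
    exact this
  have hnotfin : (a, b) ∉ (Finset.univ.filter
      (fun p : Fin n × Fin n => p.2 < v p.1 ∧ p.1 < v⁻¹ p.2)) := by
    simp only [Finset.mem_filter, Finset.mem_univ, true_and]
    intro hh
    exact hnot hh
  rw [len_eq_card, len_eq_card, hfin, Finset.card_insert_of_notMem hnotfin]
end

section
/- Let w ∈ S_n, let (a,b) be a lower outside corner of D(w), and let v = w·t_{a,w⁻¹(b)}. Then for all c,d ∈ [n]: rk_v(c,d) − rk_w(c,d) = 1 if a ≤ c < w⁻¹(b) and b ≤ d < w(a), and rk_v(c,d) − rk_w(c,d) = 0 otherwise. -/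
/-- For a lower outside corner `(a,b)` of `D(w)` and `v = w·t_{a,w⁻¹(b)}`:
`rk_v(c,d) − rk_w(c,d)` is `1` on the rectangle `a ≤ c < w⁻¹(b)`, `b ≤ d < w(a)`
and `0` otherwise. -/
theorem stmt_6 (n : ℕ) (w : Equiv.Perm (Fin n)) (a b : Fin n)
    (h : IsLOC w (a, b)) (c d : Fin n) :
    rkIic (w * Equiv.swap a (w⁻¹ b)) c d =
      rkIic w c d + (if a ≤ c ∧ c < w⁻¹ b ∧ b ≤ d ∧ d < w a then 1 else 0) := by
  classical
  obtain ⟨hD, -⟩ := h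
  simp only [Dset, Set.mem_setOf_eq] at hD
  obtain ⟨hb, ha⟩ := hD
  set a' := w⁻¹ b with ha'
  set v := w * Equiv.swap a a' with hv
  have hne : a ≠ a' := ne_of_lt ha
  have hva : v a = b := by
    show w (Equiv.swap a a' a) = b
    rw [Equiv.swap_apply_left, ha']
    exact w.apply_symm_apply b
  have hva' : v a' = w a := by
    show w (Equiv.swap a a' a') = w a
    rw [Equiv.swap_apply_right]
  have hvi : ∀ i, i ≠ a → i ≠ a' → v i = w i := by
    intro i h1 h2
    show w (Equiv.swap a a' i) = w i
    rw [Equiv.swap_apply_of_ne_of_ne h1 h2]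
  have hrk : ∀ u : Equiv.Perm (Fin n),
      rkIic u c d = ∑ i, if i ≤ c ∧ u i ≤ d then 1 else 0 := by
    intro u; unfold rkIic; rw [Finset.card_filter]
  rw [hrk, hrk]
  have hsplit : ∀ f : Fin n → ℕ,
      ∑ i, f i = f a + f a' + ∑ i ∈ (Finset.univ.erase a).erase a', f i := by
    intro f
    rw [← Finset.add_sum_erase _ f (Finset.mem_univ a),
        ← Finset.add_sum_erase _ f (Finset.mem_erase.mpr ⟨hne.symm, Finset.mem_univ a'⟩)]
    ring
  rw [hsplit, hsplit]
  have hrest : (∑ i ∈ (Finset.univ.erase a).erase a', if i ≤ c ∧ v i ≤ d then 1 else 0)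
      = ∑ i ∈ (Finset.univ.erase a).erase a', if i ≤ c ∧ w i ≤ d then 1 else 0 := by
    apply Finset.sum_congr rfl
    intro i hi
    simp only [Finset.mem_erase] at hi
    rw [hvi i hi.2.1 hi.1]
  rw [hrest]
  have e1 : ((v a : Fin n) : ℕ) = (b : ℕ) := congrArg Fin.val hva
  have e2 : ((v a' : Fin n) : ℕ) = ((w a : Fin n) : ℕ) := congrArg Fin.val hva'
  have e3 : ((w a' : Fin n) : ℕ) = (b : ℕ) := by
    rw [ha']; exact congrArg Fin.val (w.apply_symm_apply b)
  have h1 : (b : ℕ) < ((w a : Fin n) : ℕ) := hb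
  have h2 : (a : ℕ) < (a' : ℕ) := ha
  simp only [Fin.le_def, Fin.lt_def]
  split_ifs <;> omega
end

section
/- Let v ∈ S_n, fix a < n with v(a) = b, and let U = {i_1 < i_2 < ... < i_k} ⊆ [a−1] be a nonempty set such that for each i ∈ U, ℓ(v·t_{i,a}) = ℓ(v)+1 and v·t_{i,a} > v in Bruhat order. Define w_U = v·(a i_k i_{k−1} ... i_1) (cycle notation). Then rk_{w_U}(c,d) = min{rk_{v·t_{i,a}}(c,d) : i ∈ U} for all c,d ∈ [n]; that is, w_U is the join of {v·t_{i,a} : i ∈ U} in the ASM lattice. -/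
/-- Strong Bruhat order: transitive closure of the covering relations. -/
def bruhatLE {n : ℕ} (u v : Equiv.Perm (Fin n)) : Prop :=
  Relation.ReflTransGen
    (fun x y => ∃ i j : Fin n, i ≠ j ∧ y = x * Equiv.swap i j ∧ len y = len x + 1) u v

lemma gi {n : ℕ} (f g : Fin n → Prop) [DecidablePred f] [DecidablePred g]
    (T : Finset (Fin n)) (h : ∀ q ∉ T, f q ↔ g q) :
    (Finset.univ.filter f).card + ∑ q ∈ T, (if g q then 1 else 0)
      = (Finset.univ.filter g).card + ∑ q ∈ T, (if f q then 1 else 0) := by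
  rw [Finset.card_filter, Finset.card_filter,
    ← Finset.sum_add_sum_compl T (fun q => if f q then (1:ℕ) else 0),
    ← Finset.sum_add_sum_compl T (fun q => if g q then (1:ℕ) else 0)]
  have hc : ∑ q ∈ Tᶜ, (if f q then (1:ℕ) else 0) = ∑ q ∈ Tᶜ, (if g q then (1:ℕ) else 0) :=
    Finset.sum_congr rfl (fun q hq => by
      simp only [h q (Finset.mem_compl.mp hq)])
  rw [hc]; ring

lemma chain_sum (k : ℕ) (P Q : ℕ → Prop) [DecidablePred P] [DecidablePred Q]
    (hP : ∀ m m', m ≤ m' → P m' → P m) (hQ : ∀ m m', m ≤ m' → Q m → Q m') :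
    ∑ m ∈ Finset.range (k+1), (if P m ∧ Q m then 1 else 0)
      = (∑ ℓ ∈ Finset.range k, if P (ℓ+1) ∧ Q ℓ then 1 else 0)
        + (if ∃ m, m < k+1 ∧ P m ∧ Q m then 1 else 0) := by
  induction k with
  | zero =>
      have he : (∃ m, m < 1 ∧ P m ∧ Q m) ↔ P 0 ∧ Q 0 := by
        constructor
        · rintro ⟨m, hm, h⟩
          have : m = 0 := by omega
          rwa [this] at h
        · intro h; exact ⟨0, by omega, h⟩
      rw [Finset.sum_range_one, Finset.sum_range_zero, zero_add, if_congr he rfl rfl]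
  | succ k ih =>
      rw [Finset.sum_range_succ, Finset.sum_range_succ (f := fun ℓ => if P (ℓ+1) ∧ Q ℓ then (1:ℕ) else 0), ih]
      have key : (if ∃ m, m < k+1 ∧ P m ∧ Q m then (1:ℕ) else 0)
            + (if P (k+1) ∧ Q (k+1) then 1 else 0)
          = (if P (k+1) ∧ Q k then 1 else 0) + (if ∃ m, m < k+1+1 ∧ P m ∧ Q m then 1 else 0) := by
        by_cases htop : P (k+1) ∧ Q (k+1)
        · have h2 : ∃ m, m < k+1+1 ∧ P m ∧ Q m := ⟨k+1, by omega, htop⟩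
          have h3 : (∃ m, m < k+1 ∧ P m ∧ Q m) ↔ P (k+1) ∧ Q k := by
            constructor
            · rintro ⟨m, hm, hPm, hQm⟩
              exact ⟨htop.1, hQ m k (by omega) hQm⟩
            · rintro ⟨h1, h2'⟩
              exact ⟨k, by omega, hP k (k+1) (by omega) htop.1, h2'⟩
          rw [if_pos htop, if_pos h2]
          by_cases h4 : P (k+1) ∧ Q k
          · rw [if_pos h4, if_pos (h3.mpr h4)]
          · rw [if_neg h4, if_neg (fun h => h4 (h3.mp h))]
        · have h4 : ¬ (P (k+1) ∧ Q k) := fun h => htop ⟨h.1, hQ k (k+1) (by omega) h.2⟩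
          have h5 : (∃ m, m < k+1+1 ∧ P m ∧ Q m) ↔ (∃ m, m < k+1 ∧ P m ∧ Q m) := by
            constructor
            · rintro ⟨m, hm, h⟩
              rcases Nat.lt_or_ge m (k+1) with hm' | hm'
              · exact ⟨m, hm', h⟩
              · exfalso; have : m = k+1 := by omega
                rw [this] at h; exact htop h
            · rintro ⟨m, hm, h⟩; exact ⟨m, by omega, h⟩
          rw [if_neg htop, if_neg h4, add_zero]
          by_cases h6 : ∃ m, m < k+1 ∧ P m ∧ Q m
          · rw [if_pos h6, if_pos (h5.mpr h6), zero_add]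
          · rw [if_neg h6, if_neg (fun h => h6 (h5.mp h))]
      omega

lemma len_cover {n : ℕ} (u : Equiv.Perm (Fin n)) (i a : Fin n) (hia : i < a)
    (hlen : len (u * Equiv.swap i a) = len u + 1) :
    u i < u a ∧ ∀ j : Fin n, i < j → j < a → ¬(u i < u j ∧ u j < u a) := by
  classical
  set σ := Equiv.swap i a with hσ
  have hσi : σ i = a := Equiv.swap_apply_left i a
  have hσa : σ a = i := Equiv.swap_apply_right i a
  have hσs : ∀ x, σ (σ x) = x := fun x => Equiv.swap_apply_self i a x
  have hσinj : Function.Injective σ := σ.injective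
  -- step a : len (u * σ) = card T2
  set T2 := Finset.univ.filter (fun p : Fin n × Fin n => σ p.1 < σ p.2 ∧ u p.2 < u p.1) with hT2def
  have hstepa : len (u * σ) = T2.card := by
    unfold len
    apply Finset.card_equiv (Equiv.prodCongr σ σ)
    intro p
    simp only [Finset.mem_filter]
    simp only [Finset.mem_filter, Finset.mem_univ, true_and, Equiv.prodCongr_apply,
      Equiv.Perm.mul_apply, Prod.map_fst, Prod.map_snd, hσs, hT2def]
  -- the four pieces
  set X := Finset.univ.filter
      (fun p : Fin n × Fin n => (p.1 < p.2 ∧ σ p.1 < σ p.2) ∧ u p.2 < u p.1) with hXdef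
  set Y := Finset.univ.filter
      (fun p : Fin n × Fin n => (p.1 < p.2 ∧ σ p.2 < σ p.1) ∧ u p.2 < u p.1) with hYdef
  set Y'0 := Finset.univ.filter
      (fun p : Fin n × Fin n => (σ p.1 < σ p.2 ∧ p.2 < p.1) ∧ u p.2 < u p.1) with hY0def
  set Y' := Finset.univ.filter
      (fun p : Fin n × Fin n => (p.1 < p.2 ∧ σ p.2 < σ p.1) ∧ u p.1 < u p.2) with hY'def
  have hT1split : len u = X.card + Y.card := by
    unfold len
    rw [← Finset.card_filter_add_card_filter_not
      (p := fun p : Fin n × Fin n => σ p.1 < σ p.2)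
      (s := Finset.univ.filter (fun p : Fin n × Fin n => p.1 < p.2 ∧ u p.2 < u p.1))]
    congr 1
    · rw [Finset.filter_filter, hXdef]
      apply congrArg Finset.card
      apply Finset.filter_congr
      intro p _
      tauto
    · rw [Finset.filter_filter, hYdef]
      apply congrArg Finset.card
      apply Finset.filter_congr
      intro p _
      constructor
      · rintro ⟨⟨h1, h2⟩, h3⟩
        refine ⟨⟨h1, ?_⟩, h2⟩
        rcases lt_or_gt_of_ne (fun h : σ p.1 = σ p.2 => (ne_of_lt h1) (hσinj h)) with h | h
        · exact absurd h h3
        · exact h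
      · rintro ⟨⟨h1, h2⟩, h3⟩
        exact ⟨⟨h1, h3⟩, not_lt_of_gt h2⟩
  have hT2split : T2.card = X.card + Y'0.card := by
    rw [← Finset.card_filter_add_card_filter_not
      (p := fun p : Fin n × Fin n => p.1 < p.2) (s := T2), hT2def]
    congr 1
    · rw [Finset.filter_filter, hXdef]
      apply congrArg Finset.card
      apply Finset.filter_congr
      intro p _
      tauto
    · rw [Finset.filter_filter, hY0def]
      apply congrArg Finset.card
      apply Finset.filter_congr
      intro p _
      constructor
      · rintro ⟨⟨h1, h2⟩, h3⟩
        refine ⟨⟨h1, ?_⟩, h2⟩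
        have hne : p.2 ≠ p.1 := fun h => (ne_of_lt h1) (by rw [h])
        rcases lt_or_gt_of_ne hne with h | h
        · exact h
        · exact absurd h h3
      · rintro ⟨⟨h1, h2⟩, h3⟩
        exact ⟨⟨h1, h3⟩, not_lt_of_gt h2⟩
  have hswapcard : Y'0.card = Y'.card := by
    apply Finset.card_nbij' (fun p => (p.2, p.1)) (fun p => (p.2, p.1))
    · intro p hp
      simp only [hY0def, Finset.mem_coe, Finset.mem_filter, Finset.mem_univ, true_and] at hp
      simp only [hY'def, Finset.mem_coe, Finset.mem_filter, Finset.mem_univ, true_and]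
      exact ⟨⟨hp.1.2, hp.1.1⟩, hp.2⟩
    · intro p hp
      simp only [hY'def, Finset.mem_coe, Finset.mem_filter, Finset.mem_univ, true_and] at hp
      simp only [hY0def, Finset.mem_coe, Finset.mem_filter, Finset.mem_univ, true_and]
      exact ⟨⟨hp.1.2, hp.1.1⟩, hp.2⟩
    · intro p _; rfl
    · intro p _; rfl
  have hmain0 : Y'.card = Y.card + 1 := by omega
  clear hstepa hT1split hT2split hswapcard hlen
  set M := Finset.univ.filter (fun j : Fin n => i < j ∧ j < a) with hMdef
  set E := insert ((i,a) : Fin n × Fin n)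
      ((M.image (fun j => ((i,j) : Fin n × Fin n))) ∪
        (M.image (fun j => ((j,a) : Fin n × Fin n)))) with hEdef
  have hDE : Finset.univ.filter (fun p : Fin n × Fin n => p.1 < p.2 ∧ σ p.2 < σ p.1) = E := by
    ext p
    simp only [Finset.mem_filter, Finset.mem_univ, true_and, hEdef, Finset.mem_insert,
      Finset.mem_union, Finset.mem_image]
    constructor
    · rintro ⟨h1, h2⟩
      by_cases hp1 : p.1 = i
      · by_cases hp2 : p.2 = a
        · left; rw [← hp1, ← hp2]
        · right; left
          have hp2i : p.2 ≠ i := ne_of_gt (hp1 ▸ h1)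
          have hσp2 : σ p.2 = p.2 := Equiv.swap_apply_of_ne_of_ne hp2i hp2
          have h2' : p.2 < a := by rw [hσp2, hp1, hσi] at h2; exact h2
          refine ⟨p.2, ?_, ?_⟩
          · simp only [hMdef, Finset.mem_filter, Finset.mem_univ, true_and]
            exact ⟨hp1 ▸ h1, h2'⟩
          · exact Prod.ext hp1.symm rfl
      · by_cases hp1a : p.1 = a
        · exfalso
          have hp2a : p.2 ≠ a := fun h => (ne_of_lt h1) (hp1a.trans h.symm)
          have hp2i : p.2 ≠ i := fun h => absurd ((h ▸ (hp1a ▸ h1)) : a < i) (asymm hia)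
          have hσp2 : σ p.2 = p.2 := Equiv.swap_apply_of_ne_of_ne hp2i hp2a
          rw [hσp2, hp1a, hσa] at h2
          exact absurd ((h2.trans hia).trans (hp1a ▸ h1)) (lt_irrefl _)
        · have hσp1 : σ p.1 = p.1 := Equiv.swap_apply_of_ne_of_ne hp1 hp1a
          by_cases hp2 : p.2 = a
          · right; right
            have h2' : i < p.1 := by rw [hσp1, hp2, hσa] at h2; exact h2
            refine ⟨p.1, ?_, ?_⟩
            · simp only [hMdef, Finset.mem_filter, Finset.mem_univ, true_and]
              exact ⟨h2', hp2 ▸ h1⟩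
            · exact Prod.ext rfl hp2.symm
          · exfalso
            by_cases hp2i : p.2 = i
            · rw [hσp1, hp2i, hσi] at h2
              exact absurd ((h1.trans (hp2i ▸ hia)).trans h2) (lt_irrefl _)
            · have hσp2 : σ p.2 = p.2 := Equiv.swap_apply_of_ne_of_ne hp2i hp2
              rw [hσp1, hσp2] at h2
              exact absurd h1 (asymm h2)
    · rintro (hp | ⟨j, hjM, hp⟩ | ⟨j, hjM, hp⟩)
      · rw [hp]; exact ⟨hia, by rw [hσi, hσa]; exact hia⟩
      · simp only [hMdef, Finset.mem_filter, Finset.mem_univ, true_and] at hjM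
        rw [← hp]
        refine ⟨hjM.1, ?_⟩
        rw [hσi, Equiv.swap_apply_of_ne_of_ne (ne_of_gt hjM.1) (ne_of_lt hjM.2)]
        exact hjM.2
      · simp only [hMdef, Finset.mem_filter, Finset.mem_univ, true_and] at hjM
        rw [← hp]
        refine ⟨hjM.2, ?_⟩
        rw [hσa, Equiv.swap_apply_of_ne_of_ne (ne_of_gt hjM.1) (ne_of_lt hjM.2)]
        exact hjM.1
  have hinj1 : Function.Injective (fun j : Fin n => ((i, j) : Fin n × Fin n)) :=
    fun x y h => (Prod.ext_iff.mp h).2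
  have hinj2 : Function.Injective (fun j : Fin n => ((j, a) : Fin n × Fin n)) :=
    fun x y h => (Prod.ext_iff.mp h).1
  have hnotmem : ((i,a) : Fin n × Fin n) ∉
      ((M.image (fun j => ((i,j) : Fin n × Fin n))) ∪
        (M.image (fun j => ((j,a) : Fin n × Fin n)))) := by
    simp only [Finset.mem_union, Finset.mem_image, not_or, not_exists, not_and]
    constructor
    · intro j hjM h
      simp only [hMdef, Finset.mem_filter, Finset.mem_univ, true_and] at hjM
      exact (ne_of_lt hjM.2) (Prod.ext_iff.mp h).2
    · intro j hjM h
      simp only [hMdef, Finset.mem_filter, Finset.mem_univ, true_and] at hjM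
      exact (ne_of_gt hjM.1) (Prod.ext_iff.mp h).1
  have hdisjim : Disjoint (M.image (fun j : Fin n => ((i,j) : Fin n × Fin n)))
      (M.image (fun j : Fin n => ((j,a) : Fin n × Fin n))) := by
    rw [Finset.disjoint_left]
    intro p hp1 hp2
    simp only [Finset.mem_image] at hp1 hp2
    obtain ⟨j1, hj1, hpe1⟩ := hp1
    obtain ⟨j2, hj2, hpe2⟩ := hp2
    simp only [hMdef, Finset.mem_filter, Finset.mem_univ, true_and] at hj1 hj2
    have he12 : ((i, j1) : Fin n × Fin n) = (j2, a) := hpe1.trans hpe2.symm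
    exact (ne_of_lt hj1.2) (Prod.ext_iff.mp he12).2
  have hcardD : ∀ (R : Fin n × Fin n → Prop) (_ : DecidablePred R),
      (Finset.univ.filter (fun p : Fin n × Fin n => (p.1 < p.2 ∧ σ p.2 < σ p.1) ∧ R p)).card
      = (if R (i,a) then 1 else 0)
        + ((M.filter (fun j => R (i,j))).card + ((M.filter (fun j => R (j,a))).card)) := by
    intro R hRd
    rw [← Finset.filter_filter, hDE, hEdef, Finset.filter_insert, Finset.filter_union,
      Finset.filter_image, Finset.filter_image]
    have hc2 : ((M.filter (fun j => R ((i,j) : Fin n × Fin n))).image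
          (fun j : Fin n => ((i,j) : Fin n × Fin n)) ∪
        (M.filter (fun j => R ((j,a) : Fin n × Fin n))).image
          (fun j : Fin n => ((j,a) : Fin n × Fin n))).card
        = (M.filter (fun j => R (i,j))).card + (M.filter (fun j => R (j,a))).card := by
      rw [Finset.card_union_of_disjoint, Finset.card_image_of_injective _ hinj1,
        Finset.card_image_of_injective _ hinj2]
      exact Finset.disjoint_of_subset_left (Finset.image_subset_image (Finset.filter_subset _ _))
        (Finset.disjoint_of_subset_right (Finset.image_subset_image (Finset.filter_subset _ _))
          hdisjim)
    by_cases hR : R (i,a)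
    · have h' : ((i,a) : Fin n × Fin n) ∉
          ((M.filter (fun j => R ((i,j) : Fin n × Fin n))).image
              (fun j : Fin n => ((i,j) : Fin n × Fin n)) ∪
            (M.filter (fun j => R ((j,a) : Fin n × Fin n))).image
              (fun j : Fin n => ((j,a) : Fin n × Fin n))) := by
        intro hmem
        refine hnotmem ?_
        rcases Finset.mem_union.mp hmem with h | h
        · exact Finset.mem_union_left _ (Finset.image_subset_image (Finset.filter_subset _ _) h)
        · exact Finset.mem_union_right _ (Finset.image_subset_image (Finset.filter_subset _ _) h)
      rw [if_pos hR, if_pos hR, Finset.card_insert_of_notMem h', hc2]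
      omega
    · rw [if_neg hR, if_neg hR, hc2, zero_add]
  have hY1 : Y.card = (if u a < u i then (1:ℕ) else 0)
      + ((M.filter (fun j => u j < u i)).card + ((M.filter (fun j => u a < u j)).card)) := by
    rw [hYdef]; exact hcardD (fun p => u p.2 < u p.1) (by infer_instance)
  have hY2 : Y'.card = (if u i < u a then (1:ℕ) else 0)
      + ((M.filter (fun j => u i < u j)).card + ((M.filter (fun j => u j < u a)).card)) := by
    rw [hY'def]; exact hcardD (fun p => u p.1 < u p.2) (by infer_instance)
  simp only [Finset.card_filter] at hY1 hY2
  clear hDE hnotmem hdisjim hcardD hEdef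
  have claim1 : u i < u a := by
    by_contra hlt
    have hne : u a ≠ u i := fun h => (ne_of_lt hia) (u.injective h).symm
    have hai : u a < u i := lt_of_le_of_ne (le_of_not_gt hlt) hne
    have hb : ∀ j ∈ M, (if u i < u j then (1:ℕ) else 0) + (if u j < u a then 1 else 0)
        ≤ (if u j < u i then (1:ℕ) else 0) + (if u a < u j then 1 else 0) := by
      intro j hj
      simp only [hMdef, Finset.mem_filter, Finset.mem_univ, true_and] at hj
      have h1 : u j ≠ u i := fun h => (ne_of_gt hj.1) (u.injective h)
      have h2 : u j ≠ u a := fun h => (ne_of_lt hj.2) (u.injective h)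
      rcases lt_or_gt_of_ne h1 with hji | hij'
      · rw [if_neg (asymm hji), if_pos hji]
        split_ifs <;> omega
      · have hja' : ¬ u j < u a := fun hja' => absurd (hij'.trans hja') hlt
        have hua : u a < u j := lt_of_le_of_ne (le_of_not_gt hja') (Ne.symm h2)
        rw [if_pos hij', if_neg hja', if_neg (asymm hij'), if_pos hua]
    have hsum := Finset.sum_le_sum hb
    rw [Finset.sum_add_distrib, Finset.sum_add_distrib] at hsum
    rw [if_neg hlt] at hY2
    rw [if_pos hai] at hY1
    omega
  refine ⟨claim1, ?_⟩
  intro j0 hij0 hj0a hmid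
  have hfle : ∀ j ∈ M, (if u j < u i then (1:ℕ) else 0) + (if u a < u j then 1 else 0)
      ≤ (if u i < u j then (1:ℕ) else 0) + (if u j < u a then 1 else 0) := by
    intro j hj
    simp only [hMdef, Finset.mem_filter, Finset.mem_univ, true_and] at hj
    have h1 : u j ≠ u i := fun h => (ne_of_gt hj.1) (u.injective h)
    rcases lt_or_gt_of_ne h1 with hji | hij'
    · have hna : ¬ u a < u j := fun h => (asymm claim1) (h.trans hji)
      rw [if_pos hji, if_neg hna, if_pos (hji.trans claim1)]
      split_ifs <;> omega
    · rw [if_neg (asymm hij'), if_pos hij']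
      split_ifs <;> omega
  have hstrict : (if u j0 < u i then (1:ℕ) else 0) + (if u a < u j0 then 1 else 0)
      < (if u i < u j0 then (1:ℕ) else 0) + (if u j0 < u a then 1 else 0) := by
    rw [if_neg (asymm hmid.1), if_neg (asymm hmid.2), if_pos hmid.1, if_pos hmid.2]
    omega
  have hj0M : j0 ∈ M := by
    simp only [hMdef, Finset.mem_filter, Finset.mem_univ, true_and]
    exact ⟨hij0, hj0a⟩
  have hlt2 := Finset.sum_lt_sum hfle ⟨j0, hj0M, hstrict⟩
  rw [Finset.sum_add_distrib, Finset.sum_add_distrib] at hlt2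
  rw [if_pos claim1] at hY2
  rw [if_neg (asymm claim1)] at hY1
  omega


lemma chain_sum' (k : ℕ) (P Q : ℕ → Prop) [DecidablePred P] [DecidablePred Q]
    (hP : ∀ m m', m ≤ m' → P m' → P m) (hQ : ∀ m m', m ≤ m' → Q m → Q m')
    (E : Prop) [Decidable E] (hE : E ↔ ∃ m, m < k+1 ∧ P m ∧ Q m) :
    ∑ m ∈ Finset.range (k+1), (if P m ∧ Q m then 1 else 0)
      = (∑ ℓ ∈ Finset.range k, if P (ℓ+1) ∧ Q ℓ then 1 else 0)
        + (if E then 1 else 0) := by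
  rw [if_congr hE rfl rfl]
  exact chain_sum k P Q hP hQ

/-- The join lemma: with `U = {i 0 < i 1 < ⋯ < i k} ⊆ [a−1]` a nonempty set such that
each `v·t_{iℓ,a}` is a Bruhat cover of `v`, the permutation `w_U = v·(a i_k ⋯ i_1)`
(characterized by its values) satisfies
`rk_{w_U}(c,d) = min {rk_{v·t_{iℓ,a}}(c,d)}` for all `c,d`; i.e. `w_U` is the
join of the `v·t_{iℓ,a}` in the ASM lattice. -/
theorem stmt_8 (n k : ℕ) (v : Equiv.Perm (Fin n)) (a : Fin n)
    (i : Fin (k + 1) → Fin n) (hmono : StrictMono i)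
    (hia : ∀ ℓ, i ℓ < a)
    (hcov : ∀ ℓ, bruhatLE v (v * Equiv.swap (i ℓ) a) ∧
      v * Equiv.swap (i ℓ) a ≠ v ∧ len (v * Equiv.swap (i ℓ) a) = len v + 1)
    (wU : Equiv.Perm (Fin n))
    (hwa : wU a = v (i (Fin.last k)))
    (hw0 : wU (i 0) = v a)
    (hws : ∀ ℓ : Fin k, wU (i ℓ.succ) = v (i ℓ.castSucc))
    (hwo : ∀ j : Fin n, j ≠ a → (∀ ℓ, j ≠ i ℓ) → wU j = v j) :
    ∀ c d : Fin n,
      rkIic wU c d =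
        Finset.univ.inf' Finset.univ_nonempty
          (fun ℓ : Fin (k + 1) => rkIic (v * Equiv.swap (i ℓ) a) c d) := by
  intro c d
  have hcv : ∀ ℓ, v (i ℓ) < v a ∧ ∀ j, i ℓ < j → j < a → ¬(v (i ℓ) < v j ∧ v j < v a) :=
    fun ℓ => len_cover v (i ℓ) a (hia ℓ) ((hcov ℓ).2.2)
  have hvb : ∀ ℓ, v (i ℓ) < v a := fun ℓ => (hcv ℓ).1
  have hdec : ∀ ℓ ℓ' : Fin (k+1), ℓ < ℓ' → v (i ℓ') < v (i ℓ) := by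
    intro ℓ ℓ' h
    have hne : v (i ℓ') ≠ v (i ℓ) := fun he => (ne_of_gt (hmono h)) (v.injective he)
    rcases lt_or_gt_of_ne hne with h1 | h1
    · exact h1
    · exact absurd ⟨h1, hvb ℓ'⟩ ((hcv ℓ).2 (i ℓ') (hmono h) (hia ℓ'))
  have hione : ∀ ℓ ℓ' : Fin (k+1), ℓ ≤ ℓ' → v (i ℓ') ≤ v (i ℓ) := by
    intro ℓ ℓ' h
    rcases eq_or_lt_of_le h with rfl | h
    · exact le_refl _
    · exact le_of_lt (hdec _ _ h)
  have hiane : ∀ ℓ, i ℓ ≠ a := fun ℓ => ne_of_lt (hia ℓ)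
  -- the swap rank equation
  have hswaprk : ∀ ℓ : Fin (k+1),
      rkIic (v * Equiv.swap (i ℓ) a) c d
        + ((if i ℓ ≤ c ∧ v (i ℓ) ≤ d then 1 else 0) + (if a ≤ c ∧ v a ≤ d then 1 else 0))
      = rkIic v c d
        + ((if i ℓ ≤ c ∧ v a ≤ d then 1 else 0) + (if a ≤ c ∧ v (i ℓ) ≤ d then 1 else 0)) := by
    intro ℓ
    have hgi := gi (fun p => p ≤ c ∧ v (Equiv.swap (i ℓ) a p) ≤ d)
      (fun p => p ≤ c ∧ v p ≤ d) (insert (i ℓ) ({a} : Finset (Fin n)))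
      (by
        intro q hq
        simp only [Finset.mem_insert, Finset.mem_singleton, not_or] at hq
        show q ≤ c ∧ v (Equiv.swap (i ℓ) a q) ≤ d ↔ q ≤ c ∧ v q ≤ d
        rw [Equiv.swap_apply_of_ne_of_ne hq.1 hq.2])
    rw [Finset.sum_insert (by simp [hiane ℓ]), Finset.sum_singleton,
        Finset.sum_insert (by simp [hiane ℓ]), Finset.sum_singleton] at hgi
    simp only [Equiv.swap_apply_left, Equiv.swap_apply_right] at hgi
    simp only [rkIic, Equiv.Perm.mul_apply]
    exact hgi
  -- the wU rank equation
  have hanotmem : a ∉ Finset.univ.image i := by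
    simp only [Finset.mem_image, not_exists]
    intro ℓ
    rintro ⟨-, h⟩
    exact hiane ℓ h
  have hwrk :
      rkIic wU c d + ((if a ≤ c ∧ v a ≤ d then 1 else 0)
          + ∑ m : Fin (k+1), (if i m ≤ c ∧ v (i m) ≤ d then 1 else 0))
      = rkIic v c d + ((if a ≤ c ∧ v (i (Fin.last k)) ≤ d then 1 else 0)
          + ∑ m : Fin (k+1), (if i m ≤ c ∧ wU (i m) ≤ d then 1 else 0)) := by
    have hgi := gi (fun p => p ≤ c ∧ wU p ≤ d) (fun p => p ≤ c ∧ v p ≤ d)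
      (insert a (Finset.univ.image i))
      (by
        intro q hq
        rw [Finset.mem_insert] at hq
        push_neg at hq
        have h2 : ∀ ℓ, q ≠ i ℓ := by
          intro ℓ he
          exact hq.2 (he ▸ Finset.mem_image_of_mem i (Finset.mem_univ ℓ))
        show q ≤ c ∧ wU q ≤ d ↔ q ≤ c ∧ v q ≤ d
        rw [hwo q hq.1 h2])
    rw [Finset.sum_insert hanotmem, Finset.sum_insert hanotmem,
      Finset.sum_image (fun x _ y _ h => hmono.injective h),
      Finset.sum_image (fun x _ y _ h => hmono.injective h)] at hgi
    simp only [hwa] at hgi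
    simp only [rkIic]
    exact hgi
  by_cases hac : a ≤ c
  · -- Case A : a ≤ c
    have hic : ∀ m : Fin (k+1), i m ≤ c := fun m => le_of_lt (lt_of_lt_of_le (hia m) hac)
    have h1 : ∀ ℓ : Fin (k+1), rkIic (v * Equiv.swap (i ℓ) a) c d = rkIic v c d := by
      intro ℓ
      have h := hswaprk ℓ
      simp only [hic ℓ, hac, true_and] at h
      omega
    have h2 : rkIic wU c d = rkIic v c d := by
      have h := hwrk
      simp only [hic, hac, true_and] at h
      rw [Fin.sum_univ_succ (f := fun m : Fin (k+1) => if wU (i m) ≤ d then (1:ℕ) else 0),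
        Fin.sum_univ_castSucc (f := fun m : Fin (k+1) => if v (i m) ≤ d then (1:ℕ) else 0)] at h
      simp only [hw0, hws] at h
      omega
    rw [h2, show (fun ℓ : Fin (k+1) => rkIic (v * Equiv.swap (i ℓ) a) c d)
        = (fun _ : Fin (k+1) => rkIic v c d) from funext h1, Finset.inf'_const]
  · by_cases hbd : v a ≤ d
    · -- Case B : c < a, v a ≤ d
      have hvd : ∀ m : Fin (k+1), v (i m) ≤ d := fun m => le_trans (le_of_lt (hvb m)) hbd
      have hwud : ∀ m : Fin (k+1), wU (i m) ≤ d := by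
        intro m
        induction m using Fin.cases with
        | zero => rw [hw0]; exact hbd
        | succ ℓ => rw [hws ℓ]; exact hvd _
      have h1 : ∀ ℓ : Fin (k+1), rkIic (v * Equiv.swap (i ℓ) a) c d = rkIic v c d := by
        intro ℓ
        have h := hswaprk ℓ
        simp only [hac, false_and, if_false, hvd, hbd, and_true] at h
        omega
      have h2 : rkIic wU c d = rkIic v c d := by
        have h := hwrk
        simp only [hac, false_and, if_false, hvd, hwud, hbd, and_true, zero_add] at h
        omega
      rw [h2, show (fun ℓ : Fin (k+1) => rkIic (v * Equiv.swap (i ℓ) a) c d)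
          = (fun _ : Fin (k+1) => rkIic v c d) from funext h1, Finset.inf'_const]
    · -- Case C : c < a, d < v a
      have hsw : ∀ ℓ : Fin (k+1), rkIic (v * Equiv.swap (i ℓ) a) c d
          + (if i ℓ ≤ c ∧ v (i ℓ) ≤ d then 1 else 0) = rkIic v c d := by
        intro ℓ
        have h := hswaprk ℓ
        simp only [hac, hbd, and_false, false_and, if_false, add_zero, zero_add] at h
        omega
      -- chain sum machinery
      have hminlt : ∀ m : ℕ, min m k < k + 1 := fun m => Nat.lt_succ_of_le (min_le_right m k)
      have hP : ∀ m m', m ≤ m' → (i ⟨min m' k, hminlt m'⟩ ≤ c) → (i ⟨min m k, hminlt m⟩ ≤ c) := by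
        intro m m' hmm h
        have hle : (⟨min m k, hminlt m⟩ : Fin (k+1)) ≤ ⟨min m' k, hminlt m'⟩ := by
          simp only [Fin.mk_le_mk]
          exact min_le_min hmm (le_refl k)
        exact le_trans (hmono.monotone hle) h
      have hQ : ∀ m m', m ≤ m' → (v (i ⟨min m k, hminlt m⟩) ≤ d)
          → (v (i ⟨min m' k, hminlt m'⟩) ≤ d) := by
        intro m m' hmm h
        have hle : (⟨min m k, hminlt m⟩ : Fin (k+1)) ≤ ⟨min m' k, hminlt m'⟩ := by
          simp only [Fin.mk_le_mk]
          exact min_le_min hmm (le_refl k)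
        exact le_trans (hione _ _ hle) h
      have hfin : ∀ m : Fin (k+1), (⟨min (↑m) k, hminlt ↑m⟩ : Fin (k+1)) = m := fun m =>
        Fin.ext (Nat.min_eq_left (Nat.lt_succ_iff.mp m.isLt))
      have hGsum : ∑ m : Fin (k+1), (if i m ≤ c ∧ v (i m) ≤ d then (1:ℕ) else 0)
          = ∑ m ∈ Finset.range (k+1),
              (if i ⟨min m k, hminlt m⟩ ≤ c ∧ v (i ⟨min m k, hminlt m⟩) ≤ d then 1 else 0) := by
        rw [← Fin.sum_univ_eq_sum_range
          (fun m => if i ⟨min m k, hminlt m⟩ ≤ c ∧ v (i ⟨min m k, hminlt m⟩) ≤ d then (1:ℕ) else 0)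
          (k+1)]
        refine Finset.sum_congr rfl (fun m _ => ?_)
        rw [hfin m]
      have hHsum : ∑ ℓ : Fin k, (if i ℓ.succ ≤ c ∧ v (i ℓ.castSucc) ≤ d then (1:ℕ) else 0)
          = ∑ ℓ ∈ Finset.range k,
              (if i ⟨min (ℓ+1) k, hminlt (ℓ+1)⟩ ≤ c ∧ v (i ⟨min ℓ k, hminlt ℓ⟩) ≤ d
                then 1 else 0) := by
        rw [← Fin.sum_univ_eq_sum_range
          (fun ℓ => if i ⟨min (ℓ+1) k, hminlt (ℓ+1)⟩ ≤ c ∧ v (i ⟨min ℓ k, hminlt ℓ⟩) ≤ d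
            then (1:ℕ) else 0) k]
        refine Finset.sum_congr rfl (fun ℓ _ => ?_)
        have e1 : (⟨min (↑ℓ+1) k, hminlt (↑ℓ+1)⟩ : Fin (k+1)) = ℓ.succ :=
          Fin.ext (by simp [Nat.min_eq_left (Nat.succ_le_of_lt ℓ.isLt)])
        have e2 : (⟨min (↑ℓ) k, hminlt ↑ℓ⟩ : Fin (k+1)) = ℓ.castSucc :=
          Fin.ext (by simp [Nat.min_eq_left (le_of_lt ℓ.isLt)])
        rw [e1, e2]
      have hEx : (∃ m : Fin (k+1), i m ≤ c ∧ v (i m) ≤ d)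
          ↔ (∃ m, m < k+1 ∧ (i ⟨min m k, hminlt m⟩ ≤ c ∧ v (i ⟨min m k, hminlt m⟩) ≤ d)) := by
        constructor
        · rintro ⟨m, h1, h2⟩
          refine ⟨↑m, m.isLt, ?_, ?_⟩
          · rw [hfin m]; exact h1
          · rw [hfin m]; exact h2
        · rintro ⟨m, hm, h1, h2⟩
          have he : (⟨min m k, hminlt m⟩ : Fin (k+1)) = ⟨m, hm⟩ :=
            Fin.ext (Nat.min_eq_left (Nat.lt_succ_iff.mp hm))
          rw [he] at h1 h2
          exact ⟨⟨m, hm⟩, h1, h2⟩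
      have hkey : ∑ m : Fin (k+1), (if i m ≤ c ∧ v (i m) ≤ d then (1:ℕ) else 0)
          = (∑ ℓ : Fin k, (if i ℓ.succ ≤ c ∧ v (i ℓ.castSucc) ≤ d then (1:ℕ) else 0))
            + (if ∃ m : Fin (k+1), i m ≤ c ∧ v (i m) ≤ d then 1 else 0) := by
        rw [hGsum, hHsum]
        exact chain_sum' k _ _ hP hQ _ hEx
      have hw : rkIic wU c d
          + (if ∃ m : Fin (k+1), i m ≤ c ∧ v (i m) ≤ d then 1 else 0) = rkIic v c d := by
        have h := hwrk
        rw [Fin.sum_univ_succ (f := fun m : Fin (k+1) =>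
            if i m ≤ c ∧ wU (i m) ≤ d then (1:ℕ) else 0)] at h
        simp only [hw0, hws, hac, hbd, and_false, false_and, if_false, add_zero, zero_add] at h
        omega
      apply le_antisymm
      · apply Finset.le_inf'
        intro ℓ _
        have h := hsw ℓ
        by_cases hG : i ℓ ≤ c ∧ v (i ℓ) ≤ d
        · have he : ∃ m : Fin (k+1), i m ≤ c ∧ v (i m) ≤ d := ⟨ℓ, hG⟩
          rw [if_pos hG] at h
          rw [if_pos he] at hw
          omega
        · rw [if_neg hG] at h
          omega
      · by_cases hex : ∃ m : Fin (k+1), i m ≤ c ∧ v (i m) ≤ d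
        · obtain ⟨m, hm⟩ := hex
          have h := hsw m
          rw [if_pos hm] at h
          rw [if_pos (⟨m, hm⟩ : ∃ m : Fin (k+1), i m ≤ c ∧ v (i m) ≤ d)] at hw
          refine le_trans (Finset.inf'_le _ (Finset.mem_univ m)) ?_
          omega
        · rw [if_neg hex] at hw
          have h := hsw 0
          rw [if_neg (fun hG => hex ⟨0, hG⟩)] at h
          refine le_trans (Finset.inf'_le _ (Finset.mem_univ 0)) ?_
          omega
end

section
/- Under the same hypotheses as the join lemma (v ∈ S_n, (a,b) with v(a)=b, nonempty U = {i_1 < ... < i_k} ⊆ [a−1] with each v·t_{i,a} a Bruhat cover of v with v(i_1) > v(i_2) > ... > v(i_k), and all v(i) < b), the permutation w_U = v·(a i_k ... i_1) has Coxeter length ℓ(w_U) = ℓ(v) + 1 + (#U − 1) = ℓ(v) + #U. -/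
lemma len_mul_swap {n : ℕ} (u : Equiv.Perm (Fin n)) (i a : Fin n) (hia : i < a)
    (hv : u i < u a)
    (hcov : ∀ m : Fin n, i < m → m < a → ¬(u i < u m ∧ u m < u a)) :
    len (u * Equiv.swap i a) = len u + 1 := by
  classical
  set σ := Equiv.swap i a with hσ
  have hne : i ≠ a := ne_of_lt hia
  have hσi : σ i = a := Equiv.swap_apply_left i a
  have hσa : σ a = i := Equiv.swap_apply_right i a
  have hσo : ∀ x : Fin n, x ≠ i → x ≠ a → σ x = x :=
    fun x h1 h2 => Equiv.swap_apply_of_ne_of_ne h1 h2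
  have hm : ∀ x, (u * σ) x = u (σ x) := fun x => rfl
  set S : Finset (Fin n × Fin n) :=
    Finset.univ.filter (fun p : Fin n × Fin n => p.1 < p.2 ∧ u p.2 < u p.1) with hS
  set S' : Finset (Fin n × Fin n) :=
    Finset.univ.filter (fun p : Fin n × Fin n => p.1 < p.2 ∧ (u * σ) p.2 < (u * σ) p.1) with hS'
  have hia' : ((i, a) : Fin n × Fin n) ∈ S' := by
    refine Finset.mem_filter.2 ⟨Finset.mem_univ _, hia, ?_⟩
    rw [hm, hm]
    show u (σ a) < u (σ i)
    rw [hσi, hσa]; exact hv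
  have hclass : ∀ p q : Fin n, p < q → σ q < σ p →
      (p = i ∧ q = a) ∨ (p = i ∧ i < q ∧ q < a) ∨ (q = a ∧ i < p ∧ p < a) := by
    intro p q hpq hrev
    by_cases hp : p = i
    · by_cases hq : q = a
      · exact Or.inl ⟨hp, hq⟩
      · have hpq' : i < q := by rw [hp] at hpq; exact hpq
        rw [hp, hσi, hσo q (ne_of_gt hpq') hq] at hrev
        exact Or.inr (Or.inl ⟨hp, hpq', hrev⟩)
    · by_cases hq : q = a
      · have hpq' : p < a := by rw [hq] at hpq; exact hpq
        rw [hq, hσa, hσo p hp (ne_of_lt hpq')] at hrev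
        exact Or.inr (Or.inr ⟨hq, hrev, hpq'⟩)
      · exfalso
        by_cases hpa : p = a
        · have hq' : a < q := by rw [hpa] at hpq; exact hpq
          rw [hpa, hσa, hσo q (ne_of_gt (lt_trans hia hq')) hq] at hrev
          exact absurd (lt_trans hia hq') (not_lt.2 (le_of_lt hrev))
        · by_cases hqi : q = i
          · have hq' : p < i := by rw [hqi] at hpq; exact hpq
            rw [hqi, hσi, hσo p hp hpa] at hrev
            exact absurd (lt_trans hq' hia) (not_lt.2 (le_of_lt hrev))
          · rw [hσo p hp hpa, hσo q hqi hq] at hrev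
            exact absurd hpq (not_lt.2 (le_of_lt hrev))
  have key : (S'.erase (i, a)).card = S.card := by
    apply Finset.card_nbij'
      (i := fun p : Fin n × Fin n => if σ p.1 < σ p.2 then (σ p.1, σ p.2) else p)
      (j := fun p : Fin n × Fin n => if σ p.1 < σ p.2 then (σ p.1, σ p.2) else p)
    · -- maps erase S' into S
      intro p hp
      obtain ⟨hne', hp⟩ := Finset.mem_erase.1 hp
      obtain ⟨-, hlt, hinv⟩ := Finset.mem_filter.1 hp
      rw [hm, hm] at hinv
      by_cases h : σ p.1 < σ p.2
      · beta_reduce; rw [if_pos h]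
        exact Finset.mem_filter.2 ⟨Finset.mem_univ _, h, hinv⟩
      · have hσne : σ p.1 ≠ σ p.2 := fun h' => (ne_of_lt hlt) (σ.injective h')
        have hrev : σ p.2 < σ p.1 := lt_of_le_of_ne (not_lt.1 h) (Ne.symm hσne)
        beta_reduce; rw [if_neg h]
        refine Finset.mem_filter.2 ⟨Finset.mem_univ _, hlt, ?_⟩
        rcases hclass p.1 p.2 hlt hrev with ⟨h1, h2⟩ | ⟨h1, h2, h3⟩ | ⟨h1, h2, h3⟩
        · exact absurd (Prod.ext h1 h2) hne'
        · rw [h1, hσi, hσo p.2 (ne_of_gt h2) (ne_of_lt h3)] at hinv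
          rw [h1]
          rcases lt_or_ge (u p.2) (u i) with h' | h'
          · exact h'
          · exfalso
            have hlt' : u i < u p.2 := lt_of_le_of_ne h'
              (fun h'' => (ne_of_gt h2) (u.injective h''.symm))
            exact hcov p.2 h2 h3 ⟨hlt', hinv⟩
        · rw [h1, hσa, hσo p.1 (ne_of_gt h2) (ne_of_lt h3)] at hinv
          rw [h1]
          rcases lt_or_ge (u a) (u p.1) with h' | h'
          · exact h'
          · exfalso
            have hlt' : u p.1 < u a := lt_of_le_of_ne h'
              (fun h'' => (ne_of_lt h3) (u.injective h''))
            exact hcov p.1 h2 h3 ⟨hinv, hlt'⟩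
    · -- maps S into erase S'
      intro p hp
      obtain ⟨-, hlt, hinv⟩ := Finset.mem_filter.1 hp
      by_cases h : σ p.1 < σ p.2
      · beta_reduce; rw [if_pos h]
        refine Finset.mem_erase.2 ⟨?_, ?_⟩
        · intro h'
          have h1 : σ p.1 = i := congrArg Prod.fst h'
          have h2 : σ p.2 = a := congrArg Prod.snd h'
          have ha1 : p.1 = a := σ.injective (by rw [h1, hσa])
          have hi2 : p.2 = i := σ.injective (by rw [h2, hσi])
          rw [ha1, hi2] at hlt
          exact absurd (lt_trans hia hlt) (lt_irrefl i)
        · refine Finset.mem_filter.2 ⟨Finset.mem_univ _, h, ?_⟩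
          rw [hm, hm, Equiv.swap_apply_self, Equiv.swap_apply_self]
          exact hinv
      · have hσne : σ p.1 ≠ σ p.2 := fun h' => (ne_of_lt hlt) (σ.injective h')
        have hrev : σ p.2 < σ p.1 := lt_of_le_of_ne (not_lt.1 h) (Ne.symm hσne)
        beta_reduce; rw [if_neg h]
        rcases hclass p.1 p.2 hlt hrev with ⟨h1, h2⟩ | ⟨h1, h2, h3⟩ | ⟨h1, h2, h3⟩
        · exfalso; rw [h1, h2] at hinv; exact absurd hv (not_lt.2 (le_of_lt hinv))
        · refine Finset.mem_erase.2 ⟨fun h' => (ne_of_lt h3) (congrArg Prod.snd h'), ?_⟩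
          refine Finset.mem_filter.2 ⟨Finset.mem_univ _, hlt, ?_⟩
          rw [hm, hm, h1, hσi, hσo p.2 (ne_of_gt h2) (ne_of_lt h3)]
          rw [h1] at hinv
          exact lt_trans hinv hv
        · refine Finset.mem_erase.2 ⟨fun h' => (ne_of_gt h2) (congrArg Prod.fst h'), ?_⟩
          refine Finset.mem_filter.2 ⟨Finset.mem_univ _, hlt, ?_⟩
          rw [hm, hm, h1, hσa, hσo p.1 (ne_of_gt h2) (ne_of_lt h3)]
          rw [h1] at hinv
          exact lt_trans hv hinv
    · -- left inverse
      intro p hp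
      obtain ⟨-, hp⟩ := Finset.mem_erase.1 hp
      obtain ⟨-, hlt, -⟩ := Finset.mem_filter.1 hp
      by_cases h : σ p.1 < σ p.2
      · beta_reduce; rw [if_pos h]
        have h2 : σ (σ p.1) < σ (σ p.2) := by
          rw [Equiv.swap_apply_self, Equiv.swap_apply_self]; exact hlt
        rw [if_pos h2]
        exact Prod.ext (Equiv.swap_apply_self _ _ _) (Equiv.swap_apply_self _ _ _)
      · beta_reduce; rw [if_neg h, if_neg h]
    · -- right inverse
      intro p hp
      obtain ⟨-, hlt, -⟩ := Finset.mem_filter.1 hp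
      by_cases h : σ p.1 < σ p.2
      · beta_reduce; rw [if_pos h]
        have h2 : σ (σ p.1) < σ (σ p.2) := by
          rw [Equiv.swap_apply_self, Equiv.swap_apply_self]; exact hlt
        rw [if_pos h2]
        exact Prod.ext (Equiv.swap_apply_self _ _ _) (Equiv.swap_apply_self _ _ _)
      · beta_reduce; rw [if_neg h, if_neg h]
  have hcard : S'.card = (S'.erase (i, a)).card + 1 := by
    rw [Finset.card_erase_of_mem hia']
    have hpos : 0 < S'.card := Finset.card_pos.2 ⟨_, hia'⟩
    omega
  show S'.card = S.card + 1
  rw [hcard, key]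

lemma main_ind {n : ℕ} : ∀ (k : ℕ) (v : Equiv.Perm (Fin n)) (a : Fin n)
    (i : Fin (k + 1) → Fin n), StrictMono i → (∀ ℓ, i ℓ < a) →
    (∀ ℓ ℓ' : Fin (k + 1), ℓ < ℓ' → v (i ℓ') < v (i ℓ)) → (∀ ℓ, v (i ℓ) < v a) →
    (∀ ℓ, ∀ m : Fin n, i ℓ < m → m < a → ¬(v (i ℓ) < v m ∧ v m < v a)) →
    ∀ wU : Equiv.Perm (Fin n), wU a = v (i (Fin.last k)) → wU (i 0) = v a →
    (∀ ℓ : Fin k, wU (i ℓ.succ) = v (i ℓ.castSucc)) →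
    (∀ j : Fin n, j ≠ a → (∀ ℓ, j ≠ i ℓ) → wU j = v j) →
    len wU = len v + (k + 1) := by
  intro k
  induction k with
  | zero =>
    intro v a i hmono hia hanti hb hcov wU hwa hw0 hws hwo
    have hwU : wU = v * Equiv.swap (i 0) a := by
      refine Equiv.ext fun x => ?_
      show wU x = v (Equiv.swap (i 0) a x)
      by_cases hx0 : x = i 0
      · rw [hx0, Equiv.swap_apply_left]
        exact hw0
      · by_cases hxa : x = a
        · have h00 : Fin.last 0 = (0 : Fin 1) := Fin.eq_zero _
          rw [hxa, Equiv.swap_apply_right, hwa, h00]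
        · rw [Equiv.swap_apply_of_ne_of_ne hx0 hxa]
          exact hwo x hxa (fun ℓ => by rw [Fin.eq_zero ℓ]; exact hx0)
    rw [hwU]
    exact len_mul_swap v (i 0) a (hia 0) (hb 0) (fun m h1 h2 => hcov 0 m h1 h2)
  | succ k ih =>
    intro v a i hmono hia hanti hb hcov wU hwa hw0 hws hwo
    set L : Fin (k + 2) := Fin.last (k + 1) with hL
    set t : Fin n := i L with ht
    have hta : t < a := hia L
    set w' : Equiv.Perm (Fin n) := wU * Equiv.swap t a with hw'
    have hw'x : ∀ x, w' x = wU (Equiv.swap t a x) := fun _ => rfl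
    have hsL : (Fin.last k).succ = L := Fin.succ_last k
    have hw'a : w' a = v (i ((Fin.last k).castSucc)) := by
      rw [hw'x, Equiv.swap_apply_right, ht, ← hsL]
      exact hws (Fin.last k)
    have hw't : w' t = v t := by
      rw [hw'x, Equiv.swap_apply_left]
      exact hwa
    have hfix : ∀ x : Fin n, x ≠ t → x ≠ a → w' x = wU x := by
      intro x h1 h2
      rw [hw'x, Equiv.swap_apply_of_ne_of_ne h1 h2]
    have hltL : ∀ ℓ : Fin (k + 1), ℓ.castSucc < L := fun ℓ => Fin.castSucc_lt_last ℓ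
    have hlen' : len w' = len v + (k + 1) := by
      apply ih v a (fun ℓ => i ℓ.castSucc)
        (fun ℓ ℓ' h => hmono (Fin.castSucc_lt_castSucc_iff.2 h))
        (fun ℓ => hia _)
        (fun ℓ ℓ' h => hanti _ _ (Fin.castSucc_lt_castSucc_iff.2 h))
        (fun ℓ => hb _)
        (fun ℓ m h1 h2 => hcov _ m h1 h2)
        w'
      · exact hw'a
      · show w' (i ((0 : Fin (k + 1)).castSucc)) = v a
        rw [Fin.castSucc_zero]
        have h0L : (0 : Fin (k + 2)) < L := by
          simp [hL, Fin.lt_def]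
        rw [hfix (i 0) (ne_of_lt (hmono h0L)) (ne_of_lt (hia 0))]
        exact hw0
      · intro ℓ
        show w' (i (ℓ.succ.castSucc)) = v (i (ℓ.castSucc.castSucc))
        rw [hfix (i ℓ.succ.castSucc) (ne_of_lt (hmono (hltL ℓ.succ))) (ne_of_lt (hia _))]
        rw [← Fin.succ_castSucc]
        exact hws ℓ.castSucc
      · intro j hja hji
        by_cases hjt : j = t
        · rw [hjt]
          exact hw't
        · rw [hfix j hjt hja]
          apply hwo j hja
          intro ℓ
          refine Fin.lastCases ?_ ?_ ℓ
          · rw [← hL, ← ht]; exact hjt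
          · intro m; exact hji m
    have hwU : wU = w' * Equiv.swap t a := by
      rw [hw', mul_assoc, Equiv.swap_mul_self, mul_one]
    have hva : v (i ((Fin.last k).castSucc)) < v a := hb _
    have hv' : w' t < w' a := by
      rw [hw't, hw'a]
      exact hanti _ _ (hltL (Fin.last k))
    have hcov' : ∀ m : Fin n, t < m → m < a → ¬(w' t < w' m ∧ w' m < w' a) := by
      intro m h1 h2
      have hmt : m ≠ t := ne_of_gt h1
      have hma : m ≠ a := ne_of_lt h2
      have hmi : ∀ ℓ : Fin (k + 2), m ≠ i ℓ := by
        intro ℓ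
        have : i ℓ ≤ t := by
          rw [ht]
          exact hmono.monotone (Fin.le_last ℓ)
        exact ne_of_gt (lt_of_le_of_lt this h1)
      have hmv : w' m = v m := by
        rw [hfix m hmt hma]
        exact hwo m hma hmi
      rw [hmv, hw't, hw'a]
      intro ⟨hc1, hc2⟩
      exact hcov L m h1 h2 ⟨hc1, lt_trans hc2 hva⟩
    rw [hwU, len_mul_swap w' t a hta hv' hcov', hlen']
    omega

/-- Under the hypotheses of the join lemma (`U = {i 0 < ⋯ < i k} ⊆ [a−1]` nonempty,
`v(i 0) > v(i 1) > ⋯ > v(i k)`, each `v(iℓ) < v(a)`, and each `v·t_{iℓ,a}` a Bruhat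
cover of `v`, i.e. no `m` with `iℓ < m < a` and `v(iℓ) < v(m) < v(a)`), the
permutation `w_U = v·(a i_k ⋯ i_1)` has length `ℓ(w_U) = ℓ(v) + #U`. -/
theorem stmt_9 (n k : ℕ) (v : Equiv.Perm (Fin n)) (a : Fin n)
    (i : Fin (k + 1) → Fin n) (hmono : StrictMono i)
    (hia : ∀ ℓ, i ℓ < a)
    (hanti : ∀ ℓ ℓ' : Fin (k + 1), ℓ < ℓ' → v (i ℓ') < v (i ℓ))
    (hb : ∀ ℓ, v (i ℓ) < v a)
    (hcov : ∀ ℓ, ∀ m : Fin n, i ℓ < m → m < a → ¬(v (i ℓ) < v m ∧ v m < v a))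
    (wU : Equiv.Perm (Fin n))
    (hwa : wU a = v (i (Fin.last k)))
    (hw0 : wU (i 0) = v a)
    (hws : ∀ ℓ : Fin k, wU (i ℓ.succ) = v (i ℓ.castSucc))
    (hwo : ∀ j : Fin n, j ≠ a → (∀ ℓ, j ≠ i ℓ) → wU j = v j) :
    len wU = len v + (k + 1) := by
  exact main_ind k v a i hmono hia hanti hb hcov wU hwa hw0 hws hwo
end

section
/- Let w ∈ S_n, let (a,b) be a lower outside corner of D(w) with rk_w(a,b) ≥ 1, let v = w·t_{a,w⁻¹(b)}, and let π be the bigrassmannian permutation with Ess(π) = {(a−1,b−1)} and rk_π(a−1,b−1) = rk_w(a,b) − 1. Then the set Perm(v ∨ π) of minimal permutations above the ASM A = v ∨ π equals Φ(w,(a,b)) = {v·t_{i,a} : i ∈ [a−1], v·t_{i,a} > v, ℓ(v·t_{i,a}) = ℓ(w)}, and min{ℓ(u) : u ∈ Perm(A)} = ℓ(w). -/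
/-- Rank function with natural number arguments (1-indexed):
`rkN u c d = #{i ∈ [c] : u(i) ∈ [d]}`. -/
def rkN {n : ℕ} (u : Equiv.Perm (Fin n)) (c d : ℕ) : ℕ :=
  (Finset.univ.filter (fun i : Fin n => (i : ℕ) < c ∧ (u i : ℕ) < d)).card

/-- The Bruhat/ASM order via rank functions: `u ≤ u'` iff `rk_{u'} ≤ rk_u` entrywise. -/
def permLE {n : ℕ} (u u' : Equiv.Perm (Fin n)) : Prop :=
  ∀ c d : ℕ, rkN u' c d ≤ rkN u c d

/-- Permutations weakly above the join `v ∨ π` in the ASM lattice. -/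
def aboveJoin {n : ℕ} (v π u : Equiv.Perm (Fin n)) : Prop :=
  permLE v u ∧ permLE π u

/-- `Perm(v ∨ π)`: the minimal permutations above the ASM `v ∨ π`. -/
def PermOfJoin {n : ℕ} (v π : Equiv.Perm (Fin n)) : Set (Equiv.Perm (Fin n)) :=
  {u | aboveJoin v π u ∧ ∀ u', aboveJoin v π u' → permLE u' u → u' = u}


open Finset

variable {n : ℕ}

lemma rkN_eq_sum (u : Equiv.Perm (Fin n)) (c d : ℕ) :
    rkN u c d = ∑ k : Fin n, (if (k : ℕ) < c ∧ (u k : ℕ) < d then 1 else 0) :=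
  Finset.card_filter _ _

lemma rkN_zero_left (u : Equiv.Perm (Fin n)) (d : ℕ) : rkN u 0 d = 0 := by
  simp [rkN_eq_sum]

lemma rkN_zero_right (u : Equiv.Perm (Fin n)) (c : ℕ) : rkN u c 0 = 0 := by
  simp [rkN_eq_sum]

lemma rkN_mono_left (u : Equiv.Perm (Fin n)) {c c' : ℕ} (h : c ≤ c') (d : ℕ) :
    rkN u c d ≤ rkN u c' d := by
  simp only [rkN_eq_sum]
  apply Finset.sum_le_sum
  intro k _
  split_ifs <;> omega

lemma rkN_mono_right (u : Equiv.Perm (Fin n)) (c : ℕ) {d d' : ℕ} (h : d ≤ d') :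
    rkN u c d ≤ rkN u c d' := by
  simp only [rkN_eq_sum]
  apply Finset.sum_le_sum
  intro k _
  split_ifs <;> omega

lemma rkN_succ_left (u : Equiv.Perm (Fin n)) {c : ℕ} (hc : c < n) (d : ℕ) :
    rkN u (c + 1) d = rkN u c d + (if (u ⟨c, hc⟩ : ℕ) < d then 1 else 0) := by
  have h2 : (if (u ⟨c, hc⟩ : ℕ) < d then 1 else 0)
      = ∑ k : Fin n, (if k = ⟨c, hc⟩ then (if (u k : ℕ) < d then 1 else 0) else 0) := by
    rw [Finset.sum_ite_eq' univ (⟨c, hc⟩ : Fin n)]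
    simp
  rw [rkN_eq_sum, rkN_eq_sum, h2, ← Finset.sum_add_distrib]
  apply Finset.sum_congr rfl
  intro k _
  have hk : k = ⟨c, hc⟩ ↔ (k : ℕ) = c := by
    constructor
    · intro h; rw [h]
    · intro h; exact Fin.ext h
  by_cases hkc : k = (⟨c, hc⟩ : Fin n)
  · rw [if_pos hkc]
    have : (k : ℕ) = c := hk.1 hkc
    subst hkc
    split_ifs <;> omega
  · rw [if_neg hkc]
    have : (k : ℕ) ≠ c := fun h => hkc (hk.2 h)
    split_ifs <;> omega

lemma rkN_succ_right (u : Equiv.Perm (Fin n)) (c : ℕ) {d : ℕ} (hd : d < n) :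
    rkN u c (d + 1) = rkN u c d + (if ((u⁻¹ ⟨d, hd⟩ : Fin n) : ℕ) < c then 1 else 0) := by
  have h2 : (if ((u⁻¹ ⟨d, hd⟩ : Fin n) : ℕ) < c then 1 else 0)
      = ∑ k : Fin n, (if k = u⁻¹ ⟨d, hd⟩ then (if (k : ℕ) < c then 1 else 0) else 0) := by
    rw [Finset.sum_ite_eq' univ (u⁻¹ ⟨d, hd⟩ : Fin n)]
    simp
  rw [rkN_eq_sum, rkN_eq_sum, h2, ← Finset.sum_add_distrib]
  apply Finset.sum_congr rfl
  intro k _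
  have hk : k = u⁻¹ ⟨d, hd⟩ ↔ (u k : ℕ) = d := by
    constructor
    · intro h; rw [h]; simp
    · intro h
      have : u k = ⟨d, hd⟩ := Fin.ext h
      rw [← this]; simp
  by_cases hkc : k = (u⁻¹ ⟨d, hd⟩ : Fin n)
  · rw [if_pos hkc]
    have : (u k : ℕ) = d := hk.1 hkc
    split_ifs <;> omega
  · rw [if_neg hkc]
    have : (u k : ℕ) ≠ d := fun h => hkc (hk.2 h)
    split_ifs <;> omega

lemma rkN_top_left (u : Equiv.Perm (Fin n)) {c : ℕ} (h : n ≤ c) (d : ℕ) :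
    rkN u c d = ∑ k : Fin n, (if (k : ℕ) < d then 1 else 0) := by
  rw [rkN_eq_sum, ← Equiv.sum_comp u (fun j : Fin n => if (j : ℕ) < d then 1 else 0)]
  apply Finset.sum_congr rfl
  intro k _
  have : (k : ℕ) < c := lt_of_lt_of_le k.isLt h
  simp [this]

lemma rkN_eq_of_le_left (u u' : Equiv.Perm (Fin n)) {c : ℕ} (h : n ≤ c) (d : ℕ) :
    rkN u c d = rkN u' c d := by
  rw [rkN_top_left u h, rkN_top_left u' h]

lemma rkN_top_right (u : Equiv.Perm (Fin n)) (c : ℕ) {d : ℕ} (h : n ≤ d) :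
    rkN u c d = ∑ k : Fin n, (if (k : ℕ) < c then 1 else 0) := by
  rw [rkN_eq_sum]
  apply Finset.sum_congr rfl
  intro k _
  have : (u k : ℕ) < d := lt_of_lt_of_le (u k).isLt h
  simp [this]

lemma rkN_eq_of_le_right (u u' : Equiv.Perm (Fin n)) (c : ℕ) {d : ℕ} (h : n ≤ d) :
    rkN u c d = rkN u' c d := by
  rw [rkN_top_right u c h, rkN_top_right u' c h]

lemma rkN_succ_left_le (u : Equiv.Perm (Fin n)) (c d : ℕ) :
    rkN u (c + 1) d ≤ rkN u c d + 1 := by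
  by_cases hc : c < n
  · rw [rkN_succ_left u hc d]
    split_ifs <;> omega
  · push_neg at hc
    rw [rkN_top_left u (le_trans hc (Nat.le_succ c)) d, rkN_top_left u hc d]
    omega

lemma rkN_succ_right_le (u : Equiv.Perm (Fin n)) (c d : ℕ) :
    rkN u c (d + 1) ≤ rkN u c d + 1 := by
  by_cases hd : d < n
  · rw [rkN_succ_right u c hd]
    split_ifs <;> omega
  · push_neg at hd
    rw [rkN_top_right u c (le_trans hd (Nat.le_succ d)), rkN_top_right u c hd]
    omega

lemma perm_eq_of_rkN_eq {x y : Equiv.Perm (Fin n)} (h : ∀ c d, rkN x c d = rkN y c d) :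
    x = y := by
  apply Equiv.ext
  intro i
  have key : ∀ d, ((x i : ℕ) < d ↔ (y i : ℕ) < d) := by
    intro d
    have hx := rkN_succ_left x i.isLt d
    have hy := rkN_succ_left y i.isLt d
    rw [Fin.eta] at hx hy
    rw [h ((i : ℕ)) d, h ((i : ℕ) + 1) d] at hx
    rw [hx] at hy
    have : (if (x i : ℕ) < d then 1 else 0 : ℕ) = (if (y i : ℕ) < d then 1 else 0) := by omega
    split_ifs at this <;> first | (constructor <;> intro _ <;> assumption) | omega
  have h1 := (key ((y i : ℕ) + 1)).2 (by omega)
  have h2 : ¬ ((x i : ℕ) < (x i : ℕ)) := lt_irrefl _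
  have h3 := (key ((x i : ℕ) + 1)).1 (by omega)
  exact Fin.ext (by omega)

lemma sum_split (i j : Fin n) (hij : i ≠ j) (f : Fin n → ℕ) :
    ∑ k : Fin n, f k = f i + f j + ∑ k ∈ (univ.erase i).erase j, f k := by
  have hj : j ∈ univ.erase i := Finset.mem_erase.2 ⟨hij.symm, Finset.mem_univ j⟩
  have h1 := Finset.sum_erase_add (univ.erase i) f hj
  have h2 := Finset.sum_erase_add (univ : Finset (Fin n)) f (Finset.mem_univ i)
  omega

lemma val_ne_of_ne {v : Equiv.Perm (Fin n)} {k i : Fin n} (h : (k : ℕ) ≠ (i : ℕ)) :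
    (v k : ℕ) ≠ (v i : ℕ) := fun hv =>
  h (congrArg Fin.val (v.injective (Fin.val_injective hv)))

lemma rk_swap (v : Equiv.Perm (Fin n)) (i j : Fin n) (hij : (i : ℕ) < (j : ℕ))
    (hv : (v i : ℕ) < (v j : ℕ)) (c d : ℕ) :
    rkN (v * Equiv.swap i j) c d
      + (if (i : ℕ) < c ∧ c ≤ (j : ℕ) ∧ (v i : ℕ) < d ∧ d ≤ (v j : ℕ) then 1 else 0)
      = rkN v c d := by
  have hne : i ≠ j := fun h => by simp [h] at hij
  set s := Equiv.swap i j with hs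
  have happ : ∀ k, (v * s) k = v (s k) := fun k => rfl
  have hstep : rkN (v * s) c d
      = ∑ k : Fin n, (if ((s k : Fin n) : ℕ) < c ∧ (v k : ℕ) < d then 1 else 0) := by
    rw [rkN_eq_sum]
    rw [← Equiv.sum_comp s (fun k : Fin n => if ((s k : Fin n) : ℕ) < c ∧ (v k : ℕ) < d then 1 else 0)]
    apply Finset.sum_congr rfl
    intro k _
    have : s (s k) = k := Equiv.swap_apply_self i j k
    rw [happ k, this]
  have hsum1 : ∑ k : Fin n, (if ((s k : Fin n) : ℕ) < c ∧ (v k : ℕ) < d then 1 else 0)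
      = (if (j : ℕ) < c ∧ (v i : ℕ) < d then 1 else 0)
        + (if (i : ℕ) < c ∧ (v j : ℕ) < d then 1 else 0)
        + ∑ k ∈ (univ.erase i).erase j,
            (if (k : ℕ) < c ∧ (v k : ℕ) < d then 1 else 0) := by
    rw [sum_split i j hne]
    have hsi : s i = j := Equiv.swap_apply_left i j
    have hsj : s j = i := Equiv.swap_apply_right i j
    rw [hsi, hsj]
    congr 1
    apply Finset.sum_congr rfl
    intro k hk
    have hki : k ≠ i := (Finset.mem_erase.1 (Finset.mem_erase.1 hk).2).1
    have hkj : k ≠ j := (Finset.mem_erase.1 hk).1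
    rw [Equiv.swap_apply_of_ne_of_ne hki hkj]
  have hsum2 : rkN v c d
      = (if (i : ℕ) < c ∧ (v i : ℕ) < d then 1 else 0)
        + (if (j : ℕ) < c ∧ (v j : ℕ) < d then 1 else 0)
        + ∑ k ∈ (univ.erase i).erase j,
            (if (k : ℕ) < c ∧ (v k : ℕ) < d then 1 else 0) := by
    rw [rkN_eq_sum, sum_split i j hne]
  rw [hstep, hsum1, hsum2]
  split_ifs <;> omega

lemma rk_swap_le (v : Equiv.Perm (Fin n)) (i j : Fin n) (hij : (i : ℕ) < (j : ℕ))
    (hv : (v i : ℕ) < (v j : ℕ)) (c d : ℕ) :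
    rkN (v * Equiv.swap i j) c d ≤ rkN v c d := by
  have := rk_swap v i j hij hv c d
  omega

lemma card_lt_fin (m : ℕ) (hm : m ≤ n) :
    ∑ y : Fin n, (if (y : ℕ) < m then 1 else 0) = m := by
  rw [Fin.sum_univ_eq_sum_range (fun t => if t < m then 1 else 0) n]
  rw [← Finset.card_filter]
  have : (Finset.range n).filter (fun t => t < m) = Finset.range m := by
    ext t
    simp only [Finset.mem_filter, Finset.mem_range]
    omega
  rw [this, Finset.card_range]

lemma len_eq_sum (u : Equiv.Perm (Fin n)) :
    len u + ∑ x : Fin n, rkN u (x : ℕ) ((u x : ℕ)) = ∑ x : Fin n, ((u x : ℕ)) := by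
  have hlen : len u = ∑ x : Fin n, ∑ y : Fin n,
      (if (x : ℕ) < (y : ℕ) ∧ (u y : ℕ) < (u x : ℕ) then 1 else 0) := by
    rw [len, Finset.card_filter, Fintype.sum_prod_type]
    apply Finset.sum_congr rfl
    intro x _
    apply Finset.sum_congr rfl
    intro y _
    rfl
  have hrk : ∀ x : Fin n, rkN u (x : ℕ) ((u x : ℕ))
      = ∑ y : Fin n, (if (y : ℕ) < (x : ℕ) ∧ (u y : ℕ) < (u x : ℕ) then 1 else 0) :=
    fun x => rkN_eq_sum u _ _
  have key : ∀ x : Fin n,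
      (∑ y : Fin n, (if (x : ℕ) < (y : ℕ) ∧ (u y : ℕ) < (u x : ℕ) then 1 else 0))
      + (∑ y : Fin n, (if (y : ℕ) < (x : ℕ) ∧ (u y : ℕ) < (u x : ℕ) then 1 else 0))
      = (u x : ℕ) := by
    intro x
    have h1 : ∑ y : Fin n, (if ((u y : ℕ)) < ((u x : ℕ)) then 1 else 0) = (u x : ℕ) :=
      (Equiv.sum_comp u (fun j : Fin n => if (j : ℕ) < ((u x : ℕ)) then 1 else 0)).trans
        (card_lt_fin _ (le_of_lt (u x).isLt))
    rw [← Finset.sum_add_distrib, ← h1]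
    apply Finset.sum_congr rfl
    intro y _
    by_cases hxy : (x : ℕ) = (y : ℕ)
    · have hux : (u y : ℕ) = (u x : ℕ) := by rw [Fin.ext hxy]
      split_ifs <;> omega
    · have hne := val_ne_of_ne (v := u) (k := y) (i := x) (fun h => hxy h.symm)
      split_ifs <;> omega
  rw [hlen, ← Finset.sum_add_distrib]
  apply Finset.sum_congr rfl
  intro x _
  rw [hrk x]
  exact key x

lemma len_swap (v : Equiv.Perm (Fin n)) (i j : Fin n) (hij : (i : ℕ) < (j : ℕ))
    (hv : (v i : ℕ) < (v j : ℕ)) :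
    len (v * Equiv.swap i j) = len v + 1
      + 2 * (univ.filter (fun k : Fin n => (i : ℕ) < (k : ℕ) ∧ (k : ℕ) < (j : ℕ)
          ∧ (v i : ℕ) < (v k : ℕ) ∧ (v k : ℕ) < (v j : ℕ))).card := by
  have hne : i ≠ j := fun h => by simp [h] at hij
  set s := Equiv.swap i j with hs
  set u := v * s with hu
  have happ : ∀ k, u k = v (s k) := fun k => rfl
  have hui : u i = v j := by rw [happ, Equiv.swap_apply_left]
  have huj : u j = v i := by rw [happ, Equiv.swap_apply_right]
  have huk : ∀ k, k ≠ i → k ≠ j → u k = v k := by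
    intro k h1 h2
    rw [happ, Equiv.swap_apply_of_ne_of_ne h1 h2]
  set M := (univ.filter (fun k : Fin n => (i : ℕ) < (k : ℕ) ∧ (k : ℕ) < (j : ℕ)
      ∧ (v i : ℕ) < (v k : ℕ) ∧ (v k : ℕ) < (v j : ℕ))).card with hM
  set Q := (univ.filter (fun k : Fin n => (k : ℕ) < (i : ℕ)
      ∧ (v i : ℕ) < (v k : ℕ) ∧ (v k : ℕ) < (v j : ℕ))).card with hQ
  -- (a) sums of values are equal
  have hT : ∑ x : Fin n, (u x : ℕ) = ∑ x : Fin n, (v x : ℕ) := by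
    rw [hu]
    exact Equiv.sum_comp s (fun x : Fin n => (v x : ℕ))
  -- (b)
  have hB : (∑ x : Fin n, rkN u (x : ℕ) ((u x : ℕ))) + M
      = ∑ x : Fin n, rkN v (x : ℕ) ((u x : ℕ)) := by
    have h1 : ∀ x : Fin n, rkN u (x : ℕ) ((u x : ℕ))
        + (if (i : ℕ) < (x : ℕ) ∧ (x : ℕ) ≤ (j : ℕ) ∧ (v i : ℕ) < ((u x : ℕ))
            ∧ ((u x : ℕ)) ≤ (v j : ℕ) then 1 else 0)
        = rkN v (x : ℕ) ((u x : ℕ)) := fun x => rk_swap v i j hij hv _ _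
    have h2 : ∀ x : Fin n, (if (i : ℕ) < (x : ℕ) ∧ (x : ℕ) ≤ (j : ℕ) ∧ (v i : ℕ) < ((u x : ℕ))
            ∧ ((u x : ℕ)) ≤ (v j : ℕ) then 1 else 0)
        = (if (i : ℕ) < (x : ℕ) ∧ (x : ℕ) < (j : ℕ)
          ∧ (v i : ℕ) < (v x : ℕ) ∧ (v x : ℕ) < (v j : ℕ) then 1 else 0) := by
      intro x
      by_cases hxi : x = i
      · have e0 : (x : ℕ) = (i : ℕ) := by rw [hxi]
        split_ifs <;> omega
      · by_cases hxj : x = j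
        · have e0 : (x : ℕ) = (j : ℕ) := by rw [hxj]
          have e3 : (u x : ℕ) = (v i : ℕ) := by rw [hxj, huj]
          split_ifs <;> omega
        · rw [huk x hxi hxj]
          have e1 : (x : ℕ) ≠ (j : ℕ) := fun h => hxj (Fin.ext h)
          have e2 : (v x : ℕ) ≠ (v j : ℕ) := val_ne_of_ne e1
          split_ifs <;> omega
    have h3 : ∑ x : Fin n, (rkN u (x : ℕ) ((u x : ℕ))
        + (if (i : ℕ) < (x : ℕ) ∧ (x : ℕ) ≤ (j : ℕ) ∧ (v i : ℕ) < ((u x : ℕ))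
            ∧ ((u x : ℕ)) ≤ (v j : ℕ) then 1 else 0))
        = ∑ x : Fin n, rkN v (x : ℕ) ((u x : ℕ)) :=
      Finset.sum_congr rfl (fun x _ => h1 x)
    rw [Finset.sum_add_distrib] at h3
    rw [← h3]
    congr 1
    rw [hM, Finset.card_filter]
    exact Finset.sum_congr rfl (fun x _ => (h2 x).symm)
  -- (c)
  have hC : (∑ x : Fin n, rkN v (x : ℕ) ((u x : ℕ)))
        + rkN v (i : ℕ) ((v i : ℕ)) + rkN v (j : ℕ) ((v j : ℕ))
      = (∑ x : Fin n, rkN v (x : ℕ) ((v x : ℕ)))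
        + rkN v (i : ℕ) ((v j : ℕ)) + rkN v (j : ℕ) ((v i : ℕ)) := by
    rw [sum_split i j hne (fun x => rkN v (x : ℕ) ((u x : ℕ)))]
    rw [sum_split i j hne (fun x => rkN v (x : ℕ) ((v x : ℕ)))]
    have htail : ∑ k ∈ (univ.erase i).erase j, rkN v (k : ℕ) ((u k : ℕ))
        = ∑ k ∈ (univ.erase i).erase j, rkN v (k : ℕ) ((v k : ℕ)) := by
      apply Finset.sum_congr rfl
      intro k hk
      have hki : k ≠ i := (Finset.mem_erase.1 (Finset.mem_erase.1 hk).2).1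
      have hkj : k ≠ j := (Finset.mem_erase.1 hk).1
      rw [huk k hki hkj]
    rw [hui, huj]
    omega
  -- (d1)
  have hD1 : rkN v (i : ℕ) ((v i : ℕ)) + Q = rkN v (i : ℕ) ((v j : ℕ)) := by
    rw [rkN_eq_sum, rkN_eq_sum, hQ, Finset.card_filter, ← Finset.sum_add_distrib]
    apply Finset.sum_congr rfl
    intro k _
    by_cases hki : (k : ℕ) = (i : ℕ)
    · split_ifs <;> omega
    · have := val_ne_of_ne (v := v) (k := k) (i := i) hki
      split_ifs <;> omega
  -- (d2)
  have hD2 : rkN v (j : ℕ) ((v i : ℕ)) + Q + M + 1 = rkN v (j : ℕ) ((v j : ℕ)) := by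
    have hone : ∑ k : Fin n, (if k = i then (1:ℕ) else 0) = 1 := by
      rw [Finset.sum_ite_eq' univ i (fun _ => (1:ℕ))]
      simp
    have hpt : ∀ k : Fin n,
        (if (k : ℕ) < (j : ℕ) ∧ (v k : ℕ) < (v j : ℕ) then (1:ℕ) else 0)
        = (if (k : ℕ) < (j : ℕ) ∧ (v k : ℕ) < (v i : ℕ) then 1 else 0)
          + (if (k : ℕ) < (i : ℕ) ∧ (v i : ℕ) < (v k : ℕ) ∧ (v k : ℕ) < (v j : ℕ) then 1 else 0)
          + (if (i : ℕ) < (k : ℕ) ∧ (k : ℕ) < (j : ℕ)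
              ∧ (v i : ℕ) < (v k : ℕ) ∧ (v k : ℕ) < (v j : ℕ) then 1 else 0)
          + (if k = i then 1 else 0) := by
      intro k
      by_cases hki : k = i
      · have e0 : (k : ℕ) = (i : ℕ) := by rw [hki]
        have e1 : (v k : ℕ) = (v i : ℕ) := by rw [hki]
        rw [if_pos hki]
        split_ifs <;> omega
      · rw [if_neg hki]
        have e0 : (k : ℕ) ≠ (i : ℕ) := fun h => hki (Fin.ext h)
        have e1 := val_ne_of_ne (v := v) (k := k) (i := i) e0
        by_cases hkj : (k : ℕ) = (j : ℕ)
        · have e2 : (v k : ℕ) = (v j : ℕ) := by rw [Fin.ext hkj]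
          split_ifs <;> omega
        · have e3 := val_ne_of_ne (v := v) (k := k) (i := j) hkj
          split_ifs <;> omega
    have hsum : rkN v (j : ℕ) ((v j : ℕ))
        = rkN v (j : ℕ) ((v i : ℕ)) + Q + M + 1 := by
      rw [rkN_eq_sum v (j : ℕ) ((v j : ℕ))]
      rw [Finset.sum_congr rfl (fun k _ => hpt k)]
      rw [Finset.sum_add_distrib, Finset.sum_add_distrib, Finset.sum_add_distrib, hone]
      rw [rkN_eq_sum, hQ, hM, Finset.card_filter, Finset.card_filter]
    omega
  have hlu := len_eq_sum u
  have hlv := len_eq_sum v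
  omega

lemma fulton (y u : Equiv.Perm (Fin n))
    (h : ∀ p : Fin n × Fin n, p ∈ EssSet y →
      rkN u ((p.1 : ℕ) + 1) ((p.2 : ℕ) + 1) ≤ rkN y ((p.1 : ℕ) + 1) ((p.2 : ℕ) + 1)) :
    ∀ c d : ℕ, rkN u c d ≤ rkN y c d := by
  -- SE propagation inside the diagram
  have SE : ∀ M : ℕ, ∀ p : Fin n × Fin n, p ∈ Dset y →
      2 * n ≤ (p.1 : ℕ) + (p.2 : ℕ) + M →
      rkN y ((p.1 : ℕ) + 1) ((p.2 : ℕ) + 1) < rkN u ((p.1 : ℕ) + 1) ((p.2 : ℕ) + 1) → False := by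
    intro M
    induction M with
    | zero =>
      intro p hp hm _
      have h1 := p.1.isLt
      have h2 := p.2.isLt
      omega
    | succ M ih =>
      intro p hp hm hviol
      by_cases hess : p ∈ EssSet y
      · exact absurd (h p hess) (by omega)
      · have hsplit : (∃ q ∈ Dset y, (q.1 : ℕ) = (p.1 : ℕ) + 1 ∧ q.2 = p.2)
            ∨ (∃ q ∈ Dset y, q.1 = p.1 ∧ (q.2 : ℕ) = (p.2 : ℕ) + 1) := by
          by_contra hc
          push_neg at hc
          exact hess ⟨hp, fun q hq hcc => hc.1 q hq hcc.1 hcc.2,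
            fun q hq hcc => hc.2 q hq hcc.1 hcc.2⟩
        rcases hsplit with ⟨q, hq, hq1, hq2⟩ | ⟨q, hq, hq1, hq2⟩
        · -- q = (p.1 + 1, p.2) ∈ Dset
          -- row increment at (p.1+1) is 0 for y
          have hy1 : (y q.1 : ℕ) ≥ (p.2 : ℕ) + 1 := by
            have := hq.1
            rw [Fin.lt_def] at this
            omega
          have hstep : rkN y ((p.1 : ℕ) + 1 + 1) ((p.2 : ℕ) + 1)
              = rkN y ((p.1 : ℕ) + 1) ((p.2 : ℕ) + 1) := by
            have hlt : (p.1 : ℕ) + 1 < n := by rw [← hq1]; exact q.1.isLt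
            rw [rkN_succ_left y hlt]
            have : (⟨(p.1 : ℕ) + 1, hlt⟩ : Fin n) = q.1 := by
              apply Fin.ext; simp [hq1]
            rw [this, if_neg (by omega)]
            omega
          have hmon := rkN_mono_left u
            (show (p.1 : ℕ) + 1 ≤ (p.1 : ℕ) + 1 + 1 by omega) ((p.2 : ℕ) + 1)
          have : rkN y ((q.1 : ℕ) + 1) ((q.2 : ℕ) + 1) < rkN u ((q.1 : ℕ) + 1) ((q.2 : ℕ) + 1) := by
            have e1 : (q.1 : ℕ) + 1 = (p.1 : ℕ) + 1 + 1 := by omega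
            have e2 : (q.2 : ℕ) + 1 = (p.2 : ℕ) + 1 := by rw [hq2]
            rw [e1, e2, hstep]
            omega
          exact ih q hq (by omega) this
        · -- q = (p.1, p.2 + 1) ∈ Dset
          have hy1 : ((y⁻¹ q.2 : Fin n) : ℕ) ≥ (p.1 : ℕ) + 1 := by
            have := hq.2
            rw [Fin.lt_def] at this
            omega
          have hstep : rkN y ((p.1 : ℕ) + 1) ((p.2 : ℕ) + 1 + 1)
              = rkN y ((p.1 : ℕ) + 1) ((p.2 : ℕ) + 1) := by
            have hlt : (p.2 : ℕ) + 1 < n := by rw [← hq2]; exact q.2.isLt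
            rw [rkN_succ_right y _ hlt]
            have : (⟨(p.2 : ℕ) + 1, hlt⟩ : Fin n) = q.2 := by
              apply Fin.ext; simp [hq2]
            rw [this, if_neg (by omega)]
            omega
          have hmon := rkN_mono_right u ((p.1 : ℕ) + 1)
            (show (p.2 : ℕ) + 1 ≤ (p.2 : ℕ) + 1 + 1 by omega)
          have : rkN y ((q.1 : ℕ) + 1) ((q.2 : ℕ) + 1) < rkN u ((q.1 : ℕ) + 1) ((q.2 : ℕ) + 1) := by
            have e1 : (q.1 : ℕ) + 1 = (p.1 : ℕ) + 1 := by rw [hq1]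
            have e2 : (q.2 : ℕ) + 1 = (p.2 : ℕ) + 1 + 1 := by omega
            rw [e1, e2, hstep]
            omega
          exact ih q hq (by omega) this
  -- NW propagation
  have NW : ∀ N : ℕ, ∀ c d : ℕ, c + d ≤ N → rkN y c d < rkN u c d → False := by
    intro N
    induction N with
    | zero =>
      intro c d hcd hviol
      have hc : c = 0 := by omega
      rw [hc] at hviol
      have h1 := rkN_zero_left y d
      have h2 := rkN_zero_left u d
      omega
    | succ N ih =>
      intro c d hcd hviol
      have hc0 : c ≠ 0 := by
        intro h
        rw [h] at hviol
        have h1 := rkN_zero_left y d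
        have h2 := rkN_zero_left u d
        omega
      have hd0 : d ≠ 0 := by
        intro h
        rw [h] at hviol
        have h1 := rkN_zero_right y c
        have h2 := rkN_zero_right u c
        omega
      have hcn : c ≤ n := by
        by_contra hh
        push_neg at hh
        rw [rkN_eq_of_le_left y u (by omega) d] at hviol
        omega
      have hdn : d ≤ n := by
        by_contra hh
        push_neg at hh
        rw [rkN_eq_of_le_right y u c (by omega)] at hviol
        omega
      have hc1 : c - 1 < n := by omega
      have hd1 : d - 1 < n := by omega
      set I : Fin n := ⟨c - 1, hc1⟩ with hI
      set J : Fin n := ⟨d - 1, hd1⟩ with hJ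
      by_cases hyI : (y I : ℕ) < d
      · -- move west (decrease c)
        have hsy : rkN y c d = rkN y (c - 1) d + 1 := by
          have := rkN_succ_left y hc1 d
          rw [if_pos hyI] at this
          rw [← this]
          congr 1
          omega
        have hsu : rkN u c d ≤ rkN u (c - 1) d + 1 := by
          have := rkN_succ_left_le u (c - 1) d
          have e : c - 1 + 1 = c := by omega
          rw [e] at this
          exact this
        exact ih (c - 1) d (by omega) (by omega)
      · by_cases hyJ : ((y⁻¹ J : Fin n) : ℕ) < c
        · -- move north (decrease d)
          have hsy : rkN y c d = rkN y c (d - 1) + 1 := by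
            have := rkN_succ_right y c hd1
            rw [if_pos hyJ] at this
            rw [← this]
            congr 1
            omega
          have hsu : rkN u c d ≤ rkN u c (d - 1) + 1 := by
            have := rkN_succ_right_le u c (d - 1)
            have e : d - 1 + 1 = d := by omega
            rw [e] at this
            exact this
          exact ih c (d - 1) (by omega) (by omega)
        · -- (I, J) ∈ Dset y : apply SE
          push_neg at hyI hyJ
          have hIval : (I : ℕ) = c - 1 := rfl
          have hJval : (J : ℕ) = d - 1 := rfl
          have hmem : (I, J) ∈ Dset y := by
            constructor
            · show J < y I
              rw [Fin.lt_def]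
              omega
            · show I < y⁻¹ J
              rw [Fin.lt_def]
              omega
          have e1 : ((I, J).1 : ℕ) + 1 = c := by
            have : ((I, J).1 : ℕ) = c - 1 := rfl
            omega
          have e2 : ((I, J).2 : ℕ) + 1 = d := by
            have : ((I, J).2 : ℕ) = d - 1 := rfl
            omega
          apply SE (2 * n) (I, J) hmem (by omega)
          rw [e1, e2]
          exact hviol
  intro c d
  by_contra hh
  push_neg at hh
  exact NW (c + d) c d le_rfl hh

lemma master₀ (v u : Equiv.Perm (Fin n)) (A B : ℕ)
    (hle : ∀ c d, rkN u c d ≤ rkN v c d) (hAB : rkN u A B < rkN v A B) :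
    ∃ i : Fin n, (i : ℕ) < A ∧ (v i : ℕ) < B ∧
      ∀ c d, (i : ℕ) < c → c ≤ A → (v i : ℕ) < d → d ≤ B → rkN u c d < rkN v c d := by
  have hAn : A ≤ n := by
    by_contra hh
    push_neg at hh
    rw [rkN_eq_of_le_left u v (by omega) B] at hAB
    omega
  -- c1 : the largest c ≤ A with no violation in column B
  have h0T : (0 : ℕ) ∈ (Finset.range (A + 1)).filter (fun c => rkN v c B ≤ rkN u c B) := by
    rw [Finset.mem_filter, Finset.mem_range]
    constructor
    · omega
    · rw [rkN_zero_left, rkN_zero_left]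
  set T := (Finset.range (A + 1)).filter (fun c => rkN v c B ≤ rkN u c B) with hT
  have hTne : T.Nonempty := ⟨0, h0T⟩
  set c1 := T.max' hTne with hc1
  have hc1T : c1 ∈ T := T.max'_mem hTne
  have hc1A : c1 ≤ A := by
    have := (Finset.mem_filter.1 hc1T).1
    rw [Finset.mem_range] at this
    omega
  have hc1eq : rkN v c1 B ≤ rkN u c1 B := (Finset.mem_filter.1 hc1T).2
  have hrowviol : ∀ c, c1 < c → c ≤ A → rkN u c B < rkN v c B := by
    intro c hcc hcA
    by_contra hh
    push_neg at hh
    have : c ∈ T := by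
      rw [hT, Finset.mem_filter, Finset.mem_range]
      exact ⟨by omega, hh⟩
    have := Finset.le_max' T c this
    omega
  have hc1A' : c1 < A := by
    rcases eq_or_lt_of_le hc1A with h | h
    · rw [h] at hc1eq; omega
    · exact h
  have hc1n : c1 < n := by omega
  set i1 : Fin n := ⟨c1, hc1n⟩ with hi1
  have hi1val : (i1 : ℕ) = c1 := rfl
  -- v i1 < B
  have hvi1 : (v i1 : ℕ) < B := by
    have h1 := hrowviol (c1 + 1) (by omega) (by omega)
    have h2 := rkN_succ_left v hc1n B
    have h3 := rkN_mono_left u (show c1 ≤ c1 + 1 by omega) B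
    rw [← hi1] at h2
    by_contra hh
    rw [if_neg hh] at h2
    omega
  -- the zero set NE of the dot (c1, v i1)
  classical
  set Zb := ((Finset.range (A + 1)) ×ˢ (Finset.range (B + 1))).filter
    (fun p : ℕ × ℕ => c1 < p.1 ∧ (v i1 : ℕ) < p.2 ∧ rkN v p.1 p.2 ≤ rkN u p.1 p.2) with hZb
  by_cases hZe : Zb.Nonempty
  · -- pick a zero with maximal second coordinate
    obtain ⟨p0, hp0, hp0max⟩ := Finset.exists_max_image Zb (fun p => p.2) hZe
    obtain ⟨hp0mem, hp0c, hp0d, hp0z⟩ := Finset.mem_filter.1 hp0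
    have hp0A : p0.1 ≤ A := by
      have := (Finset.mem_product.1 hp0mem).1
      rw [Finset.mem_range] at this
      omega
    have hp0B : p0.2 ≤ B := by
      have := (Finset.mem_product.1 hp0mem).2
      rw [Finset.mem_range] at this
      omega
    have hp0dB : p0.2 < B := by
      rcases eq_or_lt_of_le hp0B with h | h
      · have := hrowviol p0.1 hp0c hp0A
        rw [h] at hp0z
        omega
      · exact h
    -- supermodularity: there is a dot in [c1, p0.1) × [p0.2, B)
    set Vr := (univ.filter (fun k : Fin n => c1 ≤ (k : ℕ) ∧ (k : ℕ) < p0.1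
        ∧ p0.2 ≤ (v k : ℕ) ∧ (v k : ℕ) < B)).card with hVr
    have hsupv : rkN v p0.1 B + rkN v c1 p0.2 = rkN v c1 B + rkN v p0.1 p0.2 + Vr := by
      rw [rkN_eq_sum, rkN_eq_sum, rkN_eq_sum, rkN_eq_sum, hVr, Finset.card_filter,
        ← Finset.sum_add_distrib, ← Finset.sum_add_distrib, ← Finset.sum_add_distrib]
      apply Finset.sum_congr rfl
      intro k _
      split_ifs <;> omega
    have hsupu : rkN u c1 B + rkN u p0.1 p0.2 ≤ rkN u p0.1 B + rkN u c1 p0.2 := by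
      rw [rkN_eq_sum, rkN_eq_sum, rkN_eq_sum, rkN_eq_sum,
        ← Finset.sum_add_distrib, ← Finset.sum_add_distrib]
      apply Finset.sum_le_sum
      intro k _
      split_ifs <;> omega
    have hVr1 : 1 ≤ Vr := by
      have h1 := hrowviol p0.1 hp0c hp0A
      have h2 := hle c1 p0.2
      omega
    have : (univ.filter (fun k : Fin n => c1 ≤ (k : ℕ) ∧ (k : ℕ) < p0.1
        ∧ p0.2 ≤ (v k : ℕ) ∧ (v k : ℕ) < B)).Nonempty := by
      rw [← Finset.card_pos]
      omega
    obtain ⟨k, hk⟩ := this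
    obtain ⟨_, hk1, hk2, hk3, hk4⟩ := Finset.mem_filter.1 hk
    refine ⟨k, by omega, hk4, ?_⟩
    intro c d hc1' hc2' hd1' hd2'
    by_contra hh
    push_neg at hh
    have hmem : (c, d) ∈ Zb := by
      rw [hZb, Finset.mem_filter, Finset.mem_product, Finset.mem_range, Finset.mem_range]
      refine ⟨⟨by omega, by omega⟩, by omega, by omega, hh⟩
    have := hp0max (c, d) hmem
    simp only at this
    omega
  · -- no zeros: i1 itself works
    refine ⟨i1, by omega, hvi1, ?_⟩
    intro c d hc1' hc2' hd1' hd2'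
    by_contra hh
    push_neg at hh
    apply hZe
    refine ⟨(c, d), ?_⟩
    rw [hZb, Finset.mem_filter, Finset.mem_product, Finset.mem_range, Finset.mem_range]
    exact ⟨⟨by omega, by omega⟩, by omega, by omega, hh⟩

lemma master (v u : Equiv.Perm (Fin n)) (A B : ℕ)
    (hle : ∀ c d, rkN u c d ≤ rkN v c d) (hAB : rkN u A B < rkN v A B) :
    ∃ i : Fin n, (i : ℕ) < A ∧ (v i : ℕ) < B ∧
      (∀ k : Fin n, (i : ℕ) < (k : ℕ) → (k : ℕ) < A →
        ¬((v i : ℕ) < (v k : ℕ) ∧ (v k : ℕ) < B)) ∧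
      ∀ c d, (i : ℕ) < c → c ≤ A → (v i : ℕ) < d → d ≤ B → rkN u c d < rkN v c d := by
  have main : ∀ m : ℕ, ∀ i : Fin n, A ≤ (i : ℕ) + m →
      ((i : ℕ) < A ∧ (v i : ℕ) < B ∧
        ∀ c d, (i : ℕ) < c → c ≤ A → (v i : ℕ) < d → d ≤ B → rkN u c d < rkN v c d) →
      ∃ i' : Fin n, (i' : ℕ) < A ∧ (v i' : ℕ) < B ∧
        (∀ k : Fin n, (i' : ℕ) < (k : ℕ) → (k : ℕ) < A →
          ¬((v i' : ℕ) < (v k : ℕ) ∧ (v k : ℕ) < B)) ∧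
        ∀ c d, (i' : ℕ) < c → c ≤ A → (v i' : ℕ) < d → d ≤ B → rkN u c d < rkN v c d := by
    intro m
    induction m with
    | zero =>
      intro i hm ⟨h1, _, _⟩
      omega
    | succ m ih =>
      intro i hm ⟨h1, h2, h3⟩
      by_cases hcov : ∀ k : Fin n, (i : ℕ) < (k : ℕ) → (k : ℕ) < A →
          ¬((v i : ℕ) < (v k : ℕ) ∧ (v k : ℕ) < B)
      · exact ⟨i, h1, h2, hcov, h3⟩
      · push_neg at hcov
        obtain ⟨k, hik, hkA, hvik, hvkB⟩ := hcov
        apply ih k (by omega)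
        refine ⟨hkA, hvkB, ?_⟩
        intro c d hc hcA hd hdB
        exact h3 c d (by omega) hcA (by omega) hdB
  obtain ⟨i, h1, h2, h3⟩ := master₀ v u A B hle hAB
  exact main A i (by omega) ⟨h1, h2, h3⟩

/-- Let `(a,b)` be a lower outside corner of `D(w)` with `rk_w(a,b) ≥ 1`,
`v = w·t_{a,w⁻¹(b)}`, and `π` the bigrassmannian with `Ess(π) = {(a−1,b−1)}` and
`rk_π(a−1,b−1) = rk_w(a,b) − 1`.  Then `Perm(v ∨ π) = Φ(w,(a,b))` and
`deg(v ∨ π) = min{ℓ(u) : u ∈ Perm(v∨π)} = ℓ(w)`.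
(Cells are 0-indexed: the cell `(a,b)` here is the paper's `(a+1,b+1)`.) -/
theorem stmt_14 (n : ℕ) (w : Equiv.Perm (Fin n)) (a b : Fin n)
    (hloc : IsLOC w (a, b)) (hrk : 1 ≤ rkN w ((a : ℕ) + 1) ((b : ℕ) + 1))
    (π : Equiv.Perm (Fin n))
    (hEss : EssSet π =
      {p : Fin n × Fin n | (p.1 : ℕ) + 1 = (a : ℕ) ∧ (p.2 : ℕ) + 1 = (b : ℕ)})
    (hπrk : rkN π (a : ℕ) (b : ℕ) + 1 = rkN w ((a : ℕ) + 1) ((b : ℕ) + 1)) :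
    PermOfJoin (w * Equiv.swap a (w⁻¹ b)) π =
      {u | ∃ i : Fin n, i < a ∧
        u = (w * Equiv.swap a (w⁻¹ b)) * Equiv.swap i a ∧
        permLE (w * Equiv.swap a (w⁻¹ b)) u ∧ u ≠ w * Equiv.swap a (w⁻¹ b) ∧
        len u = len w} ∧
    sInf (len '' PermOfJoin (w * Equiv.swap a (w⁻¹ b)) π) = len w := by
  obtain ⟨hDmem, hmax⟩ := hloc
  set c : Fin n := w⁻¹ b with hcdef
  set v : Equiv.Perm (Fin n) := w * Equiv.swap a c with hvdef
  have hba : (b : ℕ) < (w a : ℕ) := Fin.lt_def.1 hDmem.1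
  have hac : (a : ℕ) < (c : ℕ) := Fin.lt_def.1 hDmem.2
  have hwc : w c = b := by rw [hcdef]; simp
  have hva : v a = b := by
    rw [hvdef, Equiv.Perm.mul_apply, Equiv.swap_apply_left, hwc]
  have hvc : v c = w a := by
    rw [hvdef, Equiv.Perm.mul_apply, Equiv.swap_apply_right]
  have hvk : ∀ k : Fin n, k ≠ a → k ≠ c → v k = w k := by
    intro k h1 h2
    rw [hvdef, Equiv.Perm.mul_apply, Equiv.swap_apply_of_ne_of_ne h1 h2]
  have hvaval : (v a : ℕ) = (b : ℕ) := by rw [hva]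
  have hw_eq : v * Equiv.swap a c = w := by
    rw [hvdef, mul_assoc, Equiv.swap_mul_self, mul_one]
  have hwkb : ∀ k : Fin n, (w k : ℕ) = (b : ℕ) → k = c := by
    intro k hk
    have : w k = b := Fin.val_injective hk
    rw [hcdef, ← this]
    simp
  -- LOC: no entries between a and c with value above b
  have hLOC : ∀ k : Fin n, (a : ℕ) < (k : ℕ) → (k : ℕ) < (c : ℕ) → (w k : ℕ) < (b : ℕ) := by
    intro k h1 h2
    by_contra hh
    push_neg at hh
    have hkc : k ≠ c := fun h => by rw [h] at h2; omega
    have hne : (w k : ℕ) ≠ (b : ℕ) := fun h => hkc (hwkb k h)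
    have hmem : (k, b) ∈ Dset w := by
      constructor
      · rw [Fin.lt_def]
        show (b : ℕ) < (w k : ℕ)
        omega
      · show k < w⁻¹ b
        rw [← hcdef, Fin.lt_def]
        exact h2
    have heq := hmax (k, b) hmem (by show a ≤ k; exact Fin.le_def.2 (by omega)) (le_refl b)
    have : k = a := congrArg Prod.fst heq
    rw [this] at h1
    omega
  -- length of w
  have hlw : len w = len v + 1 := by
    have hswap := len_swap v a c hac (by rw [hvaval, hvc]; exact hba)
    rw [hw_eq] at hswap
    have hM0 : (univ.filter (fun k : Fin n => (a : ℕ) < (k : ℕ) ∧ (k : ℕ) < (c : ℕ)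
        ∧ (v a : ℕ) < (v k : ℕ) ∧ (v k : ℕ) < (v c : ℕ))).card = 0 := by
      rw [Finset.card_eq_zero, Finset.filter_eq_empty_iff]
      rintro k - ⟨e1, e2, e3, e4⟩
      have hka : k ≠ a := fun h => by rw [h] at e1; omega
      have hkc : k ≠ c := fun h => by rw [h] at e2; omega
      rw [hvk k hka hkc] at e3
      have := hLOC k e1 e2
      omega
    rw [hM0] at hswap
    omega
  -- rank identity
  have hr_eq : rkN w ((a : ℕ) + 1) ((b : ℕ) + 1) = rkN v (a : ℕ) (b : ℕ) := by
    rw [rkN_eq_sum, rkN_eq_sum]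
    apply Finset.sum_congr rfl
    intro k _
    by_cases hka : k = a
    · have e1 : (k : ℕ) = (a : ℕ) := by rw [hka]
      have e2 : (w k : ℕ) = (w a : ℕ) := by rw [hka]
      split_ifs <;> omega
    · by_cases hkc : k = c
      · have e1 : (k : ℕ) = (c : ℕ) := by rw [hkc]
        split_ifs <;> omega
      · have e0 : (v k : ℕ) = (w k : ℕ) := by rw [hvk k hka hkc]
        have e1 : (k : ℕ) ≠ (a : ℕ) := fun h => hka (Fin.ext h)
        have e2 : (w k : ℕ) ≠ (b : ℕ) := fun h => hkc (hwkb k h)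
        split_ifs <;> omega
  have hr1 : 1 ≤ rkN v (a : ℕ) (b : ℕ) := by omega
  have hπr : rkN π (a : ℕ) (b : ℕ) + 1 = rkN v (a : ℕ) (b : ℕ) := by omega
  -- Fulton consequence
  have hfult : ∀ x : Equiv.Perm (Fin n), rkN x (a : ℕ) (b : ℕ) ≤ rkN π (a : ℕ) (b : ℕ) →
      permLE π x := by
    intro x hx
    apply fulton π x
    intro p hp
    rw [hEss] at hp
    obtain ⟨e1, e2⟩ := hp
    rw [e1, e2]
    exact hx
  -- facts about candidates
  have hA1 : ∀ i : Fin n, (i : ℕ) < (a : ℕ) → (v i : ℕ) < (b : ℕ) →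
      ∀ cc dd : ℕ, rkN (v * Equiv.swap i a) cc dd
        + (if (i : ℕ) < cc ∧ cc ≤ (a : ℕ) ∧ (v i : ℕ) < dd ∧ dd ≤ (b : ℕ) then 1 else 0)
        = rkN v cc dd := by
    intro i hia hvi cc dd
    have := rk_swap v i a hia (by omega) cc dd
    rw [hvaval] at this
    exact this
  have hA3 : ∀ i : Fin n, (i : ℕ) < (a : ℕ) → (v i : ℕ) < (b : ℕ) →
      rkN (v * Equiv.swap i a) (a : ℕ) (b : ℕ) + 1 = rkN v (a : ℕ) (b : ℕ) := by
    intro i hia hvi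
    have := hA1 i hia hvi (a : ℕ) (b : ℕ)
    rw [if_pos ⟨hia, le_refl _, hvi, le_refl _⟩] at this
    exact this
  have hA2 : ∀ i : Fin n, (i : ℕ) < (a : ℕ) → (v i : ℕ) < (b : ℕ) →
      permLE v (v * Equiv.swap i a) := by
    intro i hia hvi cc dd
    have := hA1 i hia hvi cc dd
    omega
  have hA4 : ∀ i : Fin n, (i : ℕ) < (a : ℕ) → (v i : ℕ) < (b : ℕ) →
      permLE π (v * Equiv.swap i a) := by
    intro i hia hvi
    apply hfult
    have := hA3 i hia hvi
    omega
  have hA6 : ∀ i : Fin n, (i : ℕ) < (a : ℕ) → (v i : ℕ) < (b : ℕ) →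
      (v * Equiv.swap i a) ≠ v := by
    intro i hia hvi heq
    have := hA3 i hia hvi
    rw [heq] at this
    omega
  have hA5 : ∀ i : Fin n, (i : ℕ) < (a : ℕ) → (v i : ℕ) < (b : ℕ) →
      (∀ k : Fin n, (i : ℕ) < (k : ℕ) → (k : ℕ) < (a : ℕ) →
        ¬((v i : ℕ) < (v k : ℕ) ∧ (v k : ℕ) < (b : ℕ))) →
      len (v * Equiv.swap i a) = len w := by
    intro i hia hvi hcov
    have hswap := len_swap v i a hia (by omega)
    have hM0 : (univ.filter (fun k : Fin n => (i : ℕ) < (k : ℕ) ∧ (k : ℕ) < (a : ℕ)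
        ∧ (v i : ℕ) < (v k : ℕ) ∧ (v k : ℕ) < (v a : ℕ))).card = 0 := by
      rw [Finset.card_eq_zero, Finset.filter_eq_empty_iff]
      rintro k - ⟨e1, e2, e3, e4⟩
      rw [hvaval] at e4
      exact hcov k e1 e2 ⟨e3, e4⟩
    rw [hM0] at hswap
    omega
  -- the minimality helper
  have key_min : ∀ i : Fin n, (i : ℕ) < (a : ℕ) → (v i : ℕ) < (b : ℕ) →
      (∀ k : Fin n, (i : ℕ) < (k : ℕ) → (k : ℕ) < (a : ℕ) →
        ¬((v i : ℕ) < (v k : ℕ) ∧ (v k : ℕ) < (b : ℕ))) →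
      ∀ u', aboveJoin v π u' → permLE u' (v * Equiv.swap i a) → u' = v * Equiv.swap i a := by
    intro i hia hvi hcov u' ⟨hu'v, hu'π⟩ hle'
    have hu'AB : rkN u' (a : ℕ) (b : ℕ) < rkN v (a : ℕ) (b : ℕ) := by
      have := hu'π (a : ℕ) (b : ℕ)
      omega
    obtain ⟨j, hj1, hj2, hj4⟩ := master₀ v u' (a : ℕ) (b : ℕ) hu'v hu'AB
    have hB1 := hA1 j hj1 hj2
    have hψle : ∀ cc dd : ℕ, rkN u' cc dd ≤ rkN (v * Equiv.swap j a) cc dd := by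
      intro cc dd
      have h1 := hB1 cc dd
      by_cases hrect : (j : ℕ) < cc ∧ cc ≤ (a : ℕ) ∧ (v j : ℕ) < dd ∧ dd ≤ (b : ℕ)
      · have h2 := hj4 cc dd hrect.1 hrect.2.1 hrect.2.2.1 hrect.2.2.2
        rw [if_pos hrect] at h1
        omega
      · rw [if_neg hrect] at h1
        have := hu'v cc dd
        omega
    -- compare rectangles at cell (j+1, v j + 1)
    have hcell : (i : ℕ) < (j : ℕ) + 1 ∧ (j : ℕ) + 1 ≤ (a : ℕ)
        ∧ (v i : ℕ) < (v j : ℕ) + 1 ∧ (v j : ℕ) + 1 ≤ (b : ℕ) := by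
      have h1 := hA1 i hia hvi ((j : ℕ) + 1) ((v j : ℕ) + 1)
      have h2 := hB1 ((j : ℕ) + 1) ((v j : ℕ) + 1)
      rw [if_pos ⟨by omega, by omega, by omega, by omega⟩] at h2
      have h3 := hle' ((j : ℕ) + 1) ((v j : ℕ) + 1)
      have h4 := hψle ((j : ℕ) + 1) ((v j : ℕ) + 1)
      by_contra hh
      rw [if_neg hh] at h1
      omega
    have hij : (i : ℕ) = (j : ℕ) := by
      by_contra hh
      have hij' : (i : ℕ) < (j : ℕ) := by omega
      have hvij : (v i : ℕ) ≠ (v j : ℕ) := val_ne_of_ne (by omega)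
      exact hcov j hij' hj1 ⟨by omega, hj2⟩
    have hijF : i = j := Fin.ext hij
    apply perm_eq_of_rkN_eq
    intro cc dd
    have h1 := hA1 i hia hvi cc dd
    have h2 := hB1 cc dd
    rw [← hijF] at h2
    have h3 := hle' cc dd
    have h4 := hψle cc dd
    rw [← hijF] at h4
    omega
  -- both directions of the set equality
  have hPOJ : PermOfJoin v π = {u | ∃ i : Fin n, i < a ∧ u = v * Equiv.swap i a ∧
      permLE v u ∧ u ≠ v ∧ len u = len w} := by
    ext u
    constructor
    · rintro ⟨⟨huv, huπ⟩, humin⟩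
      have hAB : rkN u (a : ℕ) (b : ℕ) < rkN v (a : ℕ) (b : ℕ) := by
        have := huπ (a : ℕ) (b : ℕ)
        omega
      obtain ⟨i, hi1, hi2, hicov, hi4⟩ := master v u (a : ℕ) (b : ℕ) huv hAB
      have hφle : ∀ cc dd : ℕ, rkN u cc dd ≤ rkN (v * Equiv.swap i a) cc dd := by
        intro cc dd
        have h1 := hA1 i hi1 hi2 cc dd
        by_cases hrect : (i : ℕ) < cc ∧ cc ≤ (a : ℕ) ∧ (v i : ℕ) < dd ∧ dd ≤ (b : ℕ)
        · have h2 := hi4 cc dd hrect.1 hrect.2.1 hrect.2.2.1 hrect.2.2.2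
          rw [if_pos hrect] at h1
          omega
        · rw [if_neg hrect] at h1
          have := huv cc dd
          omega
      have hφmem : aboveJoin v π (v * Equiv.swap i a) := ⟨hA2 i hi1 hi2, hA4 i hi1 hi2⟩
      have hφu : v * Equiv.swap i a = u := humin _ hφmem hφle
      refine ⟨i, Fin.lt_def.2 hi1, hφu.symm, ?_, ?_, ?_⟩
      · rw [← hφu]; exact hA2 i hi1 hi2
      · rw [← hφu]; exact hA6 i hi1 hi2
      · rw [← hφu]; exact hA5 i hi1 hi2 hicov
    · rintro ⟨i, hia, hueq, hupv, hune, hulen⟩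
      have hia' : (i : ℕ) < (a : ℕ) := Fin.lt_def.1 hia
      have hne_ia : i ≠ a := fun h => by rw [h] at hia'; omega
      -- v i < b
      have hvi : (v i : ℕ) < (b : ℕ) := by
        rcases lt_trichotomy ((v i : ℕ)) ((b : ℕ)) with h | h | h
        · exact h
        · exfalso
          have : v i = v a := Fin.val_injective (by rw [hvaval]; exact h)
          exact hne_ia (v.injective this)
        · exfalso
          have e1 : u i = v a := by
            rw [hueq]; exact congrArg v (Equiv.swap_apply_left i a)
          have e2 : u a = v i := by
            rw [hueq]; exact congrArg v (Equiv.swap_apply_right i a)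
          have huvi : (u i : ℕ) < (u a : ℕ) := by
            rw [e1, e2, hvaval]
            exact h
          have hrs := rk_swap u i a hia' huvi (a : ℕ) ((b : ℕ) + 1)
          have husw : u * Equiv.swap i a = v := by
            rw [hueq, mul_assoc, Equiv.swap_mul_self, mul_one]
          rw [husw] at hrs
          have e3 : (u i : ℕ) = (b : ℕ) := by rw [e1, hvaval]
          have e4 : (u a : ℕ) = (v i : ℕ) := by rw [e2]
          rw [if_pos (by rw [e3, e4]; exact ⟨hia', le_refl _, by omega, by omega⟩)] at hrs
          have := hupv (a : ℕ) ((b : ℕ) + 1)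
          omega
      -- cover from length
      have hcov : ∀ k : Fin n, (i : ℕ) < (k : ℕ) → (k : ℕ) < (a : ℕ) →
          ¬((v i : ℕ) < (v k : ℕ) ∧ (v k : ℕ) < (b : ℕ)) := by
        have hswap := len_swap v i a hia' (by omega)
        rw [← hueq] at hswap
        have hM0 : (univ.filter (fun k : Fin n => (i : ℕ) < (k : ℕ) ∧ (k : ℕ) < (a : ℕ)
            ∧ (v i : ℕ) < (v k : ℕ) ∧ (v k : ℕ) < (v a : ℕ))).card = 0 := by omega
        intro k hk1 hk2 ⟨hk3, hk4⟩
        have : k ∈ univ.filter (fun k : Fin n => (i : ℕ) < (k : ℕ) ∧ (k : ℕ) < (a : ℕ)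
            ∧ (v i : ℕ) < (v k : ℕ) ∧ (v k : ℕ) < (v a : ℕ)) := by
          rw [Finset.mem_filter]
          exact ⟨Finset.mem_univ k, hk1, hk2, hk3, by omega⟩
        rw [Finset.card_eq_zero] at hM0
        rw [hM0] at this
        exact absurd this (Finset.notMem_empty k)
      constructor
      · constructor
        · exact hupv
        · rw [hueq]
          exact hA4 i hia' hvi
      · intro u' hu'j hu'le
        rw [hueq]
        rw [hueq] at hu'le
        exact key_min i hia' hvi hcov u' hu'j hu'le
  refine ⟨hPOJ, ?_⟩
  -- nonemptiness: the maximal dot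
  have hSne : (univ.filter (fun k : Fin n => (k : ℕ) < (a : ℕ) ∧ (v k : ℕ) < (b : ℕ))).Nonempty := by
    rw [← Finset.card_pos]
    have : rkN v (a : ℕ) (b : ℕ)
        = (univ.filter (fun k : Fin n => (k : ℕ) < (a : ℕ) ∧ (v k : ℕ) < (b : ℕ))).card := rfl
    omega
  set S := univ.filter (fun k : Fin n => (k : ℕ) < (a : ℕ) ∧ (v k : ℕ) < (b : ℕ)) with hS
  set i0 := S.max' hSne with hi0
  obtain ⟨-, hi01, hi02⟩ := Finset.mem_filter.1 (S.max'_mem hSne)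
  have hi0cov : ∀ k : Fin n, (i0 : ℕ) < (k : ℕ) → (k : ℕ) < (a : ℕ) →
      ¬((v i0 : ℕ) < (v k : ℕ) ∧ (v k : ℕ) < (b : ℕ)) := by
    rintro k hk1 hk2 ⟨-, hk4⟩
    have hkS : k ∈ S := Finset.mem_filter.2 ⟨Finset.mem_univ k, hk2, hk4⟩
    have := Finset.le_max' S k hkS
    rw [← hi0, Fin.le_def] at this
    omega
  have hu0 : (v * Equiv.swap i0 a) ∈ PermOfJoin v π := by
    rw [hPOJ]
    exact ⟨i0, Fin.lt_def.2 hi01, rfl, hA2 i0 hi01 hi02, hA6 i0 hi01 hi02,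
      hA5 i0 hi01 hi02 hi0cov⟩
  have himg : len '' PermOfJoin v π = {len w} := by
    ext x
    constructor
    · rintro ⟨u, hu, hx⟩
      rw [hPOJ] at hu
      obtain ⟨i, -, -, -, -, hulen⟩ := hu
      rw [← hx, hulen]
      rfl
    · rintro rfl
      refine ⟨v * Equiv.swap i0 a, hu0, ?_⟩
      exact hA5 i0 hi01 hi02 hi0cov
  rw [himg]
  exact csInf_singleton (len w)
end

section
/- Let v ∈ S_n and a ∈ [n], and suppose ṽ = v·t_{i,j} with i < j, v(i) < v(j), is a Bruhat cover of v (no k with i < k < j and v(i) < v(k) < v(j)). Suppose further that rk_ṽ(a−1, v(a)−1) ≤ rk_v(a−1, v(a)−1) − 1, where b = v(a). Then j = a, i ≤ a−1, and v(i) ≤ b−1. -/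
/-- Suppose `ṽ = v·t_{i,j}` with `i < j`, `v(i) < v(j)` is a Bruhat cover of `v`
(no `k` with `i < k < j` and `v(i) < v(k) < v(j)`), and suppose
`rk_ṽ(a−1, b−1) ≤ rk_v(a−1, b−1) − 1` where `b = v(a)` (with 0-indexed `a,b`,
`rk` at `(a−1,b−1)` is `rkN` at the natural numbers `(a, v(a))`).
Then `j = a`, `i ≤ a−1`, and `v(i) ≤ b−1`. -/
theorem stmt_15 (n : ℕ) (v : Equiv.Perm (Fin n)) (a i j : Fin n)
    (hij : i < j) (hv : v i < v j)
    (hcov : ∀ k : Fin n, i < k → k < j → ¬(v i < v k ∧ v k < v j))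
    (hrk : rkN (v * Equiv.swap i j) (a : ℕ) (v a : ℕ) + 1 ≤ rkN v (a : ℕ) (v a : ℕ)) :
    j = a ∧ i < a ∧ v i < v a := by
  set b : ℕ := (v a : ℕ) with hb
  have hne : i ≠ j := ne_of_lt hij
  have hij' : (i : ℕ) < (j : ℕ) := hij
  have hv' : (v i : ℕ) < (v j : ℕ) := hv
  -- express rkN as a sum of indicators
  have hsum : ∀ u : Equiv.Perm (Fin n), rkN u (a : ℕ) b =
      ∑ k : Fin n, if (k : ℕ) < (a : ℕ) ∧ (u k : ℕ) < b then 1 else 0 := by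
    intro u
    rw [rkN, Finset.card_filter]
  have hmemj : j ∈ Finset.univ.erase i := by simp [hne.symm]
  have split : ∀ f : Fin n → ℕ, ∑ k : Fin n, f k =
      f i + (f j + ∑ k ∈ (Finset.univ.erase i).erase j, f k) := by
    intro f
    rw [Finset.add_sum_erase _ f hmemj, Finset.add_sum_erase _ f (Finset.mem_univ i)]
  have htail : ∑ k ∈ (Finset.univ.erase i).erase j,
        (if (k : ℕ) < (a : ℕ) ∧ (((v * Equiv.swap i j) k : Fin n) : ℕ) < b then 1 else 0) =
      ∑ k ∈ (Finset.univ.erase i).erase j,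
        (if (k : ℕ) < (a : ℕ) ∧ ((v k : Fin n) : ℕ) < b then 1 else 0) := by
    apply Finset.sum_congr rfl
    intro k hk
    simp only [Finset.mem_erase, Finset.mem_univ] at hk
    rw [Equiv.Perm.mul_apply, Equiv.swap_apply_of_ne_of_ne hk.2.1 hk.1]
  have happi : (v * Equiv.swap i j) i = v j := by simp
  have happj : (v * Equiv.swap i j) j = v i := by simp
  rw [hsum, hsum, split, split, htail, happi, happj] at hrk
  set fi : ℕ := if (i : ℕ) < (a : ℕ) ∧ (v i : ℕ) < b then 1 else 0 with hfi
  set fj : ℕ := if (j : ℕ) < (a : ℕ) ∧ (v j : ℕ) < b then 1 else 0 with hfj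
  set gi : ℕ := if (i : ℕ) < (a : ℕ) ∧ (v j : ℕ) < b then 1 else 0 with hgi
  set gj : ℕ := if (j : ℕ) < (a : ℕ) ∧ (v i : ℕ) < b then 1 else 0 with hgj
  have key : gi + gj + 1 ≤ fi + fj := by omega
  -- now case analysis
  have hBA : (j : ℕ) < (a : ℕ) → (i : ℕ) < (a : ℕ) := fun h => lt_trans hij' h
  have hX : (v i : ℕ) < b := by
    by_contra hX
    have h1 : fi = 0 := by simp [hfi, hX]
    have h2 : gj = 0 := by simp [hgj, hX]
    by_cases hY : (v j : ℕ) < b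
    · have : (v i : ℕ) < b := lt_trans hv' hY
      exact hX this
    · have h3 : fj = 0 := by simp [hfj, hY]
      have h4 : gi = 0 := by simp [hgi, hY]
      omega
  have hA : (i : ℕ) < (a : ℕ) := by
    by_contra hA
    have h1 : fi = 0 := by simp [hfi, hA]
    have h2 : gi = 0 := by simp [hgi, hA]
    have hB : ¬ (j : ℕ) < (a : ℕ) := fun h => hA (hBA h)
    have h3 : fj = 0 := by simp [hfj, hB]
    have h4 : gj = 0 := by simp [hgj, hB]
    omega
  have h1 : fi = 1 := by simp [hfi, hA, hX]
  have hB : ¬ (j : ℕ) < (a : ℕ) := by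
    intro hB
    have h2 : gj = 1 := by simp [hgj, hB, hX]
    by_cases hY : (v j : ℕ) < b
    · have h3 : gi = 1 := by simp [hgi, hA, hY]
      have h4 : fj ≤ 1 := by simp [hfj]; split <;> omega
      omega
    · have h3 : fj = 0 := by simp [hfj, hY]
      have h4 : gi ≤ 1 := by simp [hgi]; split <;> omega
      omega
  have hY : ¬ (v j : ℕ) < b := by
    intro hY
    have h2 : gi = 1 := by simp [hgi, hA, hY]
    have h3 : fj = 0 := by simp [hfj, hB]
    have h4 : gj ≤ 1 := by simp [hgj]; split <;> omega
    omega
  have hja : j = a := by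
    by_contra hja
    have haj : (a : ℕ) < (j : ℕ) := by
      have : (a : ℕ) ≤ (j : ℕ) := le_of_not_gt hB
      have : (a : ℕ) ≠ (j : ℕ) := fun h => hja (Fin.ext h.symm)
      omega
    have hvav : (v a : ℕ) < (v j : ℕ) := by
      have hle : b ≤ (v j : ℕ) := le_of_not_gt hY
      have hne2 : v a ≠ v j := fun h => hja ((v.injective h).symm)
      have : (v a : ℕ) ≠ (v j : ℕ) := fun h => hne2 (Fin.ext h)
      omega
    exact hcov a hA haj ⟨hX, hvav⟩
  exact ⟨hja, hA, hX⟩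
end

section
/- Let w ∈ S_n and (a,b) a lower outside corner of D(w) with rk_w(a,b) = 0. Then the variable z_{a,b} lies in the Schubert determinantal ideal I_w; moreover I_w = I_v + (z_{a,b}) where v = w·t_{a,w⁻¹(b)}, since D(w) = D(v) ∪ {(a,b)} and the rank conditions of v at cells other than (a,b) agree with those of w. -/
/-- The ideal of `k × k` minors of the top-left `(a+1) × (b+1)` submatrix of the
generic matrix `Z = (z_{ij})`. -/
noncomputable def minorIdeal {κ : Type} [Field κ] {n : ℕ} (k : ℕ) (a b : Fin n) :
    Ideal (MvPolynomial (Fin n × Fin n) κ) :=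
  Ideal.span
    {f | ∃ ρ γ : Fin k → Fin n, StrictMono ρ ∧ StrictMono γ ∧
      (∀ t, ρ t ≤ a) ∧ (∀ t, γ t ≤ b) ∧
      f = Matrix.det (Matrix.of fun s t : Fin k =>
        (MvPolynomial.X (ρ s, γ t) : MvPolynomial (Fin n × Fin n) κ))}

/-- The Schubert determinantal ideal `I_w = Σ_{i,j} I_{rk_w(i,j)+1}(Z_{[i],[j]})`. -/
noncomputable def schubertIdeal {κ : Type} [Field κ] {n : ℕ}
    (w : Equiv.Perm (Fin n)) : Ideal (MvPolynomial (Fin n × Fin n) κ) :=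
  ∑ p : Fin n × Fin n, minorIdeal (κ := κ) (rkIic w p.1 p.2 + 1) p.1 p.2

section Helpers

variable {κ : Type} [Field κ] {n : ℕ}

lemma minorIdeal_step (k : ℕ) (a b : Fin n) :
    minorIdeal (κ := κ) (k+1) a b ≤ minorIdeal (κ := κ) k a b := by
  rw [minorIdeal, Ideal.span_le]
  rintro f ⟨ρ, γ, hρ, hγ, hρa, hγb, rfl⟩
  rw [Matrix.det_succ_row_zero]
  apply Ideal.sum_mem
  intro j _
  apply Ideal.mul_mem_left
  apply Ideal.subset_span
  exact ⟨ρ ∘ Fin.succ, γ ∘ j.succAbove, hρ.comp Fin.strictMono_succ,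
    hγ.comp (Fin.strictMono_succAbove j), fun t => hρa _, fun t => hγb _, rfl⟩

lemma minorIdeal_row_drop (k : ℕ) {a a' : Fin n} (b : Fin n) (ha : (a' : ℕ) + 1 = a) :
    minorIdeal (κ := κ) (k+1) a b ≤ minorIdeal (κ := κ) k a' b := by
  rw [minorIdeal, Ideal.span_le]
  rintro f ⟨ρ, γ, hρ, hγ, hρa, hγb, rfl⟩
  by_cases hlast : ρ (Fin.last k) ≤ a'
  · apply minorIdeal_step k a' b
    apply Ideal.subset_span
    exact ⟨ρ, γ, hρ, hγ, fun t => le_trans (hρ.monotone (Fin.le_last t)) hlast, hγb, rfl⟩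
  · rw [Matrix.det_succ_row _ (Fin.last k)]
    apply Ideal.sum_mem
    intro j _
    apply Ideal.mul_mem_left
    apply Ideal.subset_span
    refine ⟨ρ ∘ (Fin.last k).succAbove, γ ∘ j.succAbove,
      hρ.comp (Fin.strictMono_succAbove _), hγ.comp (Fin.strictMono_succAbove j),
      fun t => ?_, fun t => hγb _, rfl⟩
    have h1 : ρ ((Fin.last k).succAbove t) < ρ (Fin.last k) := by
      apply hρ
      rw [Fin.succAbove_last]
      exact t.castSucc_lt_last
    have h2 : (ρ (Fin.last k) : ℕ) ≤ a := hρa _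
    have h3 : ¬ (ρ (Fin.last k) : ℕ) ≤ (a' : ℕ) := fun h => hlast h
    show ((ρ ((Fin.last k).succAbove t) : Fin n) : ℕ) ≤ (a' : ℕ)
    rw [Fin.lt_def] at h1
    omega

lemma minorIdeal_col_drop (k : ℕ) (a : Fin n) {b b' : Fin n} (hb : (b' : ℕ) + 1 = b) :
    minorIdeal (κ := κ) (k+1) a b ≤ minorIdeal (κ := κ) k a b' := by
  rw [minorIdeal, Ideal.span_le]
  rintro f ⟨ρ, γ, hρ, hγ, hρa, hγb, rfl⟩
  by_cases hlast : γ (Fin.last k) ≤ b'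
  · apply minorIdeal_step k a b'
    apply Ideal.subset_span
    exact ⟨ρ, γ, hρ, hγ, hρa, fun t => le_trans (hγ.monotone (Fin.le_last t)) hlast, rfl⟩
  · rw [Matrix.det_succ_column _ (Fin.last k)]
    apply Ideal.sum_mem
    intro j _
    apply Ideal.mul_mem_left
    apply Ideal.subset_span
    refine ⟨ρ ∘ j.succAbove, γ ∘ (Fin.last k).succAbove,
      hρ.comp (Fin.strictMono_succAbove j), hγ.comp (Fin.strictMono_succAbove _),
      fun t => hρa _, fun t => ?_, rfl⟩
    have h1 : γ ((Fin.last k).succAbove t) < γ (Fin.last k) := by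
      apply hγ
      rw [Fin.succAbove_last]
      exact t.castSucc_lt_last
    have h2 : (γ (Fin.last k) : ℕ) ≤ b := hγb _
    have h3 : ¬ (γ (Fin.last k) : ℕ) ≤ (b' : ℕ) := fun h => hlast h
    show ((γ ((Fin.last k).succAbove t) : Fin n) : ℕ) ≤ (b' : ℕ)
    rw [Fin.lt_def] at h1
    omega

lemma X_mem_minorIdeal_one {a b : Fin n} {s t : Fin n} (hs : s ≤ a) (ht : t ≤ b) :
    (MvPolynomial.X (s, t) : MvPolynomial (Fin n × Fin n) κ) ∈ minorIdeal (κ := κ) 1 a b := by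
  apply Ideal.subset_span
  refine ⟨fun _ => s, fun _ => t, ?_, ?_, fun _ => hs, fun _ => ht, ?_⟩
  · intro x y h; exact absurd (Subsingleton.elim x y) h.ne
  · intro x y h; exact absurd (Subsingleton.elim x y) h.ne
  · rw [Matrix.det_fin_one]; rfl

lemma rkIic_eq_sum (u : Equiv.Perm (Fin n)) (a b : Fin n) :
    rkIic u a b = ∑ s : Fin n, (if s ≤ a ∧ u s ≤ b then 1 else 0) := by
  rw [rkIic, Finset.card_filter]

lemma rkIic_row (u : Equiv.Perm (Fin n)) {i i' : Fin n} (j : Fin n) (h : (i' : ℕ) + 1 = i) :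
    rkIic u i j = rkIic u i' j + (if u i ≤ j then 1 else 0) := by
  rw [rkIic_eq_sum, rkIic_eq_sum]
  rw [← Finset.add_sum_erase _ _ (Finset.mem_univ i),
      ← Finset.add_sum_erase _ _ (Finset.mem_univ i)]
  have hii' : ¬ (i ≤ i') := by rw [Fin.le_def]; omega
  have key : ∀ s ∈ Finset.univ.erase i,
      (if s ≤ i ∧ u s ≤ j then 1 else 0) = (if s ≤ i' ∧ u s ≤ j then 1 else 0) := by
    intro s hs
    have hsi : s ≠ i := (Finset.mem_erase.mp hs).1
    have : s ≤ i ↔ s ≤ i' := by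
      rw [Fin.le_def, Fin.le_def]
      have := Fin.val_ne_of_ne hsi
      omega
    simp [this]
  rw [Finset.sum_congr rfl key]
  have : (i ≤ i ∧ u i ≤ j) ↔ u i ≤ j := by simp
  simp only [this, if_neg (fun hc : i ≤ i' ∧ u i ≤ j => hii' hc.1)]
  ring

lemma rkIic_col (u : Equiv.Perm (Fin n)) (i : Fin n) {j j' : Fin n} (h : (j' : ℕ) + 1 = j) :
    rkIic u i j = rkIic u i j' + (if u⁻¹ j ≤ i then 1 else 0) := by
  rw [rkIic_eq_sum, rkIic_eq_sum]
  rw [← Finset.add_sum_erase _ _ (Finset.mem_univ (u⁻¹ j)),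
      ← Finset.add_sum_erase _ _ (Finset.mem_univ (u⁻¹ j))]
  have huj : u (u⁻¹ j) = j := Equiv.apply_symm_apply u j
  have key : ∀ s ∈ Finset.univ.erase (u⁻¹ j),
      (if s ≤ i ∧ u s ≤ j then 1 else 0) = (if s ≤ i ∧ u s ≤ j' then 1 else 0) := by
    intro s hs
    have hsi : s ≠ u⁻¹ j := (Finset.mem_erase.mp hs).1
    have husj : u s ≠ j := fun hc => hsi (by rw [← hc]; exact (Equiv.symm_apply_apply u s).symm)
    have : u s ≤ j ↔ u s ≤ j' := by
      rw [Fin.le_def, Fin.le_def]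
      have := Fin.val_ne_of_ne husj
      omega
    simp [this]
  rw [Finset.sum_congr rfl key]
  have hjj' : ¬ (j ≤ j') := by rw [Fin.le_def]; omega
  simp only [huj, le_refl, and_true, if_neg (fun hc : u⁻¹ j ≤ i ∧ j ≤ j' => hjj' hc.2)]
  ring

lemma rkIic_swap (w : Equiv.Perm (Fin n)) {a b : Fin n}
    (hac : a < w⁻¹ b) (hba : b < w a) (i j : Fin n) :
    rkIic (w * Equiv.swap a (w⁻¹ b)) i j =
      rkIic w i j + (if a ≤ i ∧ i < w⁻¹ b ∧ b ≤ j ∧ j < w a then 1 else 0) := by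
  set c := w⁻¹ b with hc
  have hne : a ≠ c := ne_of_lt hac
  set v := w * Equiv.swap a c with hv
  have hva : v a = b := by
    simp [hv, Equiv.Perm.mul_apply, Equiv.swap_apply_left, hc]
  have hvc : v c = w a := by
    simp [hv, Equiv.Perm.mul_apply, Equiv.swap_apply_right]
  have hvs : ∀ s, s ≠ a → s ≠ c → v s = w s := by
    intro s h1 h2
    simp [hv, Equiv.Perm.mul_apply, Equiv.swap_apply_of_ne_of_ne h1 h2]
  rw [rkIic_eq_sum, rkIic_eq_sum]
  have hmem : c ∈ Finset.univ.erase a := Finset.mem_erase.mpr ⟨(Ne.symm hne), Finset.mem_univ c⟩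
  rw [← Finset.add_sum_erase _ _ (Finset.mem_univ a), ← Finset.add_sum_erase _ _ hmem,
      ← Finset.add_sum_erase _ (fun s => if s ≤ i ∧ w s ≤ j then 1 else 0) (Finset.mem_univ a),
      ← Finset.add_sum_erase _ _ hmem]
  have key : ∀ s ∈ (Finset.univ.erase a).erase c,
      (if s ≤ i ∧ v s ≤ j then 1 else 0) = (if s ≤ i ∧ w s ≤ j then 1 else 0) := by
    intro s hs
    rw [Finset.mem_erase, Finset.mem_erase] at hs
    rw [hvs s hs.2.1 hs.1]
  rw [Finset.sum_congr rfl key]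
  have hwc : w c = b := Equiv.apply_symm_apply w b
  have g1 : ((v a : Fin n) : ℕ) = (b : ℕ) := by rw [hva]
  have g2 : ((v c : Fin n) : ℕ) = ((w a : Fin n) : ℕ) := by rw [hvc]
  have g3 : ((w c : Fin n) : ℕ) = (b : ℕ) := by rw [hwc]
  have h1 : (b : ℕ) < (w a : ℕ) := hba
  have h2 : (a : ℕ) < (c : ℕ) := hac
  simp only [Fin.le_def, Fin.lt_def]
  split_ifs <;> omega

lemma ideal_sum_le {ι : Type*} (s : Finset ι) (f : ι → Ideal (MvPolynomial (Fin n × Fin n) κ))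
    (S : Ideal (MvPolynomial (Fin n × Fin n) κ)) (h : ∀ i ∈ s, f i ≤ S) :
    ∑ i ∈ s, f i ≤ S := by
  classical
  induction s using Finset.induction_on with
  | empty => simp
  | insert _ _ hx ih =>
    rw [Finset.sum_insert hx, Submodule.add_eq_sup]
    exact sup_le (h _ (Finset.mem_insert_self _ _))
      (ih fun i hi => h i (Finset.mem_insert_of_mem hi))

lemma minorIdeal_le_schubert (u : Equiv.Perm (Fin n)) (i j : Fin n) :
    minorIdeal (κ := κ) (rkIic u i j + 1) i j ≤ schubertIdeal (κ := κ) u := by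
  rw [schubertIdeal,
    ← Finset.add_sum_erase _ _ (Finset.mem_univ ((i, j) : Fin n × Fin n)),
    Submodule.add_eq_sup]
  exact le_sup_left

end Helpers

/-- If `(a,b)` is a lower outside corner of `D(w)` with `rk_w(a,b) = 0`, then
`z_{a,b} ∈ I_w` and `I_w = I_v + (z_{a,b})` where `v = w·t_{a,w⁻¹(b)}`. -/
theorem stmt_19 {κ : Type} [Field κ] {n : ℕ} (w : Equiv.Perm (Fin n))
    (a b : Fin n) (hloc : IsLOC w (a, b)) (h0 : rkIic w a b = 0) :
    (MvPolynomial.X (a, b) : MvPolynomial (Fin n × Fin n) κ) ∈ schubertIdeal (κ := κ) w ∧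
    schubertIdeal (κ := κ) w =
      schubertIdeal (κ := κ) (w * Equiv.swap a (w⁻¹ b)) +
        Ideal.span {(MvPolynomial.X (a, b) : MvPolynomial (Fin n × Fin n) κ)} := by
  classical
  obtain ⟨hmem, hmax⟩ := hloc
  obtain ⟨hba, hac⟩ : b < w a ∧ a < w⁻¹ b := hmem
  set c := w⁻¹ b with hc
  set v := w * Equiv.swap a c with hv
  set Z : MvPolynomial (Fin n × Fin n) κ := MvPolynomial.X (a, b) with hZ
  set RHS := schubertIdeal (κ := κ) v + Ideal.span {Z} with hRHS
  -- rank zero on the whole upper-left rectangle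
  have h0' : ∀ s : Fin n, ¬ (s ≤ a ∧ w s ≤ b) := by
    intro s hs
    have : s ∈ Finset.univ.filter (fun i : Fin n => i ≤ a ∧ w i ≤ b) := by
      simp [hs.1, hs.2]
    rw [rkIic] at h0
    rw [Finset.card_eq_zero] at h0
    simp [h0] at this
  have rk0 : ∀ s t : Fin n, s ≤ a → t ≤ b → rkIic w s t = 0 := by
    intro s t hs ht
    rw [rkIic, Finset.card_eq_zero, Finset.filter_eq_empty_iff]
    intro x _
    rintro ⟨hx1, hx2⟩
    exact h0' x ⟨le_trans hx1 hs, le_trans hx2 ht⟩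
  -- part 1 : X (a,b) ∈ I_w
  have hXw : Z ∈ schubertIdeal (κ := κ) w := by
    apply minorIdeal_le_schubert w a b
    rw [h0]
    exact X_mem_minorIdeal_one le_rfl le_rfl
  have hXR : Z ∈ RHS := by
    rw [hRHS, Submodule.add_eq_sup]
    exact Submodule.mem_sup_right (Ideal.subset_span rfl)
  have hvle : schubertIdeal (κ := κ) v ≤ RHS := by
    rw [hRHS, Submodule.add_eq_sup]; exact le_sup_left
  -- the key claim, by strong induction on i + j
  have claim : ∀ m : ℕ, ∀ i j : Fin n, (i : ℕ) + (j : ℕ) = m →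
      (a ≤ i ∧ i < c ∧ b ≤ j ∧ j < w a) →
      minorIdeal (κ := κ) (rkIic w i j + 1) i j ≤ RHS := by
    intro m
    induction m using Nat.strong_induction_on with
    | _ m IH =>
      intro i j hm hreg
      obtain ⟨hai, hic, hbj, hja⟩ := hreg
      by_cases hij : (i, j) = (a, b)
      · rw [Prod.mk.injEq] at hij
        rw [hij.1, hij.2, h0]
        rw [minorIdeal, Ideal.span_le]
        rintro f ⟨ρ, γ, _, _, hρa, hγb, rfl⟩
        have hdet : (Matrix.det (Matrix.of fun s t : Fin 1 =>
            (MvPolynomial.X (ρ s, γ t) : MvPolynomial (Fin n × Fin n) κ))) =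
            MvPolynomial.X (ρ 0, γ 0) := by
          rw [Matrix.det_fin_one]; rfl
        rw [hdet]
        by_cases hst : (ρ 0, γ 0) = (a, b)
        · rw [hst]; exact hXR
        · have hrkv : rkIic v (ρ 0) (γ 0) = 0 := by
            rw [hv, hc, rkIic_swap w hac hba]
            rw [rk0 _ _ (hρa 0) (hγb 0)]
            rw [if_neg, Nat.zero_add]
            rintro ⟨h1, _, h3, _⟩
            exact hst (by
              rw [Prod.mk.injEq]
              exact ⟨le_antisymm (hρa 0) h1, le_antisymm (hγb 0) h3⟩)
          apply hvle
          apply minorIdeal_le_schubert v (ρ 0) (γ 0)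
          rw [hrkv]
          exact X_mem_minorIdeal_one le_rfl le_rfl
      · -- (i,j) is not in D(w) since (a,b) is a LOC
        have hnotD : w i ≤ j ∨ w⁻¹ j ≤ i := by
          by_contra hcon
          push_neg at hcon
          obtain ⟨h1, h2⟩ := hcon
          exact hij (hmax (i, j) ⟨h1, h2⟩ hai hbj)
        rcases hnotD with hwi | hwj
        · -- drop a row
          have hia : i ≠ a := by
            rintro rfl
            exact absurd hwi (not_le.mpr hja)
          have hai' : (a : ℕ) < (i : ℕ) := by
            have h1 : (a : ℕ) ≤ (i : ℕ) := hai
            have h2 : (a : ℕ) ≠ (i : ℕ) := fun hcon => hia (Fin.ext hcon.symm)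
            omega
          set i' : Fin n := ⟨(i : ℕ) - 1, by omega⟩ with hi'
          have hstep : (i' : ℕ) + 1 = (i : ℕ) := by simp [hi']; omega
          have hrw : rkIic w i j = rkIic w i' j + 1 := by
            rw [rkIic_row w j hstep, if_pos hwi]
          rw [hrw]
          refine le_trans (minorIdeal_row_drop _ _ hstep) ?_
          apply IH ((i' : ℕ) + (j : ℕ)) (by omega) i' j rfl
          refine ⟨?_, ?_, hbj, hja⟩
          · show (a : ℕ) ≤ (i' : ℕ); simp [hi']; omega
          · show ((i' : Fin n) : ℕ) < (c : ℕ)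
            have : (i : ℕ) < (c : ℕ) := hic
            simp [hi']; omega
        · -- drop a column
          have hjb : j ≠ b := by
            rintro rfl
            rw [← hc] at hwj
            exact absurd hwj (not_le.mpr hic)
          have hbj' : (b : ℕ) < (j : ℕ) := by
            have h1 : (b : ℕ) ≤ (j : ℕ) := hbj
            have h2 : (b : ℕ) ≠ (j : ℕ) := fun hcon => hjb (Fin.ext hcon.symm)
            omega
          set j' : Fin n := ⟨(j : ℕ) - 1, by omega⟩ with hj'
          have hstep : (j' : ℕ) + 1 = (j : ℕ) := by simp [hj']; omega
          have hrw : rkIic w i j = rkIic w i j' + 1 := by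
            rw [rkIic_col w i hstep, if_pos hwj]
          rw [hrw]
          refine le_trans (minorIdeal_col_drop _ _ hstep) ?_
          apply IH ((i : ℕ) + (j' : ℕ)) (by omega) i j' rfl
          refine ⟨hai, hic, ?_, ?_⟩
          · show (b : ℕ) ≤ (j' : ℕ); simp [hj']; omega
          · show ((j' : Fin n) : ℕ) < ((w a : Fin n) : ℕ)
            have : (j : ℕ) < ((w a : Fin n) : ℕ) := hja
            simp [hj']; omega
  refine ⟨hXw, le_antisymm ?_ ?_⟩
  · -- I_w ≤ RHS
    apply ideal_sum_le
    rintro ⟨i, j⟩ _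
    by_cases hreg : a ≤ i ∧ i < c ∧ b ≤ j ∧ j < w a
    · exact claim _ i j rfl hreg
    · have hrk : rkIic v i j = rkIic w i j := by
        rw [hv, hc, rkIic_swap w hac hba, if_neg (by rw [← hc]; exact hreg)]
        omega
      show minorIdeal (κ := κ) (rkIic w i j + 1) i j ≤ RHS
      rw [← hrk]
      exact le_trans (minorIdeal_le_schubert v i j) hvle
  · -- RHS ≤ I_w
    rw [hRHS, Submodule.add_eq_sup]
    apply sup_le
    · apply ideal_sum_le
      rintro ⟨i, j⟩ _
      by_cases hreg : a ≤ i ∧ i < c ∧ b ≤ j ∧ j < w a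
      · have hrk : rkIic v i j = rkIic w i j + 1 := by
          rw [hv, hc, rkIic_swap w hac hba, if_pos (by rw [← hc]; exact hreg)]
        show minorIdeal (κ := κ) (rkIic v i j + 1) i j ≤ schubertIdeal (κ := κ) w
        rw [hrk]
        exact le_trans (minorIdeal_step _ i j) (minorIdeal_le_schubert w i j)
      · have hrk : rkIic v i j = rkIic w i j := by
          rw [hv, hc, rkIic_swap w hac hba, if_neg (by rw [← hc]; exact hreg)]
          omega
        show minorIdeal (κ := κ) (rkIic v i j + 1) i j ≤ schubertIdeal (κ := κ) w
        rw [hrk]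
        exact minorIdeal_le_schubert w i j
    · rw [Ideal.span_le]
      rintro x rfl
      exact hXw
end
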